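/- arXiv:1306.2914 — 4 statements merged into one kernel-verified Lean document; each statement's English description precedes it below -/
import Mathlib

section
/- Let ω ∈ ℂ and let v : [-b,b] → ℂ be twice continuously differentiable with v'' + ω²·v = 0 on [-b,b]. Then the function u := T v (i.e., u(x) = v(x) + ∫_{−x}^{x} K(x,t)·v(t) dt) is twice continuously differentiable on [-b,b] and satisfies u'' − q·u + ω²·u = 0 on [-b,b], together with the initial conditions u(0) = v(0) and u'(0) = v'(0) + h·v(0). -/
open Set MeasureTheory Filter intervalIntegral

/-- Second partial derivative with respect to the first variable, within `[-b,b]`. -/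
noncomputable def d2x (b : ℝ) (K : ℝ → ℝ → ℂ) (x t : ℝ) : ℂ :=
  derivWithin (fun x' => derivWithin (fun x'' => K x'' t) (Set.Icc (-b) b) x') (Set.Icc (-b) b) x

/-- Second partial derivative with respect to the second variable, within `[-b,b]`. -/
noncomputable def d2t (b : ℝ) (K : ℝ → ℝ → ℂ) (x t : ℝ) : ℂ :=
  derivWithin (fun t' => derivWithin (fun t'' => K x t'') (Set.Icc (-b) b) t') (Set.Icc (-b) b) t

/-- `K` is a transmutation kernel for `(q, h)` on `[-b,b]`: it is twice continuously
differentiable, satisfies `∂²K/∂x² − q(x)K = ∂²K/∂t²` on `[-b,b]²`, and the Goursat data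
`K(x,x) = h/2 + (1/2)∫₀ˣ q` and `K(x,−x) = h/2`. -/
def IsTransmutationKernel (b : ℝ) (q : ℝ → ℂ) (h : ℂ) (K : ℝ → ℝ → ℂ) : Prop :=
  ContDiffOn ℝ 2 (fun p : ℝ × ℝ => K p.1 p.2) (Set.Icc (-b) b ×ˢ Set.Icc (-b) b) ∧
  (∀ x ∈ Set.Icc (-b) b, ∀ t ∈ Set.Icc (-b) b, d2x b K x t - q x * K x t = d2t b K x t) ∧
  (∀ x ∈ Set.Icc (-b) b, K x x = h / 2 + (1 / 2) * ∫ s in (0:ℝ)..x, q s) ∧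
  (∀ x ∈ Set.Icc (-b) b, K x (-x) = h / 2)

section Helpers

variable {b : ℝ}

/-- clamp to `[-b,b]` -/
noncomputable def cl (b : ℝ) (x : ℝ) : ℝ := max (-b) (min b x)

lemma cl_mem (hb : 0 < b) (x : ℝ) : cl b x ∈ Icc (-b) b :=
  ⟨le_max_left _ _, max_le (by linarith) (min_le_left _ _)⟩

lemma cl_eq_self {x : ℝ} (hx : x ∈ Icc (-b) b) : cl b x = x := by
  rcases hx with ⟨h1, h2⟩
  rw [cl, min_eq_right h2, max_eq_right h1]

lemma continuous_cl : Continuous (cl b) :=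
  continuous_const.max (continuous_const.min continuous_id)

lemma neg_mem_Icc' {x : ℝ} (hx : x ∈ Icc (-b) b) : -x ∈ Icc (-b) b := by
  rcases hx with ⟨h1, h2⟩
  constructor <;> linarith

lemma uIcc_sub {x y : ℝ} (hx : x ∈ Icc (-b) b) (hy : y ∈ Icc (-b) b) :
    uIcc x y ⊆ Icc (-b) b := by
  have hbb : -b ≤ b := le_trans hx.1 hx.2
  rw [← uIcc_of_le hbb]
  exact uIcc_subset_uIcc (by rwa [uIcc_of_le hbb]) (by rwa [uIcc_of_le hbb])

/-- slice continuity in the second variable -/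
lemma sliceL {F : ℝ → ℝ → ℂ}
    (hF : ContinuousOn (fun p : ℝ × ℝ => F p.1 p.2) (Icc (-b) b ×ˢ Icc (-b) b))
    {x : ℝ} (hx : x ∈ Icc (-b) b) : ContinuousOn (fun t => F x t) (Icc (-b) b) :=
  hF.comp ((continuous_const.prodMk continuous_id).continuousOn) (fun t ht => ⟨hx, ht⟩)

/-- slice continuity in the first variable -/
lemma sliceR {F : ℝ → ℝ → ℂ}
    (hF : ContinuousOn (fun p : ℝ × ℝ => F p.1 p.2) (Icc (-b) b ×ˢ Icc (-b) b))
    {t : ℝ} (ht : t ∈ Icc (-b) b) : ContinuousOn (fun x => F x t) (Icc (-b) b) :=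
  hF.comp ((continuous_id.prodMk continuous_const).continuousOn) (fun x hx => ⟨hx, ht⟩)

/-- FTC-1, both endpoints moving, global version for continuous integrand. -/
lemma hasDerivAt_int_both {g : ℝ → ℂ} (hg : Continuous g) (x : ℝ) :
    HasDerivAt (fun y => ∫ t in (-y)..y, g t) (g x + g (-x)) x := by
  have h1 : ∀ y : ℝ, (∫ t in (-y)..y, g t)
      = (∫ t in (0:ℝ)..y, g t) - ∫ t in (0:ℝ)..(-y), g t := by
    intro y
    rw [← intervalIntegral.integral_add_adjacent_intervals
      (hg.intervalIntegrable (-y) 0) (hg.intervalIntegrable 0 y),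
      intervalIntegral.integral_symm]
    ring
  have hG : ∀ y : ℝ, HasDerivAt (fun z => ∫ t in (0:ℝ)..z, g t) (g y) y := fun y =>
    (hg.integral_hasStrictDerivAt 0 y).hasDerivAt
  have h2 : HasDerivAt (fun y : ℝ => ∫ t in (0:ℝ)..(-y), g t) (-(g (-x))) x := by
    have := (hG (-x)).scomp x (hasDerivAt_neg' x)
    simpa [Function.comp_def] using this
  have h3 := (hG x).sub h2
  simp only [funext h1]
  simpa [Pi.sub_def] using h3
  
/-- FTC-1, both endpoints moving, within `[-b,b]`. -/
lemma hasDerivWithinAt_int_both (hb : 0 < b) {g : ℝ → ℂ}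
    (hg : ContinuousOn g (Icc (-b) b)) {x : ℝ} (hx : x ∈ Icc (-b) b) :
    HasDerivWithinAt (fun y => ∫ t in (-y)..y, g t) (g x + g (-x)) (Icc (-b) b) x := by
  have hgc : Continuous (fun t => g (cl b t)) :=
    hg.comp_continuous continuous_cl (cl_mem hb)
  have key := (hasDerivAt_int_both hgc x).hasDerivWithinAt (s := Icc (-b) b)
  have heq : ∀ y ∈ Icc (-b) b, (∫ t in (-y)..y, g t) = ∫ t in (-y)..y, g (cl b t) := by
    intro y hy
    exact intervalIntegral.integral_congr
      (fun t ht => by rw [cl_eq_self (uIcc_sub (neg_mem_Icc' hy) hy ht)])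
  have := key.congr heq (heq x hx)
  simpa [cl_eq_self hx, cl_eq_self (neg_mem_Icc' hx)] using this

/-- FTC-2 within `[-b,b]`. -/
lemma ftc2 (hb : 0 < b) {f f' : ℝ → ℂ}
    (hd : ∀ s ∈ Icc (-b) b, HasDerivWithinAt f (f' s) (Icc (-b) b) s)
    (hc : ContinuousOn f' (Icc (-b) b))
    {x₀ x : ℝ} (hx₀ : x₀ ∈ Icc (-b) b) (hx : x ∈ Icc (-b) b) :
    (∫ s in x₀..x, f' s) = f x - f x₀ := by
  have hsub : uIcc x₀ x ⊆ Icc (-b) b := uIcc_sub hx₀ hx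
  apply intervalIntegral.integral_eq_sub_of_hasDeriv_right
  · exact fun s hs => ((hd s (hsub hs)).continuousWithinAt).mono hsub
  · intro s hs
    have hsS : Icc (-b) b ∈ nhds s := by
      apply Icc_mem_nhds
      · calc -b ≤ min x₀ x := le_min hx₀.1 hx.1
          _ < s := hs.1
      · calc s < max x₀ x := hs.2
          _ ≤ b := max_le hx₀.2 hx.2
    exact ((hd s (mem_of_mem_nhds hsS)).hasDerivAt hsS).hasDerivWithinAt
  · exact (hc.mono hsub).intervalIntegrable

/-- Continuity of `x ↦ ∫_{-x}^x F x t dt` on `[-b,b]`. -/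
lemma continuousOn_int_both (hb : 0 < b) {F : ℝ → ℝ → ℂ}
    (hF : ContinuousOn (fun p : ℝ × ℝ => F p.1 p.2) (Icc (-b) b ×ˢ Icc (-b) b)) :
    ContinuousOn (fun x => ∫ t in (-x)..x, F x t) (Icc (-b) b) := by
  set Fc : ℝ → ℝ → ℂ := fun x t => F (cl b x) (cl b t) with hFc
  have hFcc : Continuous (Function.uncurry Fc) := by
    show Continuous fun p : ℝ × ℝ => F (cl b p.1) (cl b p.2)
    apply hF.comp_continuous (f := fun p : ℝ × ℝ => ((cl b p.1, cl b p.2) : ℝ × ℝ))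
    · exact ((continuous_cl.comp continuous_fst).prodMk (continuous_cl.comp continuous_snd))
    · exact fun p => ⟨cl_mem hb _, cl_mem hb _⟩
  have h1 : Continuous fun x => ∫ t in (0:ℝ)..x, Fc x t :=
    continuous_parametric_intervalIntegral_of_continuous (μ := volume) hFcc continuous_id
  have h2 : Continuous fun x => ∫ t in (0:ℝ)..(-x), Fc x t :=
    continuous_parametric_intervalIntegral_of_continuous (μ := volume) hFcc continuous_neg
  have h3 : Continuous fun x => ∫ t in (-x)..x, Fc x t := by
    have : ∀ x : ℝ, (∫ t in (-x)..x, Fc x t)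
        = (∫ t in (0:ℝ)..x, Fc x t) - ∫ t in (0:ℝ)..(-x), Fc x t := by
      intro x
      have hc : Continuous (Fc x) := by
        have := hFcc.comp (Continuous.prodMk_right x); exact this
      rw [← intervalIntegral.integral_add_adjacent_intervals
        (hc.intervalIntegrable (-x) 0) (hc.intervalIntegrable 0 x),
        intervalIntegral.integral_symm]
      ring
    simp only [funext this]
    exact h1.sub h2
  apply h3.continuousOn.congr
  intro x hx
  exact intervalIntegral.integral_congr (fun t ht => by
    simp only [Fc]
    rw [cl_eq_self hx, cl_eq_self (uIcc_sub (neg_mem_Icc' hx) hx ht)])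

/-- Differentiation of `x ↦ ∫_{-x}^x F x t dt` within `[-b,b]` (Leibniz rule). -/
lemma hasDerivWithinAt_param_int_both (hb : 0 < b) {F F' : ℝ → ℝ → ℂ}
    (hF : ContinuousOn (fun p : ℝ × ℝ => F p.1 p.2) (Icc (-b) b ×ˢ Icc (-b) b))
    (hF' : ContinuousOn (fun p : ℝ × ℝ => F' p.1 p.2) (Icc (-b) b ×ˢ Icc (-b) b))
    (hd : ∀ t ∈ Icc (-b) b, ∀ x ∈ Icc (-b) b,
      HasDerivWithinAt (fun y => F y t) (F' x t) (Icc (-b) b) x)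
    {x₀ : ℝ} (hx₀ : x₀ ∈ Icc (-b) b) :
    HasDerivWithinAt (fun x => ∫ t in (-x)..x, F x t)
      (F x₀ x₀ + F x₀ (-x₀) + ∫ t in (-x₀)..x₀, F' x₀ t) (Icc (-b) b) x₀ := by
  set S := Icc (-b) b with hSdef
  set G : ℝ → ℂ := fun x => ∫ t in (-x)..x, F x t with hGdef
  set g : ℝ → ℂ := fun x => ∫ t in (-x)..x, F x₀ t with hgdef
  set P : ℝ → ℂ := fun x => (x - x₀) • (∫ t in (-x)..x, F' x₀ t) with hPdef
  have hg : HasDerivWithinAt g (F x₀ x₀ + F x₀ (-x₀)) S x₀ :=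
    hasDerivWithinAt_int_both hb (sliceL hF hx₀) hx₀
  have hc : HasDerivWithinAt (fun x => ∫ t in (-x)..x, F' x₀ t)
      (F' x₀ x₀ + F' x₀ (-x₀)) S x₀ :=
    hasDerivWithinAt_int_both hb (sliceL hF' hx₀) hx₀
  have hP : HasDerivWithinAt P (∫ t in (-x₀)..x₀, F' x₀ t) S x₀ := by
    have h1 : HasDerivWithinAt (fun x : ℝ => x - x₀) 1 S x₀ :=
      ((hasDerivAt_id x₀).sub_const x₀).hasDerivWithinAt
    have h2 := h1.fun_smul hc
    refine h2.congr_deriv ?_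
    simp
  have hE : HasDerivWithinAt (fun x => G x - g x - P x) 0 S x₀ := by
    rw [hasDerivWithinAt_iff_isLittleO]
    have hEx₀ : G x₀ - g x₀ - P x₀ = 0 := by simp [hGdef, hgdef, hPdef]
    simp only [hEx₀, smul_zero, sub_zero]
    rw [Asymptotics.isLittleO_iff]
    intro c hc0
    have hcpt : IsCompact (S ×ˢ S) := isCompact_Icc.prod isCompact_Icc
    have huc := hcpt.uniformContinuousOn_of_continuous hF'
    rw [Metric.uniformContinuousOn_iff] at huc
    have hε0 : 0 < c / (2 * b + 1) := div_pos hc0 (by linarith)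
    obtain ⟨δ, hδ0, hδ⟩ := huc _ hε0
    filter_upwards [self_mem_nhdsWithin,
      mem_nhdsWithin_of_mem_nhds (Metric.ball_mem_nhds x₀ hδ0)] with x hxS hxb
    have hxmem : x ∈ Icc (-b) b := hxS
    have hxd : dist x x₀ < δ := by simpa [Metric.mem_ball] using hxb
    have hsub1 : uIcc (-x) x ⊆ Icc (-b) b := uIcc_sub (neg_mem_Icc' hxmem) hxmem
    have hsub2 : uIcc x₀ x ⊆ Icc (-b) b := uIcc_sub hx₀ hxmem
    have hint1 : IntervalIntegrable (F x) volume (-x) x :=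
      ((sliceL hF hxmem).mono hsub1).intervalIntegrable
    have hint2 : IntervalIntegrable (F x₀) volume (-x) x :=
      ((sliceL hF hx₀).mono hsub1).intervalIntegrable
    have hint3 : IntervalIntegrable (fun t => (x - x₀) • F' x₀ t) volume (-x) x :=
      (continuousOn_const.fun_smul ((sliceL hF' hx₀).mono hsub1)).intervalIntegrable
    have hid : G x - g x - P x
        = ∫ t in (-x)..x, (F x t - F x₀ t - (x - x₀) • F' x₀ t) := by
      rw [intervalIntegral.integral_sub (hint1.sub hint2) hint3,
        intervalIntegral.integral_sub hint1 hint2, intervalIntegral.integral_smul]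
    rw [hid]
    have hbound : ∀ t ∈ uIcc (-x) x,
        ‖F x t - F x₀ t - (x - x₀) • F' x₀ t‖ ≤ c / (2 * b + 1) * |x - x₀| := by
      intro t ht
      have htS : t ∈ Icc (-b) b := hsub1 ht
      have hftc : (∫ s in x₀..x, F' s t) = F x t - F x₀ t :=
        ftc2 hb (fun s hs => hd t htS s hs) (sliceR hF' htS) hx₀ hxmem
      have hconst : (x - x₀) • F' x₀ t = ∫ s in x₀..x, F' x₀ t := by
        rw [intervalIntegral.integral_const]
      have hi1 : IntervalIntegrable (fun s => F' s t) volume x₀ x :=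
        ((sliceR hF' htS).mono hsub2).intervalIntegrable
      rw [← hftc, hconst, ← intervalIntegral.integral_sub hi1 intervalIntegrable_const]
      have h5 : ∀ s ∈ Set.uIoc x₀ x, ‖F' s t - F' x₀ t‖ ≤ c / (2 * b + 1) := by
        intro s hs
        have hsI : s ∈ uIcc x₀ x := uIoc_subset_uIcc hs
        have hsS : s ∈ Icc (-b) b := hsub2 hsI
        have hds : dist s x₀ ≤ dist x x₀ := by
          rw [Real.dist_eq, Real.dist_eq]
          rw [Set.mem_uIcc] at hsI
          have h1 := le_abs_self (x - x₀)
          have h2 := neg_abs_le (x - x₀)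
          rw [abs_le]
          rcases hsI with ⟨u1, u2⟩ | ⟨u1, u2⟩ <;> constructor <;> linarith
        have hdp : dist ((s, t) : ℝ × ℝ) ((x₀, t) : ℝ × ℝ) < δ := by
          rw [Prod.dist_eq]
          simp only [dist_self]
          rw [max_eq_left dist_nonneg]
          exact lt_of_le_of_lt hds hxd
        have := hδ (s, t) ⟨hsS, htS⟩ (x₀, t) ⟨hx₀, htS⟩ hdp
        rw [dist_eq_norm] at this
        exact le_of_lt this
      exact intervalIntegral.norm_integral_le_of_norm_le_const h5
    refine le_trans (intervalIntegral.norm_integral_le_of_norm_le_const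
      (C := c / (2 * b + 1) * |x - x₀|) (fun t ht => hbound t (uIoc_subset_uIcc ht))) ?_
    rw [Real.norm_eq_abs]
    have h2x : |x - -x| ≤ 2 * b := by
      rw [abs_le]; rcases hxmem with ⟨u1, u2⟩; constructor <;> linarith
    have hmm : c / (2 * b + 1) * |x - x₀| * |x - -x|
        ≤ c / (2 * b + 1) * |x - x₀| * (2 * b) :=
      mul_le_mul_of_nonneg_left h2x (by positivity)
    refine le_trans hmm ?_
    rw [div_mul_eq_mul_div, div_mul_eq_mul_div,
      div_le_iff₀ (show (0:ℝ) < 2 * b + 1 by linarith)]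
    nlinarith [mul_nonneg (le_of_lt hc0) (abs_nonneg (x - x₀))]
  have hsum := (hg.add hP).add hE
  have hGeq : ∀ y, g y + P y + (G y - g y - P y) = G y := fun y => by ring
  have hfin := hsum.congr (f₁ := G) (fun y _ => (hGeq y).symm) (hGeq x₀).symm
  simpa using hfin


section Main

variable {b : ℝ} {K : ℝ → ℝ → ℂ}

/-- All the kernel partial-derivative facts we need, packaged. -/
structure KerCalc (b : ℝ) (K : ℝ → ℝ → ℂ) (K1 K2 M11 M22 : ℝ → ℝ → ℂ) : Prop where
  hK1d : ∀ t ∈ Icc (-b) b, ∀ x ∈ Icc (-b) b,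
    HasDerivWithinAt (fun y => K y t) (K1 x t) (Icc (-b) b) x
  hK2d : ∀ x ∈ Icc (-b) b, ∀ t ∈ Icc (-b) b,
    HasDerivWithinAt (fun s => K x s) (K2 x t) (Icc (-b) b) t
  hK1dd : ∀ t ∈ Icc (-b) b, ∀ x ∈ Icc (-b) b,
    HasDerivWithinAt (fun y => K1 y t) (M11 x t) (Icc (-b) b) x
  hK2dd : ∀ x ∈ Icc (-b) b, ∀ t ∈ Icc (-b) b,
    HasDerivWithinAt (fun s => K2 x s) (M22 x t) (Icc (-b) b) t
  hK1c : ContinuousOn (fun p : ℝ × ℝ => K1 p.1 p.2) (Icc (-b) b ×ˢ Icc (-b) b)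
  hK2c : ContinuousOn (fun p : ℝ × ℝ => K2 p.1 p.2) (Icc (-b) b ×ˢ Icc (-b) b)
  hM11c : ContinuousOn (fun p : ℝ × ℝ => M11 p.1 p.2) (Icc (-b) b ×ˢ Icc (-b) b)
  hM22c : ContinuousOn (fun p : ℝ × ℝ => M22 p.1 p.2) (Icc (-b) b ×ˢ Icc (-b) b)
  hdiag : ∀ x ∈ Icc (-b) b,
    HasDerivWithinAt (fun y => K y y) (K1 x x + K2 x x) (Icc (-b) b) x
  hanti : ∀ x ∈ Icc (-b) b,
    HasDerivWithinAt (fun y => K y (-y)) (K1 x (-x) - K2 x (-x)) (Icc (-b) b) x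
  hd2x : ∀ x ∈ Icc (-b) b, ∀ t ∈ Icc (-b) b, d2x b K x t = M11 x t
  hd2t : ∀ x ∈ Icc (-b) b, ∀ t ∈ Icc (-b) b, d2t b K x t = M22 x t

lemma kerCalc_exists (hb : 0 < b)
    (hKreg : ContDiffOn ℝ 2 (fun p : ℝ × ℝ => K p.1 p.2) (Icc (-b) b ×ˢ Icc (-b) b)) :
    ∃ K1 K2 M11 M22 : ℝ → ℝ → ℂ, KerCalc b K K1 K2 M11 M22 := by
  have hbb : -b < b := by linarith
  have hS : UniqueDiffOn ℝ (Icc (-b) b) := uniqueDiffOn_Icc hbb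
  have hU : UniqueDiffOn ℝ (Icc (-b) b ×ˢ Icc (-b) b) := hS.prod hS
  set Kp : ℝ × ℝ → ℂ := fun p => K p.1 p.2 with hKp
  set F1 := fderivWithin ℝ Kp (Icc (-b) b ×ˢ Icc (-b) b) with hF1def
  set F2 := fderivWithin ℝ F1 (Icc (-b) b ×ˢ Icc (-b) b) with hF2def
  have hF1cd : ContDiffOn ℝ 1 F1 (Icc (-b) b ×ˢ Icc (-b) b) :=
    hKreg.fderivWithin (m := 1) hU (by norm_num)
  have hF1c : ContinuousOn F1 (Icc (-b) b ×ˢ Icc (-b) b) := hF1cd.continuousOn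
  have hF2c : ContinuousOn F2 (Icc (-b) b ×ˢ Icc (-b) b) :=
    (hF1cd.fderivWithin (m := 0) hU (by norm_num)).continuousOn
  have hKdf : ∀ p ∈ Icc (-b) b ×ˢ Icc (-b) b,
      HasFDerivWithinAt Kp (F1 p) (Icc (-b) b ×ˢ Icc (-b) b) p := fun p hp =>
    ((hKreg.differentiableOn (by norm_num)) p hp).hasFDerivWithinAt
  have hF1df : ∀ p ∈ Icc (-b) b ×ˢ Icc (-b) b,
      HasFDerivWithinAt F1 (F2 p) (Icc (-b) b ×ˢ Icc (-b) b) p := fun p hp =>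
    ((hF1cd.differentiableOn (by norm_num)) p hp).hasFDerivWithinAt
  refine ⟨fun x t => F1 (x, t) (1, 0), fun x t => F1 (x, t) (0, 1),
    fun x t => F2 (x, t) (1, 0) (1, 0), fun x t => F2 (x, t) (0, 1) (0, 1), ?_⟩
  have hK1d : ∀ t ∈ Icc (-b) b, ∀ x ∈ Icc (-b) b,
      HasDerivWithinAt (fun y => K y t) (F1 (x, t) (1, 0)) (Icc (-b) b) x := by
    intro t ht x hx
    have hι : HasDerivWithinAt (fun y : ℝ => (y, t)) ((1:ℝ), (0:ℝ)) (Icc (-b) b) x :=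
      (hasDerivWithinAt_id x _).prodMk (hasDerivWithinAt_const x _ t)
    have := (hKdf (x, t) ⟨hx, ht⟩).comp_hasDerivWithinAt x hι (fun y hy => show (y, t) ∈ Icc (-b) b ×ˢ Icc (-b) b from ⟨hy, ht⟩)
    simpa [Function.comp_def] using this
  have hK2d : ∀ x ∈ Icc (-b) b, ∀ t ∈ Icc (-b) b,
      HasDerivWithinAt (fun s => K x s) (F1 (x, t) (0, 1)) (Icc (-b) b) t := by
    intro x hx t ht
    have hι : HasDerivWithinAt (fun s : ℝ => (x, s)) ((0:ℝ), (1:ℝ)) (Icc (-b) b) t :=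
      (hasDerivWithinAt_const t _ x).prodMk (hasDerivWithinAt_id t _)
    have := (hKdf (x, t) ⟨hx, ht⟩).comp_hasDerivWithinAt t hι (fun s hs => ⟨hx, hs⟩)
    simpa [Function.comp_def] using this
  have hF1d1 : ∀ t ∈ Icc (-b) b, ∀ x ∈ Icc (-b) b,
      HasDerivWithinAt (fun y => F1 (y, t)) (F2 (x, t) (1, 0)) (Icc (-b) b) x := by
    intro t ht x hx
    have hι : HasDerivWithinAt (fun y : ℝ => (y, t)) ((1:ℝ), (0:ℝ)) (Icc (-b) b) x :=
      (hasDerivWithinAt_id x _).prodMk (hasDerivWithinAt_const x _ t)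
    have := (hF1df (x, t) ⟨hx, ht⟩).comp_hasDerivWithinAt x hι (fun y hy => show (y, t) ∈ Icc (-b) b ×ˢ Icc (-b) b from ⟨hy, ht⟩)
    simpa [Function.comp_def] using this
  have hF1d2 : ∀ x ∈ Icc (-b) b, ∀ t ∈ Icc (-b) b,
      HasDerivWithinAt (fun s => F1 (x, s)) (F2 (x, t) (0, 1)) (Icc (-b) b) t := by
    intro x hx t ht
    have hι : HasDerivWithinAt (fun s : ℝ => (x, s)) ((0:ℝ), (1:ℝ)) (Icc (-b) b) t :=
      (hasDerivWithinAt_const t _ x).prodMk (hasDerivWithinAt_id t _)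
    have := (hF1df (x, t) ⟨hx, ht⟩).comp_hasDerivWithinAt t hι (fun s hs => ⟨hx, hs⟩)
    simpa [Function.comp_def] using this
  have hK1dd : ∀ t ∈ Icc (-b) b, ∀ x ∈ Icc (-b) b,
      HasDerivWithinAt (fun y => F1 (y, t) (1, 0)) (F2 (x, t) (1, 0) (1, 0)) (Icc (-b) b) x := by
    intro t ht x hx
    have := (hF1d1 t ht x hx).clm_apply
      (hasDerivWithinAt_const x _ ((1:ℝ), (0:ℝ)))
    simpa using this
  have hK2dd : ∀ x ∈ Icc (-b) b, ∀ t ∈ Icc (-b) b,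
      HasDerivWithinAt (fun s => F1 (x, s) (0, 1)) (F2 (x, t) (0, 1) (0, 1)) (Icc (-b) b) t := by
    intro x hx t ht
    have := (hF1d2 x hx t ht).clm_apply
      (hasDerivWithinAt_const t _ ((0:ℝ), (1:ℝ)))
    simpa using this
  refine ⟨hK1d, hK2d, hK1dd, hK2dd, ?_, ?_, ?_, ?_, ?_, ?_, ?_, ?_⟩
  · exact hF1c.clm_apply continuousOn_const
  · exact hF1c.clm_apply continuousOn_const
  · exact (hF2c.clm_apply continuousOn_const).clm_apply continuousOn_const
  · exact (hF2c.clm_apply continuousOn_const).clm_apply continuousOn_const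
  · -- diag
    intro x hx
    have hι : HasDerivWithinAt (fun y : ℝ => (y, y)) ((1:ℝ), (1:ℝ)) (Icc (-b) b) x :=
      (hasDerivWithinAt_id x _).prodMk (hasDerivWithinAt_id x _)
    have h1 := HasFDerivWithinAt.comp_hasDerivWithinAt (f := fun y : ℝ => ((y, y) : ℝ × ℝ)) x
      (hKdf (x, x) ⟨hx, hx⟩) hι (fun y hy => ⟨hy, hy⟩)
    have h2 : F1 (x, x) ((1:ℝ), (1:ℝ)) = F1 (x, x) (1, 0) + F1 (x, x) (0, 1) := by
      rw [← ContinuousLinearMap.map_add]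
      norm_num
    rw [← h2]
    simpa [Function.comp_def] using h1
  · -- antidiag
    intro x hx
    have hι : HasDerivWithinAt (fun y : ℝ => (y, -y)) ((1:ℝ), (-1:ℝ)) (Icc (-b) b) x :=
      (hasDerivWithinAt_id x _).prodMk ((hasDerivAt_neg' x).hasDerivWithinAt)
    have h1 := HasFDerivWithinAt.comp_hasDerivWithinAt (f := fun y : ℝ => ((y, -y) : ℝ × ℝ)) x
      (hKdf (x, -x) ⟨hx, neg_mem_Icc' hx⟩) hι (fun y hy => ⟨hy, neg_mem_Icc' hy⟩)
    have h2 : F1 (x, -x) ((1:ℝ), (-1:ℝ)) = F1 (x, -x) (1, 0) - F1 (x, -x) (0, 1) := by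
      have : ((1:ℝ), (-1:ℝ)) = ((1:ℝ), (0:ℝ)) - ((0:ℝ), (1:ℝ)) := by norm_num
      rw [this, ContinuousLinearMap.map_sub]
    rw [← h2]
    simpa [Function.comp_def] using h1
  · -- d2x
    intro x hx t ht
    rw [d2x]
    have h1 : derivWithin (fun x' => derivWithin (fun x'' => K x'' t) (Icc (-b) b) x')
        (Icc (-b) b) x = derivWithin (fun x' => F1 (x', t) (1, 0)) (Icc (-b) b) x :=
      derivWithin_congr (fun y hy => (hK1d t ht y hy).derivWithin (hS y hy))
        ((hK1d t ht x hx).derivWithin (hS x hx))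
    rw [h1, (hK1dd t ht x hx).derivWithin (hS x hx)]
  · -- d2t
    intro x hx t ht
    rw [d2t]
    have h1 : derivWithin (fun t' => derivWithin (fun t'' => K x t'') (Icc (-b) b) t')
        (Icc (-b) b) t = derivWithin (fun t' => F1 (x, t') (0, 1)) (Icc (-b) b) t :=
      derivWithin_congr (fun s hs => (hK2d x hx s hs).derivWithin (hS s hs))
        ((hK2d x hx t ht).derivWithin (hS t ht))
    rw [h1, (hK2dd x hx t ht).derivWithin (hS t ht)]


/-- if `v'' + ω²v = 0` on `[-b,b]`, then `u := T v` is twice continuously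
differentiable, satisfies `u'' − q u + ω² u = 0`, with `u(0) = v(0)` and
`u'(0) = v'(0) + h v(0)`. -/
theorem transmutation_maps_solutions
    (b : ℝ) (hb : 0 < b) (q : ℝ → ℂ) (hq : ContDiffOn ℝ 1 q (Set.Icc (-b) b))
    (h : ℂ) (K : ℝ → ℝ → ℂ) (hK : IsTransmutationKernel b q h K)
    (ω : ℂ) (v : ℝ → ℂ) (hv : ContDiffOn ℝ 2 v (Set.Icc (-b) b))
    (hveq : ∀ x ∈ Set.Icc (-b) b,
      derivWithin (derivWithin v (Set.Icc (-b) b)) (Set.Icc (-b) b) x + ω ^ 2 * v x = 0) :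
    ContDiffOn ℝ 2 (fun x => v x + ∫ t in (-x)..x, K x t * v t) (Set.Icc (-b) b) ∧
    (∀ x ∈ Set.Icc (-b) b,
      derivWithin
          (derivWithin (fun y => v y + ∫ t in (-y)..y, K y t * v t) (Set.Icc (-b) b))
          (Set.Icc (-b) b) x
        - q x * (v x + ∫ t in (-x)..x, K x t * v t)
        + ω ^ 2 * (v x + ∫ t in (-x)..x, K x t * v t) = 0) ∧
    (v 0 + ∫ t in (-(0:ℝ))..(0:ℝ), K 0 t * v t) = v 0 ∧
    derivWithin (fun y => v y + ∫ t in (-y)..y, K y t * v t) (Set.Icc (-b) b) 0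
      = derivWithin v (Set.Icc (-b) b) 0 + h * v 0 := by
  
  obtain ⟨hKreg, hPDE, hGour1, hGour2⟩ := hK
  have hbb : -b < b := by linarith
  have hS : UniqueDiffOn ℝ (Icc (-b) b) := uniqueDiffOn_Icc hbb
  have h0S : (0:ℝ) ∈ Icc (-b) b := ⟨by linarith, by linarith⟩
  obtain ⟨K1, K2, M11, M22, hC⟩ := kerCalc_exists hb hKreg
  have hKc : ContinuousOn (fun p : ℝ × ℝ => K p.1 p.2) (Icc (-b) b ×ˢ Icc (-b) b) :=
    hKreg.continuousOn
  set vd := derivWithin v (Set.Icc (-b) b) with hvddef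
  set vdd := derivWithin vd (Set.Icc (-b) b) with hvdddef
  have hvc : ContinuousOn v (Icc (-b) b) := hv.continuousOn
  have hvd : ∀ x ∈ Icc (-b) b, HasDerivWithinAt v (vd x) (Icc (-b) b) x :=
    fun x hx => ((hv.differentiableOn (by norm_num)) x hx).hasDerivWithinAt
  have hvdcd : ContDiffOn ℝ 1 vd (Icc (-b) b) := hv.derivWithin hS (by norm_num)
  have hvdc : ContinuousOn vd (Icc (-b) b) := hvdcd.continuousOn
  have hvdd : ∀ x ∈ Icc (-b) b, HasDerivWithinAt vd (vdd x) (Icc (-b) b) x :=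
    fun x hx => ((hvdcd.differentiableOn (by norm_num)) x hx).hasDerivWithinAt
  have hvddc : ContinuousOn vdd (Icc (-b) b) :=
    (hvdcd.derivWithin (m := 0) hS (by norm_num)).continuousOn
  have hvddeq : ∀ x ∈ Icc (-b) b, vdd x = -(ω^2 * v x) := fun x hx => by
    linear_combination (hveq x hx)
  have hvsnd : ContinuousOn (fun p : ℝ × ℝ => v p.2) (Icc (-b) b ×ˢ Icc (-b) b) :=
    hvc.comp continuous_snd.continuousOn (fun p hp => hp.2)
  have hIder : ∀ x ∈ Icc (-b) b, HasDerivWithinAt (fun y => ∫ t in (-y)..y, K y t * v t)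
      (K x x * v x + K x (-x) * v (-x) + ∫ t in (-x)..x, K1 x t * v t) (Icc (-b) b) x :=
    fun x hx => hasDerivWithinAt_param_int_both hb (hKc.mul hvsnd) (hC.hK1c.mul hvsnd)
      (fun t ht y hy => (hC.hK1d t ht y hy).mul_const (v t)) hx
  have hJder : ∀ x ∈ Icc (-b) b, HasDerivWithinAt (fun y => ∫ t in (-y)..y, K1 y t * v t)
      (K1 x x * v x + K1 x (-x) * v (-x) + ∫ t in (-x)..x, M11 x t * v t) (Icc (-b) b) x :=
    fun x hx => hasDerivWithinAt_param_int_both hb (hC.hK1c.mul hvsnd) (hC.hM11c.mul hvsnd)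
      (fun t ht y hy => (hC.hK1dd t ht y hy).mul_const (v t)) hx
  have hvneg : ∀ x ∈ Icc (-b) b,
      HasDerivWithinAt (fun y => v (-y)) (-(vd (-x))) (Icc (-b) b) x := by
    intro x hx
    have := HasDerivWithinAt.scomp x (hvd (-x) (neg_mem_Icc' hx))
      ((hasDerivAt_neg' x).hasDerivWithinAt) (fun y hy => neg_mem_Icc' hy)
    simpa [Function.comp_def] using this
  set w : ℝ → ℂ :=
    fun x => K x x * v x + K x (-x) * v (-x) + ∫ t in (-x)..x, K1 x t * v t with hwdef
  have hwder : ∀ x ∈ Icc (-b) b, HasDerivWithinAt w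
      (((K1 x x + K2 x x) * v x + K x x * vd x)
        + ((K1 x (-x) - K2 x (-x)) * v (-x) + K x (-x) * (-(vd (-x))))
        + (K1 x x * v x + K1 x (-x) * v (-x) + ∫ t in (-x)..x, M11 x t * v t))
      (Icc (-b) b) x := fun x hx =>
    (((hC.hdiag x hx).mul (hvd x hx)).add ((hC.hanti x hx).mul (hvneg x hx))).add (hJder x hx)
  have huder : ∀ x ∈ Icc (-b) b,
      HasDerivWithinAt (fun y => v y + ∫ t in (-y)..y, K y t * v t)
        (vd x + w x) (Icc (-b) b) x := fun x hx => (hvd x hx).add (hIder x hx)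
  have hueq : ∀ x ∈ Icc (-b) b,
      derivWithin (fun y => v y + ∫ t in (-y)..y, K y t * v t) (Icc (-b) b) x = vd x + w x :=
    fun x hx => (huder x hx).derivWithin (hS x hx)
  have hu2eq : ∀ x ∈ Icc (-b) b,
      derivWithin (derivWithin (fun y => v y + ∫ t in (-y)..y, K y t * v t) (Icc (-b) b))
        (Icc (-b) b) x
      = vdd x + ((((K1 x x + K2 x x) * v x + K x x * vd x)
        + ((K1 x (-x) - K2 x (-x)) * v (-x) + K x (-x) * (-(vd (-x))))
        + (K1 x x * v x + K1 x (-x) * v (-x) + ∫ t in (-x)..x, M11 x t * v t))) := by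
    intro x hx
    have hcongr : derivWithin
        (derivWithin (fun y => v y + ∫ t in (-y)..y, K y t * v t) (Icc (-b) b)) (Icc (-b) b) x
        = derivWithin (fun y => vd y + w y) (Icc (-b) b) x :=
      derivWithin_congr (fun y hy => hueq y hy) (hueq x hx)
    rw [hcongr]
    exact ((hvdd x hx).add (hwder x hx)).derivWithin (hS x hx)
  -- Goursat differentiated
  have hqc : ContinuousOn q (Icc (-b) b) := hq.continuousOn
  have hG1x : ∀ x ∈ Icc (-b) b, K1 x x + K2 x x = q x / 2 := by
    intro x hx
    have hqcl : Continuous (fun s => q (cl b s)) := hqc.comp_continuous continuous_cl (cl_mem hb)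
    have h2 : HasDerivWithinAt (fun y => h / 2 + (1 / 2 : ℂ) * ∫ s in (0:ℝ)..y, q (cl b s))
        ((1 / 2 : ℂ) * q (cl b x)) (Icc (-b) b) x := by
      have := ((hqcl.integral_hasStrictDerivAt 0 x).hasDerivAt.const_mul (1/2 : ℂ)).const_add (h/2)
      exact this.hasDerivWithinAt
    have heqn : ∀ y ∈ Icc (-b) b,
        K y y = h / 2 + (1 / 2 : ℂ) * ∫ s in (0:ℝ)..y, q (cl b s) := by
      intro y hy
      have hint : (∫ s in (0:ℝ)..y, q (cl b s)) = ∫ s in (0:ℝ)..y, q s :=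
        intervalIntegral.integral_congr (fun s hs => by
          show q (cl b s) = q s
          rw [cl_eq_self (uIcc_sub h0S hy hs)])
      rw [hGour1 y hy, hint]
    have h3 : HasDerivWithinAt (fun y => K y y) ((1 / 2 : ℂ) * q (cl b x)) (Icc (-b) b) x :=
      h2.congr heqn (heqn x hx)
    have e1 := (hC.hdiag x hx).derivWithin (hS x hx)
    have e2 := h3.derivWithin (hS x hx)
    rw [cl_eq_self hx] at e2
    have := e1.symm.trans e2
    linear_combination this
  have hG2x : ∀ x ∈ Icc (-b) b, K1 x (-x) - K2 x (-x) = 0 := by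
    intro x hx
    have h3 : HasDerivWithinAt (fun y => K y (-y)) 0 (Icc (-b) b) x :=
      (hasDerivWithinAt_const x _ (h/2)).congr (fun y hy => hGour2 y hy) (hGour2 x hx)
    have e1 := (hC.hanti x hx).derivWithin (hS x hx)
    have e2 := h3.derivWithin (hS x hx)
    exact e1.symm.trans e2
  refine ⟨?_, ?_, ?_, ?_⟩
  · -- ContDiffOn 2
    rw [show (2 : WithTop ℕ∞) = 1 + 1 by norm_num, contDiffOn_succ_iff_derivWithin hS]
    refine ⟨fun x hx => (huder x hx).differentiableWithinAt, ?_, ?_⟩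
    · intro hcon; exact absurd hcon (by simp)
    · have hcd : ContDiffOn ℝ 1 (fun x => vd x + w x) (Icc (-b) b) := by
        rw [show (1 : WithTop ℕ∞) = 0 + 1 by norm_num, contDiffOn_succ_iff_derivWithin hS]
        refine ⟨fun x hx => ((hvdd x hx).add (hwder x hx)).differentiableWithinAt, ?_, ?_⟩
        · intro hcon; exact absurd hcon (by simp)
        · rw [contDiffOn_zero]
          have cdiag : ∀ {G : ℝ → ℝ → ℂ},
              ContinuousOn (fun p : ℝ × ℝ => G p.1 p.2) (Icc (-b) b ×ˢ Icc (-b) b) →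
              ContinuousOn (fun x => G x x) (Icc (-b) b) := fun hG =>
            hG.comp ((continuous_id.prodMk continuous_id).continuousOn)
              (fun x hx => ⟨hx, hx⟩)
          have canti : ∀ {G : ℝ → ℝ → ℂ},
              ContinuousOn (fun p : ℝ × ℝ => G p.1 p.2) (Icc (-b) b ×ˢ Icc (-b) b) →
              ContinuousOn (fun x => G x (-x)) (Icc (-b) b) := fun hG =>
            hG.comp ((continuous_id.prodMk continuous_neg).continuousOn)
              (fun x hx => ⟨hx, neg_mem_Icc' hx⟩)
          have hvn : ContinuousOn (fun x => v (-x)) (Icc (-b) b) :=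
            hvc.comp continuous_neg.continuousOn (fun x hx => neg_mem_Icc' hx)
          have hvdn : ContinuousOn (fun x => vd (-x)) (Icc (-b) b) :=
            hvdc.comp continuous_neg.continuousOn (fun x hx => neg_mem_Icc' hx)
          have hintc : ContinuousOn (fun x => ∫ t in (-x)..x, M11 x t * v t) (Icc (-b) b) :=
            continuousOn_int_both hb (hC.hM11c.mul hvsnd)
          have hWc : ContinuousOn (fun x => vdd x +
              (((K1 x x + K2 x x) * v x + K x x * vd x)
              + ((K1 x (-x) - K2 x (-x)) * v (-x) + K x (-x) * -vd (-x))
              + (K1 x x * v x + K1 x (-x) * v (-x) + ∫ t in (-x)..x, M11 x t * v t)))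
              (Icc (-b) b) := by
            apply hvddc.add
            apply ContinuousOn.add
            apply ContinuousOn.add
            · exact (((cdiag hC.hK1c).add (cdiag hC.hK2c)).mul hvc).add ((cdiag hKc).mul hvdc)
            · exact (((canti hC.hK1c).sub (canti hC.hK2c)).mul hvn).add
                ((canti hKc).mul hvdn.neg)
            · exact (((cdiag hC.hK1c).mul hvc).add ((canti hC.hK1c).mul hvn)).add hintc
          exact hWc.congr
            (fun x hx => ((hvdd x hx).add (hwder x hx)).derivWithin (hS x hx))
      exact hcd.congr (fun x hx => hueq x hx)
  · -- ODE
    intro x hx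
    rw [hu2eq x hx]
    have hxneg := neg_mem_Icc' hx
    have hsubx : uIcc (-x) x ⊆ Icc (-b) b := uIcc_sub hxneg hx
    have hM : ∀ t ∈ Icc (-b) b, M11 x t = M22 x t + q x * K x t := by
      intro t ht
      have hpde := hPDE x hx t ht
      rw [hC.hd2x x hx t ht, hC.hd2t x hx t ht] at hpde
      linear_combination hpde
    have hKxc : ContinuousOn (fun t => K x t) (Icc (-b) b) := sliceL hKc hx
    have hM22xc : ContinuousOn (fun t => M22 x t) (Icc (-b) b) := sliceL hC.hM22c hx
    have hstep1 : (∫ t in (-x)..x, M11 x t * v t)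
        = q x * (∫ t in (-x)..x, K x t * v t) + ∫ t in (-x)..x, M22 x t * v t := by
      have hcongr : ∀ t ∈ uIcc (-x) x, M11 x t * v t = q x * (K x t * v t) + M22 x t * v t := by
        intro t ht; rw [hM t (hsubx ht)]; ring
      rw [intervalIntegral.integral_congr hcongr,
        intervalIntegral.integral_add
          ((continuousOn_const.fun_mul ((hKxc.mono hsubx).fun_mul (hvc.mono hsubx))).intervalIntegrable)
          (((hM22xc.mono hsubx).fun_mul (hvc.mono hsubx)).intervalIntegrable),
        intervalIntegral.integral_const_mul]
    have hPder : ∀ t ∈ Icc (-b) b, HasDerivWithinAt (fun s => K2 x s * v s - K x s * vd s)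
        (M22 x t * v t - K x t * vdd t) (Icc (-b) b) t := by
      intro t ht
      have h1 := (hC.hK2dd x hx t ht).fun_mul (hvd t ht)
      have h2 := (hC.hK2d x hx t ht).fun_mul (hvdd t ht)
      have h12 := h1.fun_sub h2
      refine h12.congr_deriv ?_
      ring
    have hIBP := ftc2 hb hPder
      ((hM22xc.mul hvc).sub (hKxc.mul hvddc)) hxneg hx
    have hsplit : (∫ t in (-x)..x, (M22 x t * v t - K x t * vdd t))
        = (∫ t in (-x)..x, M22 x t * v t) - ∫ t in (-x)..x, K x t * vdd t :=
      intervalIntegral.integral_sub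
        (((hM22xc.mono hsubx).mul (hvc.mono hsubx)).intervalIntegrable)
        (((hKxc.mono hsubx).mul (hvddc.mono hsubx)).intervalIntegrable)
    rw [hsplit] at hIBP
    have hvddint : (∫ t in (-x)..x, K x t * vdd t)
        = -(ω^2 * ∫ t in (-x)..x, K x t * v t) := by
      have hcongr : ∀ t ∈ uIcc (-x) x, K x t * vdd t = (-(ω^2)) * (K x t * v t) := by
        intro t ht; rw [hvddeq t (hsubx ht)]; ring
      rw [intervalIntegral.integral_congr hcongr, intervalIntegral.integral_const_mul]
      ring
    linear_combination (hvddeq x hx) + 2 * v x * (hG1x x hx) + 2 * v (-x) * (hG2x x hx)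
      + hstep1 + hIBP + hvddint
  · simp
  · rw [hueq 0 h0S]
    have hK00 : K 0 0 = h / 2 := by
      have := hGour1 0 h0S
      simpa using this
    simp only [hwdef]
    rw [neg_zero, intervalIntegral.integral_same]
    rw [hK00]
    ring
end Main
end Helpers
end

section
/- For every ω ∈ ℂ, the function c(ω,x) := cos(ωx) + ∫₀ˣ (K(x,t) + K(x,−t))·cos(ωt) dt is twice continuously differentiable in x on [-b,b] and satisfies c'' − q·c + ω²·c = 0 on [-b,b], together with the initial conditions c(ω,0) = 1 and ∂c/∂x(ω,0) = h. -/
open Set MeasureTheory Filter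

set_option maxHeartbeats 2000000

section AuxTransmutation

noncomputable def KXpartial (b : ℝ) (K : ℝ → ℝ → ℂ) (x t : ℝ) : ℂ :=
  derivWithin (fun x' => K x' t) (Set.Icc (-b) b) x

noncomputable def KTpartial (b : ℝ) (K : ℝ → ℝ → ℂ) (x t : ℝ) : ℂ :=
  derivWithin (fun t' => K x t') (Set.Icc (-b) b) t

variable {b : ℝ}

lemma negMemIcc {t : ℝ} (ht : t ∈ Set.Icc (-b) b) : -t ∈ Set.Icc (-b) b := by
  rcases ht with ⟨h1, h2⟩; exact ⟨by linarith, by linarith⟩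

lemma sliceX {F : ℝ → ℝ → ℂ} {n : WithTop ℕ∞}
    (hF : ContDiffOn ℝ n (fun p : ℝ × ℝ => F p.1 p.2) (Set.Icc (-b) b ×ˢ Set.Icc (-b) b))
    (hn : 1 ≤ n) {x t : ℝ} (hx : x ∈ Set.Icc (-b) b) (ht : t ∈ Set.Icc (-b) b) :
    HasDerivWithinAt (fun x' => F x' t)
      (fderivWithin ℝ (fun p : ℝ × ℝ => F p.1 p.2)
        (Set.Icc (-b) b ×ˢ Set.Icc (-b) b) (x, t) ((1:ℝ), (0:ℝ))) (Set.Icc (-b) b) x := by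
  have hd := ((hF.differentiableOn (zero_lt_one.trans_le hn).ne') (x, t) (Set.mk_mem_prod hx ht)).hasFDerivWithinAt
  have hγ : HasDerivWithinAt (fun x' : ℝ => (x', t)) ((1:ℝ), (0:ℝ)) (Set.Icc (-b) b) x :=
    ((hasDerivAt_id x).prodMk (hasDerivAt_const x t)).hasDerivWithinAt
  exact hd.comp_hasDerivWithinAt x hγ (fun y hy => Set.mk_mem_prod hy ht)

lemma sliceT {F : ℝ → ℝ → ℂ} {n : WithTop ℕ∞}
    (hF : ContDiffOn ℝ n (fun p : ℝ × ℝ => F p.1 p.2) (Set.Icc (-b) b ×ˢ Set.Icc (-b) b))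
    (hn : 1 ≤ n) {x t : ℝ} (hx : x ∈ Set.Icc (-b) b) (ht : t ∈ Set.Icc (-b) b) :
    HasDerivWithinAt (fun t' => F x t')
      (fderivWithin ℝ (fun p : ℝ × ℝ => F p.1 p.2)
        (Set.Icc (-b) b ×ˢ Set.Icc (-b) b) (x, t) ((0:ℝ), (1:ℝ))) (Set.Icc (-b) b) t := by
  have hd := ((hF.differentiableOn (zero_lt_one.trans_le hn).ne') (x, t) (Set.mk_mem_prod hx ht)).hasFDerivWithinAt
  have hγ : HasDerivWithinAt (fun t' : ℝ => (x, t')) ((0:ℝ), (1:ℝ)) (Set.Icc (-b) b) t :=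
    ((hasDerivAt_const t x).prodMk (hasDerivAt_id t)).hasDerivWithinAt
  exact hd.comp_hasDerivWithinAt t hγ (fun y hy => Set.mk_mem_prod hx hy)

lemma slice_hasDerivX (hb : 0 < b) {F : ℝ → ℝ → ℂ} {n : WithTop ℕ∞}
    (hF : ContDiffOn ℝ n (fun p : ℝ × ℝ => F p.1 p.2) (Set.Icc (-b) b ×ˢ Set.Icc (-b) b))
    (hn : 1 ≤ n) {x t : ℝ} (hx : x ∈ Set.Icc (-b) b) (ht : t ∈ Set.Icc (-b) b) :
    HasDerivWithinAt (fun x' => F x' t) (KXpartial b F x t) (Set.Icc (-b) b) x := by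
  have hs := sliceX hF hn hx ht
  have he : KXpartial b F x t = fderivWithin ℝ (fun p : ℝ × ℝ => F p.1 p.2)
      (Set.Icc (-b) b ×ˢ Set.Icc (-b) b) (x, t) ((1:ℝ), (0:ℝ)) :=
    hs.derivWithin ((uniqueDiffOn_Icc (by linarith)) x hx)
  rw [he]; exact hs

lemma slice_hasDerivT (hb : 0 < b) {F : ℝ → ℝ → ℂ} {n : WithTop ℕ∞}
    (hF : ContDiffOn ℝ n (fun p : ℝ × ℝ => F p.1 p.2) (Set.Icc (-b) b ×ˢ Set.Icc (-b) b))
    (hn : 1 ≤ n) {x t : ℝ} (hx : x ∈ Set.Icc (-b) b) (ht : t ∈ Set.Icc (-b) b) :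
    HasDerivWithinAt (fun t' => F x t') (KTpartial b F x t) (Set.Icc (-b) b) t := by
  have hs := sliceT hF hn hx ht
  have he : KTpartial b F x t = fderivWithin ℝ (fun p : ℝ × ℝ => F p.1 p.2)
      (Set.Icc (-b) b ×ˢ Set.Icc (-b) b) (x, t) ((0:ℝ), (1:ℝ)) :=
    hs.derivWithin ((uniqueDiffOn_Icc (by linarith)) t ht)
  rw [he]; exact hs

lemma contDiffOn_KX (hb : 0 < b) {F : ℝ → ℝ → ℂ} {n : WithTop ℕ∞}
    (hF : ContDiffOn ℝ (n + 1) (fun p : ℝ × ℝ => F p.1 p.2) (Set.Icc (-b) b ×ˢ Set.Icc (-b) b)) :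
    ContDiffOn ℝ n (fun p : ℝ × ℝ => KXpartial b F p.1 p.2)
      (Set.Icc (-b) b ×ˢ Set.Icc (-b) b) := by
  have hI : UniqueDiffOn ℝ (Set.Icc (-b) b) := uniqueDiffOn_Icc (by linarith)
  have hSu : UniqueDiffOn ℝ (Set.Icc (-b) b ×ˢ Set.Icc (-b) b) := hI.prod hI
  have h1 := (hF.fderivWithin hSu le_rfl).clm_apply (contDiffOn_const (c := ((1:ℝ), (0:ℝ))))
  exact h1.congr (fun p hp => (sliceX hF le_add_self hp.1 hp.2).derivWithin (hI _ hp.1))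

lemma contDiffOn_KT (hb : 0 < b) {F : ℝ → ℝ → ℂ} {n : WithTop ℕ∞}
    (hF : ContDiffOn ℝ (n + 1) (fun p : ℝ × ℝ => F p.1 p.2) (Set.Icc (-b) b ×ˢ Set.Icc (-b) b)) :
    ContDiffOn ℝ n (fun p : ℝ × ℝ => KTpartial b F p.1 p.2)
      (Set.Icc (-b) b ×ˢ Set.Icc (-b) b) := by
  have hI : UniqueDiffOn ℝ (Set.Icc (-b) b) := uniqueDiffOn_Icc (by linarith)
  have hSu : UniqueDiffOn ℝ (Set.Icc (-b) b ×ˢ Set.Icc (-b) b) := hI.prod hI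
  have h1 := (hF.fderivWithin hSu le_rfl).clm_apply (contDiffOn_const (c := ((0:ℝ), (1:ℝ))))
  exact h1.congr (fun p hp => (sliceT hF le_add_self hp.1 hp.2).derivWithin (hI _ hp.2))

lemma key_param_deriv (hb : 0 < b) {f D : ℝ → ℝ → ℂ}
    (hfc : ContinuousOn (fun p : ℝ × ℝ => f p.1 p.2) (Set.Icc (-b) b ×ˢ Set.Icc (-b) b))
    (hD : ∀ x ∈ Set.Icc (-b) b, ∀ t ∈ Set.Icc (-b) b,
      HasDerivWithinAt (fun x' => f x' t) (D x t) (Set.Icc (-b) b) x)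
    (hDc : ContinuousOn (fun p : ℝ × ℝ => D p.1 p.2) (Set.Icc (-b) b ×ˢ Set.Icc (-b) b))
    {x : ℝ} (hx : x ∈ Set.Icc (-b) b) :
    HasDerivWithinAt (fun y => ∫ t in (0:ℝ)..y, f y t)
      (f x x + ∫ t in (0:ℝ)..x, D x t) (Set.Icc (-b) b) x := by
  have h0 : (0:ℝ) ∈ Set.Icc (-b) b := ⟨by linarith, by linarith⟩
  have hslice : ∀ y ∈ Set.Icc (-b) b, ContinuousOn (fun t => f y t) (Set.Icc (-b) b) :=
    fun y hy => hfc.comp (Continuous.continuousOn (by fun_prop)) (fun t ht => Set.mk_mem_prod hy ht)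
  have hInt : ∀ y ∈ Set.Icc (-b) b, ∀ u ∈ Set.Icc (-b) b, ∀ v ∈ Set.Icc (-b) b,
      IntervalIntegrable (fun t => f y t) volume u v := fun y hy u hu v hv =>
    ((hslice y hy).mono (Set.uIcc_subset_Icc hu hv)).intervalIntegrable
  have hDslice : ContinuousOn (fun t => D x t) (Set.Icc (-b) b) :=
    hDc.comp (Continuous.continuousOn (by fun_prop)) (fun t ht => Set.mk_mem_prod hx ht)
  have hDInt : IntervalIntegrable (fun t => D x t) volume 0 x :=
    (hDslice.mono (Set.uIcc_subset_Icc h0 hx)).intervalIntegrable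
  haveI : Fact (x ∈ Set.Icc (-b) b) := ⟨hx⟩
  have hA : HasDerivWithinAt (fun y => ∫ t in (0:ℝ)..y, f x t) (f x x) (Set.Icc (-b) b) x :=
    intervalIntegral.integral_hasDerivWithinAt_right (hInt x hx 0 h0 x hx)
      ((hslice x hx).stronglyMeasurableAtFilter_nhdsWithin measurableSet_Icc x)
      ((hslice x hx) x hx)
  obtain ⟨zM, hzM, hM⟩ := (isCompact_Icc.prod isCompact_Icc).exists_isMaxOn
    ⟨(0, 0), Set.mk_mem_prod h0 h0⟩ hDc.norm
  set M : ℝ := ‖D zM.1 zM.2‖ with hMdef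
  have hM0 : 0 ≤ M := norm_nonneg _
  have hMb : ∀ p ∈ Set.Icc (-b) b ×ˢ Set.Icc (-b) b, ‖D p.1 p.2‖ ≤ M := fun p hp => hM hp
  have hMV : ∀ t ∈ Set.Icc (-b) b, ∀ y ∈ Set.Icc (-b) b, ‖f y t - f x t‖ ≤ M * ‖y - x‖ :=
    fun t ht y hy =>
      Convex.norm_image_sub_le_of_norm_hasDerivWithin_le
        (f' := fun s => D s t) (fun s hs => hD s hs t ht)
        (fun s hs => hMb (s, t) (Set.mk_mem_prod hs ht)) (convex_Icc _ _) hx hy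
  have hMV2 : ∀ ε > (0:ℝ), ∃ δ > (0:ℝ), ∀ y ∈ Set.Icc (-b) b, |y - x| < δ →
      ∀ t ∈ Set.Icc (-b) b, ‖f y t - f x t - (y - x) • D x t‖ ≤ ε * |y - x| := by
    intro ε hε
    have hUC := ((isCompact_Icc.prod isCompact_Icc).uniformContinuousOn_of_continuous hDc)
    rw [Metric.uniformContinuousOn_iff] at hUC
    obtain ⟨δ, hδpos, hδ⟩ := hUC ε hε
    refine ⟨δ, hδpos, fun y hy hyx t ht => ?_⟩
    set J := Set.Icc (-b) b ∩ Metric.ball x δ with hJ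
    have hJconv : Convex ℝ J := (convex_Icc _ _).inter (convex_ball x δ)
    have hderiv : ∀ s ∈ J, HasDerivWithinAt (fun s' => f s' t - s' • D x t)
        (D s t - D x t) J s := by
      intro s hs
      have h1 : HasDerivWithinAt (fun s' : ℝ => s' • D x t) (D x t) J s := by
        simpa using ((hasDerivAt_id s).smul_const (D x t)).hasDerivWithinAt
      exact ((hD s hs.1 t ht).mono Set.inter_subset_left).sub h1
    have hbound : ∀ s ∈ J, ‖D s t - D x t‖ ≤ ε := by
      intro s hs
      have hd := hδ (s, t) (Set.mk_mem_prod hs.1 ht) (x, t) (Set.mk_mem_prod hx ht) ?_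
      · rw [dist_eq_norm] at hd; exact le_of_lt hd
      · rw [Prod.dist_eq]; simp only [dist_self]
        have : dist s x < δ := hs.2
        simpa [max_eq_left dist_nonneg] using this
    have hxJ : x ∈ J := ⟨hx, Metric.mem_ball_self hδpos⟩
    have hyJ : y ∈ J := ⟨hy, by rwa [Metric.mem_ball, Real.dist_eq]⟩
    have := hJconv.norm_image_sub_le_of_norm_hasDerivWithin_le hderiv hbound hxJ hyJ
    have heq : (f y t - y • D x t) - (f x t - x • D x t)
        = f y t - f x t - (y - x) • D x t := by
      rw [sub_smul]; abel
    rw [heq] at this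
    simpa [Real.norm_eq_abs] using this
  have hbb : |x - 0| ≤ b + 1 := by
    rcases hx with ⟨h1, h2⟩
    rw [sub_zero, abs_le]; constructor <;> linarith
  have hB : HasDerivWithinAt (fun y => ∫ t in (0:ℝ)..x, (f y t - f x t))
      (∫ t in (0:ℝ)..x, D x t) (Set.Icc (-b) b) x := by
    rw [hasDerivWithinAt_iff_isLittleO, Asymptotics.isLittleO_iff]
    intro c hc
    have hbpos : (0:ℝ) < b + 1 := by linarith
    have hεpos : (0:ℝ) < c / (b + 1) := div_pos hc hbpos
    obtain ⟨δ, hδpos, hδ⟩ := hMV2 _ hεpos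
    filter_upwards [self_mem_nhdsWithin,
      mem_nhdsWithin_of_mem_nhds (Metric.ball_mem_nhds x hδpos)] with y hyI hyb
    have hyx : |y - x| < δ := by rwa [Metric.mem_ball, Real.dist_eq] at hyb
    have hint1 : IntervalIntegrable (fun t => f y t - f x t) volume 0 x :=
      (hInt y hyI 0 h0 x hx).sub (hInt x hx 0 h0 x hx)
    have hint2 : IntervalIntegrable (fun t => (y - x) • D x t) volume 0 x := hDInt.smul (y - x)
    have hre : (∫ t in (0:ℝ)..x, (f y t - f x t)) - (∫ t in (0:ℝ)..x, (f x t - f x t))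
        - (y - x) • ∫ t in (0:ℝ)..x, D x t
        = ∫ t in (0:ℝ)..x, (f y t - f x t - (y - x) • D x t) := by
      rw [intervalIntegral.integral_sub hint1 hint2]
      simp [intervalIntegral.integral_smul]
    rw [hre]
    have hnorm := intervalIntegral.norm_integral_le_of_norm_le_const
      (C := (c / (b + 1)) * |y - x|)
      (f := fun t => f y t - f x t - (y - x) • D x t) (a := 0) (b := x) ?_
    · calc ‖∫ t in (0:ℝ)..x, (f y t - f x t - (y - x) • D x t)‖
          ≤ (c / (b + 1)) * |y - x| * |x - 0| := hnorm
        _ ≤ (c / (b + 1)) * |y - x| * (b + 1) := by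
            apply mul_le_mul_of_nonneg_left hbb (by positivity)
        _ = c * ‖y - x‖ := by rw [Real.norm_eq_abs]; field_simp
    · intro t ht
      have htI : t ∈ Set.Icc (-b) b :=
        Set.uIoc_subset_uIcc.trans (Set.uIcc_subset_Icc h0 hx) ht
      exact hδ y hyI hyx t htI
  have hR : HasDerivWithinAt (fun y => ∫ t in x..y, (f y t - f x t)) 0 (Set.Icc (-b) b) x := by
    rw [hasDerivWithinAt_iff_isLittleO, Asymptotics.isLittleO_iff]
    intro c hc
    have hMpos : (0:ℝ) < M + 1 := by linarith
    have hδpos : (0:ℝ) < c / (M + 1) := div_pos hc hMpos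
    filter_upwards [self_mem_nhdsWithin,
      mem_nhdsWithin_of_mem_nhds (Metric.ball_mem_nhds x hδpos)] with y hyI hyb
    have hyx : |y - x| < c / (M + 1) := by rwa [Metric.mem_ball, Real.dist_eq] at hyb
    have hnorm := intervalIntegral.norm_integral_le_of_norm_le_const
      (C := M * |y - x|) (f := fun t => f y t - f x t) (a := x) (b := y) ?_
    · simp only [intervalIntegral.integral_same, sub_zero, smul_zero, sub_zero]
      calc ‖∫ t in x..y, (f y t - f x t)‖ ≤ M * |y - x| * |y - x| := hnorm
        _ ≤ c * ‖y - x‖ := by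
            rw [Real.norm_eq_abs]
            have h1 : (M + 1) * |y - x| ≤ c := by
              have h2 := mul_le_mul_of_nonneg_left (le_of_lt hyx) (le_of_lt hMpos)
              calc (M + 1) * |y - x| ≤ (M + 1) * (c / (M + 1)) := h2
                _ = c := by field_simp
            nlinarith [abs_nonneg (y - x)]
    · intro t ht
      have htI : t ∈ Set.Icc (-b) b :=
        Set.uIoc_subset_uIcc.trans (Set.uIcc_subset_Icc hx hyI) ht
      have := hMV t htI y hyI
      rwa [Real.norm_eq_abs] at this
  have hEq : ∀ y ∈ Set.Icc (-b) b, (∫ t in (0:ℝ)..y, f y t)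
      = (∫ t in (0:ℝ)..y, f x t) + (∫ t in (0:ℝ)..x, (f y t - f x t))
        + (∫ t in x..y, (f y t - f x t)) := by
    intro y hy
    have h1 : IntervalIntegrable (fun t => f y t - f x t) volume 0 x :=
      (hInt y hy 0 h0 x hx).sub (hInt x hx 0 h0 x hx)
    have h2 : IntervalIntegrable (fun t => f y t - f x t) volume x y :=
      (hInt y hy x hx y hy).sub (hInt x hx x hx y hy)
    rw [add_assoc, intervalIntegral.integral_add_adjacent_intervals h1 h2,
      ← intervalIntegral.integral_add (hInt x hx 0 h0 y hy)
        ((hInt y hy 0 h0 y hy).sub (hInt x hx 0 h0 y hy))]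
    congr 1; ext t; ring
  have hsum := (hA.add hB).add hR
  rw [add_zero] at hsum
  exact hsum.congr hEq (hEq x hx)

end AuxTransmutation

theorem cosine_type_solution
    (b : ℝ) (hb : 0 < b) (q : ℝ → ℂ) (hq : ContDiffOn ℝ 1 q (Set.Icc (-b) b))
    (h : ℂ) (K : ℝ → ℝ → ℂ) (hK : IsTransmutationKernel b q h K) (ω : ℂ) :
    ContDiffOn ℝ 2
      (fun x : ℝ => Complex.cos (ω * x) + ∫ t in (0:ℝ)..x, (K x t + K x (-t)) * Complex.cos (ω * t))
      (Set.Icc (-b) b) ∧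
    (∀ x ∈ Set.Icc (-b) b,
      derivWithin
          (derivWithin
            (fun y : ℝ => Complex.cos (ω * y) + ∫ t in (0:ℝ)..y, (K y t + K y (-t)) * Complex.cos (ω * t))
            (Set.Icc (-b) b))
          (Set.Icc (-b) b) x
        - q x * (Complex.cos (ω * x) + ∫ t in (0:ℝ)..x, (K x t + K x (-t)) * Complex.cos (ω * t))
        + ω ^ 2 * (Complex.cos (ω * x) + ∫ t in (0:ℝ)..x, (K x t + K x (-t)) * Complex.cos (ω * t))
        = 0) ∧
    (Complex.cos (ω * (0:ℝ)) + ∫ t in (0:ℝ)..(0:ℝ), (K 0 t + K 0 (-t)) * Complex.cos (ω * t)) = 1 ∧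
    derivWithin
        (fun y : ℝ => Complex.cos (ω * y) + ∫ t in (0:ℝ)..y, (K y t + K y (-t)) * Complex.cos (ω * t))
        (Set.Icc (-b) b) 0 = h := by
  obtain ⟨hKC2, hPDE, hGD, hGA⟩ := hK
  have hb' : (-b) < b := by linarith
  have hI : UniqueDiffOn ℝ (Set.Icc (-b) b) := uniqueDiffOn_Icc hb'
  have h0 : (0:ℝ) ∈ Set.Icc (-b) b := ⟨by linarith, by linarith⟩
  have hone : (1 : WithTop ℕ∞) ≤ 2 := by norm_num
  have hnegmap : Set.MapsTo (fun p : ℝ × ℝ => (p.1, -p.2))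
      (Set.Icc (-b) b ×ˢ Set.Icc (-b) b) (Set.Icc (-b) b ×ˢ Set.Icc (-b) b) :=
    fun p hp => Set.mk_mem_prod hp.1 (negMemIcc hp.2)
  -- casts of smoothness indices
  have hKC2' : ContDiffOn ℝ ((1:WithTop ℕ∞) + 1) (fun p : ℝ × ℝ => K p.1 p.2)
      (Set.Icc (-b) b ×ˢ Set.Icc (-b) b) := by
    rw [show ((1:WithTop ℕ∞) + 1) = 2 from by norm_num]; exact hKC2
  have hKxC1 : ContDiffOn ℝ 1 (fun p : ℝ × ℝ => KXpartial b K p.1 p.2)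
      (Set.Icc (-b) b ×ˢ Set.Icc (-b) b) := contDiffOn_KX hb hKC2'
  have hKtC1 : ContDiffOn ℝ 1 (fun p : ℝ × ℝ => KTpartial b K p.1 p.2)
      (Set.Icc (-b) b ×ˢ Set.Icc (-b) b) := contDiffOn_KT hb hKC2'
  have hKxC1' : ContDiffOn ℝ ((0:WithTop ℕ∞) + 1) (fun p : ℝ × ℝ => KXpartial b K p.1 p.2)
      (Set.Icc (-b) b ×ˢ Set.Icc (-b) b) := by
    rw [show ((0:WithTop ℕ∞) + 1) = 1 from by norm_num]; exact hKxC1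
  have hKtC1' : ContDiffOn ℝ ((0:WithTop ℕ∞) + 1) (fun p : ℝ × ℝ => KTpartial b K p.1 p.2)
      (Set.Icc (-b) b ×ˢ Set.Icc (-b) b) := by
    rw [show ((0:WithTop ℕ∞) + 1) = 1 from by norm_num]; exact hKtC1
  -- continuity of assorted maps
  have hcosc : Continuous (fun p : ℝ × ℝ => Complex.cos (ω * (p.2 : ℂ))) :=
    Complex.continuous_cos.comp (continuous_const.mul (Complex.continuous_ofReal.comp continuous_snd))
  have hnegc : Continuous (fun p : ℝ × ℝ => (p.1, -p.2)) :=
    continuous_fst.prodMk continuous_snd.neg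
  have hfc : ContinuousOn
      (fun p : ℝ × ℝ => (K p.1 p.2 + K p.1 (-p.2)) * Complex.cos (ω * (p.2 : ℂ)))
      (Set.Icc (-b) b ×ˢ Set.Icc (-b) b) :=
    ((hKC2.continuousOn.add ((hKC2.continuousOn.comp hnegc.continuousOn hnegmap))).mul
      hcosc.continuousOn)
  have hDc : ContinuousOn
      (fun p : ℝ × ℝ => (KXpartial b K p.1 p.2 + KXpartial b K p.1 (-p.2)) *
        Complex.cos (ω * (p.2 : ℂ)))
      (Set.Icc (-b) b ×ˢ Set.Icc (-b) b) :=
    ((hKxC1.continuousOn.add ((hKxC1.continuousOn.comp hnegc.continuousOn hnegmap))).mul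
      hcosc.continuousOn)
  have hKxxC0 : ContinuousOn (fun p : ℝ × ℝ => d2x b K p.1 p.2)
      (Set.Icc (-b) b ×ˢ Set.Icc (-b) b) := (contDiffOn_KX hb hKxC1').continuousOn
  have hKttC0 : ContinuousOn (fun p : ℝ × ℝ => d2t b K p.1 p.2)
      (Set.Icc (-b) b ×ˢ Set.Icc (-b) b) := (contDiffOn_KT hb hKtC1').continuousOn
  have hD2c : ContinuousOn
      (fun p : ℝ × ℝ => (d2x b K p.1 p.2 + d2x b K p.1 (-p.2)) * Complex.cos (ω * (p.2 : ℂ)))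
      (Set.Icc (-b) b ×ˢ Set.Icc (-b) b) :=
    ((hKxxC0.add (hKxxC0.comp hnegc.continuousOn hnegmap)).mul hcosc.continuousOn)
  -- slice derivatives
  have hD1 : ∀ x ∈ Set.Icc (-b) b, ∀ t ∈ Set.Icc (-b) b,
      HasDerivWithinAt (fun x' => (K x' t + K x' (-t)) * Complex.cos (ω * (t : ℂ)))
        ((KXpartial b K x t + KXpartial b K x (-t)) * Complex.cos (ω * (t : ℂ)))
        (Set.Icc (-b) b) x := fun x hx t ht =>
    ((slice_hasDerivX hb hKC2 hone hx ht).add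
      (slice_hasDerivX hb hKC2 hone hx (negMemIcc ht))).mul_const _
  have hD2 : ∀ x ∈ Set.Icc (-b) b, ∀ t ∈ Set.Icc (-b) b,
      HasDerivWithinAt
        (fun x' => (KXpartial b K x' t + KXpartial b K x' (-t)) * Complex.cos (ω * (t : ℂ)))
        ((d2x b K x t + d2x b K x (-t)) * Complex.cos (ω * (t : ℂ)))
        (Set.Icc (-b) b) x := fun x hx t ht =>
    ((slice_hasDerivX hb hKxC1 le_rfl hx ht).add
      (slice_hasDerivX hb hKxC1 le_rfl hx (negMemIcc ht))).mul_const _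
  -- FTC for q
  have hqc : ContinuousOn q (Set.Icc (-b) b) := hq.continuousOn
  have hQFTC : ∀ x ∈ Set.Icc (-b) b,
      HasDerivWithinAt (fun y => ∫ s in (0:ℝ)..y, q s) (q x) (Set.Icc (-b) b) x := by
    intro x hx
    haveI : Fact (x ∈ Set.Icc (-b) b) := ⟨hx⟩
    exact intervalIntegral.integral_hasDerivWithinAt_right
      ((hqc.mono (Set.uIcc_subset_Icc h0 hx)).intervalIntegrable)
      (hqc.stronglyMeasurableAtFilter_nhdsWithin measurableSet_Icc x)
      (hqc x hx)
  -- derivatives of cos/sin factors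
  have hcosD : ∀ y : ℝ, HasDerivAt (fun s : ℝ => Complex.cos (ω * (s : ℂ)))
      (-Complex.sin (ω * (y : ℂ)) * ω) y := by
    intro y
    have h2 := (Complex.hasDerivAt_cos (ω * (y : ℂ))).comp (↑y : ℂ)
      ((hasDerivAt_id ((y : ℝ) : ℂ)).const_mul ω)
    have h3 : HasDerivAt (fun z : ℂ => Complex.cos (ω * z))
        (-Complex.sin (ω * (y : ℂ)) * ω) (↑y : ℂ) := by
      simpa [Function.comp_def, mul_comm] using h2
    exact h3.comp_ofReal
  have hsinD : ∀ y : ℝ, HasDerivAt (fun s : ℝ => Complex.sin (ω * (s : ℂ)))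
      (Complex.cos (ω * (y : ℂ)) * ω) y := by
    intro y
    have h2 := (Complex.hasDerivAt_sin (ω * (y : ℂ))).comp (↑y : ℂ)
      ((hasDerivAt_id ((y : ℝ) : ℂ)).const_mul ω)
    have h3 : HasDerivAt (fun z : ℂ => Complex.sin (ω * z))
        (Complex.cos (ω * (y : ℂ)) * ω) (↑y : ℂ) := by
      simpa [Function.comp_def, mul_comm] using h2
    exact h3.comp_ofReal
  -- the workhorse applications
  have hw1 : ∀ x ∈ Set.Icc (-b) b,
      HasDerivWithinAt (fun y => ∫ t in (0:ℝ)..y, (K y t + K y (-t)) * Complex.cos (ω * (t : ℂ)))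
        ((K x x + K x (-x)) * Complex.cos (ω * (x : ℂ)) +
          ∫ t in (0:ℝ)..x, (KXpartial b K x t + KXpartial b K x (-t)) * Complex.cos (ω * (t : ℂ)))
        (Set.Icc (-b) b) x :=
    fun x hx => key_param_deriv hb
      (f := fun y t => (K y t + K y (-t)) * Complex.cos (ω * (t : ℂ)))
      (D := fun x t => (KXpartial b K x t + KXpartial b K x (-t)) * Complex.cos (ω * (t : ℂ)))
      hfc hD1 hDc hx
  have hw2 : ∀ x ∈ Set.Icc (-b) b,
      HasDerivWithinAt
        (fun y => ∫ t in (0:ℝ)..y,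
          (KXpartial b K y t + KXpartial b K y (-t)) * Complex.cos (ω * (t : ℂ)))
        ((KXpartial b K x x + KXpartial b K x (-x)) * Complex.cos (ω * (x : ℂ)) +
          ∫ t in (0:ℝ)..x, (d2x b K x t + d2x b K x (-t)) * Complex.cos (ω * (t : ℂ)))
        (Set.Icc (-b) b) x :=
    fun x hx => key_param_deriv hb
      (f := fun y t => (KXpartial b K y t + KXpartial b K y (-t)) * Complex.cos (ω * (t : ℂ)))
      (D := fun x t => (d2x b K x t + d2x b K x (-t)) * Complex.cos (ω * (t : ℂ)))
      hDc hD2 hD2c hx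
  -- convenience lemma
  have congr_deriv' : ∀ {g : ℝ → ℂ} {v v' : ℂ} {s : Set ℝ} {z : ℝ},
      HasDerivWithinAt g v s z → v = v' → HasDerivWithinAt g v' s z := by
    intro g v v' s z hg hv; rw [← hv]; exact hg
  -- abbreviations
  set c : ℝ → ℂ := fun y : ℝ =>
    Complex.cos (ω * (y:ℂ)) + ∫ t in (0:ℝ)..y, (K y t + K y (-t)) * Complex.cos (ω * (t:ℂ))
    with hcdef
  set c₁ : ℝ → ℂ := fun y : ℝ =>
    -Complex.sin (ω * (y:ℂ)) * ω +
      ((h + (1/2 : ℂ) * ∫ s in (0:ℝ)..y, q s) * Complex.cos (ω * (y:ℂ)) +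
        ∫ t in (0:ℝ)..y, (KXpartial b K y t + KXpartial b K y (-t)) * Complex.cos (ω * (t:ℂ)))
    with hc1def
  have hKK : ∀ x ∈ Set.Icc (-b) b,
      K x x + K x (-x) = h + (1/2 : ℂ) * ∫ s in (0:ℝ)..x, q s := by
    intro x hx; rw [hGD x hx, hGA x hx]; ring
  have hc' : ∀ x ∈ Set.Icc (-b) b, HasDerivWithinAt c (c₁ x) (Set.Icc (-b) b) x := by
    intro x hx
    have h1 := ((hcosD x).hasDerivWithinAt).add (hw1 x hx)
    refine congr_deriv' h1 ?_
    show _ = c₁ x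
    rw [hc1def]
    simp only
    rw [hKK x hx]
  have hEqOn : Set.EqOn (derivWithin c (Set.Icc (-b) b)) c₁ (Set.Icc (-b) b) :=
    fun y hy => (hc' y hy).derivWithin (hI y hy)
  have hc₁' : ∀ x ∈ Set.Icc (-b) b, HasDerivWithinAt c₁
      (-(Complex.cos (ω * (x:ℂ)) * ω) * ω +
        (((0 : ℂ) + (1/2 : ℂ) * q x) * Complex.cos (ω * (x:ℂ)) +
          (h + (1/2 : ℂ) * ∫ s in (0:ℝ)..x, q s) * (-Complex.sin (ω * (x:ℂ)) * ω) +
         ((KXpartial b K x x + KXpartial b K x (-x)) * Complex.cos (ω * (x:ℂ)) +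
          ∫ t in (0:ℝ)..x, (d2x b K x t + d2x b K x (-t)) * Complex.cos (ω * (t:ℂ)))))
      (Set.Icc (-b) b) x := by
    intro x hx
    have hA := (((hsinD x).neg).mul_const ω).hasDerivWithinAt (s := Set.Icc (-b) b)
    have hB := ((hasDerivWithinAt_const x (Set.Icc (-b) b) h).add
      ((hQFTC x hx).const_mul ((1:ℂ)/2))).mul ((hcosD x).hasDerivWithinAt)
    have hC := hw2 x hx
    have htot := hA.add (hB.add hC)
    rw [hc1def]
    refine congr_deriv' htot ?_
    simp only [Pi.add_apply, Pi.sub_apply]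
  have hODE : ∀ x ∈ Set.Icc (-b) b,
      derivWithin c₁ (Set.Icc (-b) b) x = q x * c x - ω ^ 2 * c x := by
    intro x hx
    have hval := (hc₁' x hx).derivWithin (hI x hx)
    rw [hval]
    -- continuity of t-slices
    have hmapt : Set.MapsTo (fun t : ℝ => (x, t)) (Set.Icc (-b) b)
        (Set.Icc (-b) b ×ˢ Set.Icc (-b) b) := fun t ht => Set.mk_mem_prod hx ht
    have hmaptn : Set.MapsTo (fun t : ℝ => (x, -t)) (Set.Icc (-b) b)
        (Set.Icc (-b) b ×ˢ Set.Icc (-b) b) := fun t ht => Set.mk_mem_prod hx (negMemIcc ht)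
    have hc1c : Continuous (fun t : ℝ => ((x : ℝ), t)) := by fun_prop
    have hc2c : Continuous (fun t : ℝ => ((x : ℝ), -t)) := by fun_prop
    have cK : ContinuousOn (fun t => K x t) (Set.Icc (-b) b) :=
      hKC2.continuousOn.comp hc1c.continuousOn hmapt
    have cKn : ContinuousOn (fun t => K x (-t)) (Set.Icc (-b) b) :=
      hKC2.continuousOn.comp hc2c.continuousOn hmaptn
    have cKT : ContinuousOn (fun t => KTpartial b K x t) (Set.Icc (-b) b) :=
      hKtC1.continuousOn.comp hc1c.continuousOn hmapt
    have cKTn : ContinuousOn (fun t => KTpartial b K x (-t)) (Set.Icc (-b) b) :=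
      hKtC1.continuousOn.comp hc2c.continuousOn hmaptn
    have cd2t : ContinuousOn (fun t => d2t b K x t) (Set.Icc (-b) b) :=
      hKttC0.comp hc1c.continuousOn hmapt
    have cd2tn : ContinuousOn (fun t => d2t b K x (-t)) (Set.Icc (-b) b) :=
      hKttC0.comp hc2c.continuousOn hmaptn
    have ccos : Continuous (fun t : ℝ => Complex.cos (ω * (t:ℂ))) :=
      Complex.continuous_cos.comp (continuous_const.mul Complex.continuous_ofReal)
    have csin : Continuous (fun t : ℝ => Complex.sin (ω * (t:ℂ))) :=
      Complex.continuous_sin.comp (continuous_const.mul Complex.continuous_ofReal)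
    -- derivative of W
    have hWd : ∀ t ∈ Set.Icc (-b) b, HasDerivWithinAt
        (fun t' => (KTpartial b K x t' - KTpartial b K x (-t')) * Complex.cos (ω * (t':ℂ)) +
          ω * ((K x t' + K x (-t')) * Complex.sin (ω * (t':ℂ))))
        ((d2t b K x t + d2t b K x (-t)) * Complex.cos (ω * (t:ℂ)) +
          ω ^ 2 * ((K x t + K x (-t)) * Complex.cos (ω * (t:ℂ))))
        (Set.Icc (-b) b) t := by
      intro t ht
      have a1 : HasDerivWithinAt (fun t' => KTpartial b K x t') (d2t b K x t)
          (Set.Icc (-b) b) t := slice_hasDerivT hb hKtC1 le_rfl hx ht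
      have a2 : HasDerivWithinAt (fun t' => KTpartial b K x (-t')) (-(d2t b K x (-t)))
          (Set.Icc (-b) b) t := by
        have a2' : HasDerivWithinAt (fun t' => KTpartial b K x t') (d2t b K x (-t))
            (Set.Icc (-b) b) (-t) := slice_hasDerivT hb hKtC1 le_rfl hx (negMemIcc ht)
        have := HasDerivWithinAt.scomp t a2' ((hasDerivAt_neg t).hasDerivWithinAt)
          (fun u hu => negMemIcc hu)
        simpa [Function.comp_def] using this
      have a3 : HasDerivWithinAt (fun t' => K x t') (KTpartial b K x t)
          (Set.Icc (-b) b) t := slice_hasDerivT hb hKC2 hone hx ht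
      have a4 : HasDerivWithinAt (fun t' => K x (-t')) (-(KTpartial b K x (-t)))
          (Set.Icc (-b) b) t := by
        have a4' : HasDerivWithinAt (fun t' => K x t') (KTpartial b K x (-t))
            (Set.Icc (-b) b) (-t) := slice_hasDerivT hb hKC2 hone hx (negMemIcc ht)
        have := HasDerivWithinAt.scomp t a4' ((hasDerivAt_neg t).hasDerivWithinAt)
          (fun u hu => negMemIcc hu)
        simpa [Function.comp_def] using this
      have a5 := ((a1.sub a2).mul ((hcosD t).hasDerivWithinAt)).add
        ((((a3.add a4).mul ((hsinD t).hasDerivWithinAt))).const_mul ω)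
      refine congr_deriv' a5 ?_
      simp only [Pi.add_apply, Pi.sub_apply]; ring
    -- FTC on [0,x]
    have hW'int : IntervalIntegrable
        (fun t => (d2t b K x t + d2t b K x (-t)) * Complex.cos (ω * (t:ℂ)) +
          ω ^ 2 * ((K x t + K x (-t)) * Complex.cos (ω * (t:ℂ)))) volume 0 x := by
      apply ContinuousOn.intervalIntegrable
      apply ContinuousOn.mono _ (Set.uIcc_subset_Icc h0 hx)
      exact ((cd2t.add cd2tn).mul ccos.continuousOn).add
        (continuousOn_const.mul ((cK.add cKn).mul ccos.continuousOn))
    have hFTC : (∫ t in (0:ℝ)..x,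
          ((d2t b K x t + d2t b K x (-t)) * Complex.cos (ω * (t:ℂ)) +
            ω ^ 2 * ((K x t + K x (-t)) * Complex.cos (ω * (t:ℂ)))))
        = ((KTpartial b K x x - KTpartial b K x (-x)) * Complex.cos (ω * (x:ℂ)) +
            ω * ((K x x + K x (-x)) * Complex.sin (ω * (x:ℂ)))) -
          ((KTpartial b K x 0 - KTpartial b K x (-0)) * Complex.cos (ω * ((0:ℝ):ℂ)) +
            ω * ((K x 0 + K x (-0)) * Complex.sin (ω * ((0:ℝ):ℂ)))) := by
      refine intervalIntegral.integral_eq_sub_of_hasDeriv_right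
        (f := fun t' => (KTpartial b K x t' - KTpartial b K x (-t')) * Complex.cos (ω * (t':ℂ)) +
          ω * ((K x t' + K x (-t')) * Complex.sin (ω * (t':ℂ)))) ?_ ?_ hW'int
      · apply ContinuousOn.mono _ (Set.uIcc_subset_Icc h0 hx)
        exact ((cKT.sub cKTn).mul ccos.continuousOn).add
          (continuousOn_const.mul ((cK.add cKn).mul csin.continuousOn))
      · intro t ht
        have ht1 : -b < t := lt_of_le_of_lt (le_min (by linarith) hx.1) ht.1
        have ht2 : t < b := lt_of_lt_of_le ht.2 (max_le (by linarith) hx.2)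
        have hnb : Set.Icc (-b) b ∈ nhds t := Icc_mem_nhds ht1 ht2
        exact ((hWd t ⟨ht1.le, ht2.le⟩).hasDerivAt hnb).hasDerivWithinAt
    -- split integral using the PDE
    have hint1 : IntervalIntegrable
        (fun t => (q x - ω ^ 2) * ((K x t + K x (-t)) * Complex.cos (ω * (t:ℂ)))) volume 0 x :=
      ((((cK.add cKn).mul ccos.continuousOn).mono
        (Set.uIcc_subset_Icc h0 hx)).intervalIntegrable).const_mul _
    have hIcongr : Set.EqOn
        (fun t => (d2x b K x t + d2x b K x (-t)) * Complex.cos (ω * (t:ℂ)))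
        (fun t => (q x - ω ^ 2) * ((K x t + K x (-t)) * Complex.cos (ω * (t:ℂ))) +
          ((d2t b K x t + d2t b K x (-t)) * Complex.cos (ω * (t:ℂ)) +
            ω ^ 2 * ((K x t + K x (-t)) * Complex.cos (ω * (t:ℂ)))))
        (Set.uIcc 0 x) := by
      intro t ht
      have htI := Set.uIcc_subset_Icc h0 hx ht
      have p1 := hPDE x hx t htI
      have p2 := hPDE x hx (-t) (negMemIcc htI)
      simp only
      linear_combination Complex.cos (ω * (t:ℂ)) * p1 + Complex.cos (ω * (t:ℂ)) * p2
    have hsplit : (∫ t in (0:ℝ)..x, (d2x b K x t + d2x b K x (-t)) * Complex.cos (ω * (t:ℂ)))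
        = (q x - ω ^ 2) * (∫ t in (0:ℝ)..x, (K x t + K x (-t)) * Complex.cos (ω * (t:ℂ))) +
          (∫ t in (0:ℝ)..x,
            ((d2t b K x t + d2t b K x (-t)) * Complex.cos (ω * (t:ℂ)) +
              ω ^ 2 * ((K x t + K x (-t)) * Complex.cos (ω * (t:ℂ))))) := by
      rw [intervalIntegral.integral_congr hIcongr,
        intervalIntegral.integral_add hint1 hW'int, intervalIntegral.integral_const_mul]
    rw [hsplit, hFTC]
    -- diagonal identities E1, E2
    have hLd := ((hKC2.differentiableOn (zero_lt_one.trans_le hone).ne') (x, x) (Set.mk_mem_prod hx hx)).hasFDerivWithinAt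
    have hg1 : HasDerivWithinAt (fun y : ℝ => (y, y)) ((1:ℝ), (1:ℝ)) (Set.Icc (-b) b) x :=
      ((hasDerivAt_id x).prodMk (hasDerivAt_id x)).hasDerivWithinAt
    have hdiag := HasFDerivWithinAt.comp_hasDerivWithinAt (f := fun y : ℝ => (y, y)) x hLd hg1
      (fun y hy => Set.mk_mem_prod hy hy)
    have he1 : KXpartial b K x x = fderivWithin ℝ (fun p : ℝ × ℝ => K p.1 p.2)
        (Set.Icc (-b) b ×ˢ Set.Icc (-b) b) (x, x) ((1:ℝ), (0:ℝ)) :=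
      (sliceX hKC2 hone hx hx).derivWithin (hI x hx)
    have he2 : KTpartial b K x x = fderivWithin ℝ (fun p : ℝ × ℝ => K p.1 p.2)
        (Set.Icc (-b) b ×ˢ Set.Icc (-b) b) (x, x) ((0:ℝ), (1:ℝ)) :=
      (sliceT hKC2 hone hx hx).derivWithin (hI x hx)
    have hsum1 : fderivWithin ℝ (fun p : ℝ × ℝ => K p.1 p.2)
        (Set.Icc (-b) b ×ˢ Set.Icc (-b) b) (x, x) ((1:ℝ), (1:ℝ))
        = KXpartial b K x x + KTpartial b K x x := by
      rw [he1, he2, ← ContinuousLinearMap.map_add]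
      congr 1
      norm_num [Prod.ext_iff]
    have hd1v : derivWithin (fun y : ℝ => K y y) (Set.Icc (-b) b) x
        = fderivWithin ℝ (fun p : ℝ × ℝ => K p.1 p.2)
          (Set.Icc (-b) b ×ˢ Set.Icc (-b) b) (x, x) ((1:ℝ), (1:ℝ)) :=
      hdiag.derivWithin (hI x hx)
    have hdiag2 : HasDerivWithinAt (fun y : ℝ => K y y) ((0:ℂ) + 1 / 2 * q x)
        (Set.Icc (-b) b) x := by
      have hbase := (hasDerivWithinAt_const x (Set.Icc (-b) b) (h / 2)).add
        ((hQFTC x hx).const_mul ((1:ℂ) / 2))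
      exact hbase.congr (fun y hy => hGD y hy) (hGD x hx)
    have E1 : KXpartial b K x x + KTpartial b K x x = (0:ℂ) + 1 / 2 * q x := by
      rw [← hsum1, ← hd1v]
      exact hdiag2.derivWithin (hI x hx)
    have hLd2 := ((hKC2.differentiableOn (zero_lt_one.trans_le hone).ne') (x, -x)
      (Set.mk_mem_prod hx (negMemIcc hx))).hasFDerivWithinAt
    have hg2 : HasDerivWithinAt (fun y : ℝ => (y, -y)) ((1:ℝ), (-1:ℝ)) (Set.Icc (-b) b) x :=
      ((hasDerivAt_id x).prodMk ((hasDerivAt_id x).neg)).hasDerivWithinAt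
    have hdiagA := HasFDerivWithinAt.comp_hasDerivWithinAt (f := fun y : ℝ => (y, -y)) x hLd2 hg2
      (fun y hy => Set.mk_mem_prod hy (negMemIcc hy))
    have he1' : KXpartial b K x (-x) = fderivWithin ℝ (fun p : ℝ × ℝ => K p.1 p.2)
        (Set.Icc (-b) b ×ˢ Set.Icc (-b) b) (x, -x) ((1:ℝ), (0:ℝ)) :=
      (sliceX hKC2 hone hx (negMemIcc hx)).derivWithin (hI x hx)
    have he2' : KTpartial b K x (-x) = fderivWithin ℝ (fun p : ℝ × ℝ => K p.1 p.2)
        (Set.Icc (-b) b ×ˢ Set.Icc (-b) b) (x, -x) ((0:ℝ), (1:ℝ)) :=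
      (sliceT hKC2 hone hx (negMemIcc hx)).derivWithin (hI (-x) (negMemIcc hx))
    have hsum2 : fderivWithin ℝ (fun p : ℝ × ℝ => K p.1 p.2)
        (Set.Icc (-b) b ×ˢ Set.Icc (-b) b) (x, -x) ((1:ℝ), (-1:ℝ))
        = KXpartial b K x (-x) - KTpartial b K x (-x) := by
      rw [he1', he2', ← ContinuousLinearMap.map_sub]
      congr 1
      norm_num [Prod.ext_iff]
    have hd2v : derivWithin (fun y : ℝ => K y (-y)) (Set.Icc (-b) b) x
        = fderivWithin ℝ (fun p : ℝ × ℝ => K p.1 p.2)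
          (Set.Icc (-b) b ×ˢ Set.Icc (-b) b) (x, -x) ((1:ℝ), (-1:ℝ)) :=
      hdiagA.derivWithin (hI x hx)
    have hdiagA2 : HasDerivWithinAt (fun y : ℝ => K y (-y)) (0:ℂ) (Set.Icc (-b) b) x :=
      (hasDerivWithinAt_const x (Set.Icc (-b) b) (h / 2)).congr
        (fun y hy => hGA y hy) (hGA x hx)
    have E2 : KXpartial b K x (-x) - KTpartial b K x (-x) = 0 := by
      rw [← hsum2, ← hd2v]
      exact hdiagA2.derivWithin (hI x hx)
    have hcx : c x = Complex.cos (ω * (x:ℂ)) +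
        ∫ t in (0:ℝ)..x, (K x t + K x (-t)) * Complex.cos (ω * (t:ℂ)) := by rw [hcdef]
    rw [hcx]
    simp only [neg_zero, Complex.ofReal_zero, mul_zero, Complex.sin_zero, Complex.cos_zero]
    linear_combination Complex.cos (ω * (x:ℂ)) * E1 + Complex.cos (ω * (x:ℂ)) * E2 +
      (ω * Complex.sin (ω * (x:ℂ))) * (hKK x hx)
  -- final assembly
  have hdiffc : DifferentiableOn ℝ c (Set.Icc (-b) b) :=
    fun y hy => (hc' y hy).differentiableWithinAt
  have hdiffc1 : DifferentiableOn ℝ c₁ (Set.Icc (-b) b) :=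
    fun y hy => (hc₁' y hy).differentiableWithinAt
  have hccont : ContinuousOn c (Set.Icc (-b) b) := hdiffc.continuousOn
  refine ⟨?_, ?_, ?_, ?_⟩
  · rw [show ((2 : WithTop ℕ∞)) = 1 + 1 from by norm_num, contDiffOn_succ_iff_derivWithin hI]
    refine ⟨hdiffc, ?_, ?_⟩
    · intro h'; exact absurd h' (by norm_num)
    · have hc1C1 : ContDiffOn ℝ 1 c₁ (Set.Icc (-b) b) := by
        rw [show ((1 : WithTop ℕ∞)) = 0 + 1 from by norm_num,
          contDiffOn_succ_iff_derivWithin hI]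
        refine ⟨hdiffc1, ?_, ?_⟩
        · intro h'; exact absurd h' (by norm_num)
        · rw [contDiffOn_zero]
          exact ContinuousOn.congr
            ((hqc.mul hccont).sub (continuousOn_const.mul hccont))
            (fun y hy => hODE y hy)
      exact hc1C1.congr (fun y hy => hEqOn hy)
  · intro x hx
    rw [derivWithin_congr hEqOn (hEqOn hx), hODE x hx]
    have hcx : c x = Complex.cos (ω * (x:ℂ)) +
        ∫ t in (0:ℝ)..x, (K x t + K x (-t)) * Complex.cos (ω * (t:ℂ)) := by rw [hcdef]
    rw [hcx]; ring
  · simp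
  · rw [hEqOn h0, hc1def]
    simp
end

section
/- For every ω ∈ ℂ with ω ≠ 0, the function s(ω,x) := sin(ωx)/ω + ∫₀ˣ (K(x,t) − K(x,−t))·(sin(ωt)/ω) dt is twice continuously differentiable in x on [-b,b] and satisfies s'' − q·s + ω²·s = 0 on [-b,b], together with the initial conditions s(ω,0) = 0 and ∂s/∂x(ω,0) = 1. -/
open Set MeasureTheory Filter

open intervalIntegral

lemma leibniz_aux {b : ℝ} (hb : 0 < b) {g g' : ℝ → ℝ → ℂ}
    (hg : ContinuousOn (fun p : ℝ × ℝ => g p.1 p.2) (Set.Icc (-b) b ×ˢ Set.Icc (-b) b))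
    (hg' : ContinuousOn (fun p : ℝ × ℝ => g' p.1 p.2) (Set.Icc (-b) b ×ˢ Set.Icc (-b) b))
    (hder : ∀ t ∈ Set.Icc (-b) b, ∀ x ∈ Set.Icc (-b) b,
      HasDerivWithinAt (fun x' => g x' t) (g' x t) (Set.Icc (-b) b) x)
    {x : ℝ} (hx : x ∈ Set.Icc (-b) b) :
    HasDerivWithinAt (fun x' => ∫ t in (0:ℝ)..x', g x' t)
      (g x x + ∫ t in (0:ℝ)..x, g' x t) (Set.Icc (-b) b) x := by
  have h0I : (0:ℝ) ∈ Set.Icc (-b) b := by constructor <;> linarith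
  have hsub : ∀ {u v : ℝ}, u ∈ Set.Icc (-b) b → v ∈ Set.Icc (-b) b →
      Set.uIcc u v ⊆ Set.Icc (-b) b := fun hu hv => Set.uIcc_subset_Icc hu hv
  -- continuity of slices
  have contSliceOn : ∀ y ∈ Set.Icc (-b) b, ∀ s ⊆ Set.Icc (-b) b,
      ContinuousOn (fun t => g y t) s := by
    intro y hy s hs
    exact hg.comp ((continuous_const.prodMk continuous_id).continuousOn) (fun t ht => ⟨hy, hs ht⟩)
  have contSliceOn' : ∀ y ∈ Set.Icc (-b) b, ∀ s ⊆ Set.Icc (-b) b,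
      ContinuousOn (fun t => g' y t) s := by
    intro y hy s hs
    exact hg'.comp ((continuous_const.prodMk continuous_id).continuousOn) (fun t ht => ⟨hy, hs ht⟩)
  have contSliceXOn : ∀ t ∈ Set.Icc (-b) b, ∀ s ⊆ Set.Icc (-b) b,
      ContinuousOn (fun y => g y t) s := by
    intro t ht s hs
    exact hg.comp ((continuous_id.prodMk continuous_const).continuousOn) (fun y hy => ⟨hs hy, ht⟩)
  have contSliceXOn' : ∀ t ∈ Set.Icc (-b) b, ∀ s ⊆ Set.Icc (-b) b,
      ContinuousOn (fun y => g' y t) s := by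
    intro t ht s hs
    exact hg'.comp ((continuous_id.prodMk continuous_const).continuousOn) (fun y hy => ⟨hs hy, ht⟩)
  have intg : ∀ y ∈ Set.Icc (-b) b, ∀ u ∈ Set.Icc (-b) b, ∀ v ∈ Set.Icc (-b) b,
      IntervalIntegrable (fun t => g y t) volume u v := by
    intro y hy u hu v hv
    exact (contSliceOn y hy _ (hsub hu hv)).intervalIntegrable
  have intg' : ∀ y ∈ Set.Icc (-b) b, ∀ u ∈ Set.Icc (-b) b, ∀ v ∈ Set.Icc (-b) b,
      IntervalIntegrable (fun t => g' y t) volume u v := by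
    intro y hy u hu v hv
    exact (contSliceOn' y hy _ (hsub hu hv)).intervalIntegrable
  have intgx : ∀ t ∈ Set.Icc (-b) b, ∀ u ∈ Set.Icc (-b) b, ∀ v ∈ Set.Icc (-b) b,
      IntervalIntegrable (fun y => g' y t) volume u v := by
    intro t ht u hu v hv
    exact (contSliceXOn' t ht _ (hsub hu hv)).intervalIntegrable
  -- FTC in the first variable
  have key : ∀ x' ∈ Set.Icc (-b) b, ∀ t ∈ Set.Icc (-b) b,
      (∫ ξ in x..x', g' ξ t) = g x' t - g x t := by
    intro x' hx' t ht
    apply intervalIntegral.integral_eq_sub_of_hasDeriv_right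
    · exact contSliceXOn t ht _ (hsub hx hx')
    · intro ξ hξ
      have hξI : ξ ∈ Set.Icc (-b) b := hsub hx hx' (Set.Ioo_subset_Icc_self hξ)
      have hξint : Set.Icc (-b) b ∈ nhds ξ := by
        apply Icc_mem_nhds
        · have := hξ.1
          have h1 : -b ≤ min x x' := le_min hx.1 hx'.1
          linarith
        · have := hξ.2
          have h1 : max x x' ≤ b := max_le hx.2 hx'.2
          linarith
      exact (((hder t ht ξ hξI).hasDerivAt hξint).hasDerivWithinAt)
    · exact (contSliceXOn' t ht _ (hsub hx hx')).intervalIntegrable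
  -- now the little-o estimate
  rw [hasDerivWithinAt_iff_isLittleO, Asymptotics.isLittleO_iff]
  intro ε hε
  have hSc : IsCompact (Set.Icc (-b) b ×ˢ Set.Icc (-b) b) := isCompact_Icc.prod isCompact_Icc
  have ucg' := hSc.uniformContinuousOn_of_continuous hg'
  rw [Metric.uniformContinuousOn_iff] at ucg'
  obtain ⟨δ₁, hδ₁, H1⟩ := ucg' (ε / (2 * (b + 1))) (by positivity)
  have hgc := hg (x, x) ⟨hx, hx⟩
  rw [Metric.continuousWithinAt_iff] at hgc
  obtain ⟨δ₂, hδ₂, H2⟩ := hgc (ε / 2) (by positivity)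
  have hδ : 0 < min δ₁ δ₂ := lt_min hδ₁ hδ₂
  have hev1 : ∀ᶠ x' in nhdsWithin x (Set.Icc (-b) b), x' ∈ Set.Icc (-b) b :=
    eventually_mem_nhdsWithin
  have hball : ∀ᶠ x' in nhds x, x' ∈ Metric.ball x (min δ₁ δ₂) := Metric.ball_mem_nhds x hδ
  have hev2 : ∀ᶠ x' in nhdsWithin x (Set.Icc (-b) b), dist x' x < min δ₁ δ₂ :=
    Filter.Eventually.filter_mono nhdsWithin_le_nhds
      (hball.mono (fun y hy => Metric.mem_ball.mp hy))
  filter_upwards [hev1, hev2] with x' hx' hdist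
  -- the decomposition
  have hint1 := intg x' hx' 0 h0I x hx
  have hint2 := intg x' hx' x hx x' hx'
  have E1 : (∫ t in (0:ℝ)..x', g x' t) = (∫ t in (0:ℝ)..x, g x' t) + ∫ t in x..x', g x' t :=
    (intervalIntegral.integral_add_adjacent_intervals hint1 hint2).symm
  have hsmul : ∀ (r : ℝ) (z : ℂ), r • z = (r : ℂ) * z := fun r z => by rw [Complex.real_smul]
  set T1 : ℂ := (∫ t in x..x', g x' t) - ((x' - x : ℝ) : ℂ) * g x x with hT1
  set T2 : ℂ := (∫ t in (0:ℝ)..x, g x' t) - (∫ t in (0:ℝ)..x, g x t)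
      - ((x' - x : ℝ) : ℂ) * (∫ t in (0:ℝ)..x, g' x t) with hT2
  have decomp : (∫ t in (0:ℝ)..x', g x' t) - (∫ t in (0:ℝ)..x, g x t)
      - (x' - x) • (g x x + ∫ t in (0:ℝ)..x, g' x t) = T1 + T2 := by
    rw [E1, hsmul, hT1, hT2]; ring
  rw [decomp]
  -- bound T1
  have habs : ∀ t ∈ Set.uIcc x x', |t - x| ≤ |x' - x| := by
    intro t ht
    rw [Set.mem_uIcc] at ht
    rcases ht with ⟨h1, h2⟩ | ⟨h1, h2⟩ <;> rw [abs_le] <;> constructor <;>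
      cases' abs_cases (x' - x) with hc hc <;> linarith [hc.1, hc.2]
  have hB1 : ‖T1‖ ≤ (ε / 2) * |x' - x| := by
    have e1 : T1 = ∫ t in x..x', (g x' t - g x x) := by
      rw [intervalIntegral.integral_sub hint2 intervalIntegrable_const,
        intervalIntegral.integral_const, hT1, hsmul]
    rw [e1]
    apply intervalIntegral.norm_integral_le_of_norm_le_const
    intro t ht
    have htu : t ∈ Set.uIcc x x' := Set.uIoc_subset_uIcc ht
    have htI : t ∈ Set.Icc (-b) b := hsub hx hx' htu
    have hd : dist (x', t) (x, x) < δ₂ := by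
      rw [Prod.dist_eq]
      apply max_lt
      · exact lt_of_lt_of_le hdist (min_le_right _ _)
      · calc dist t x = |t - x| := Real.dist_eq t x
          _ ≤ |x' - x| := habs t htu
          _ < δ₂ := lt_of_lt_of_le (by rwa [Real.dist_eq] at hdist) (min_le_right _ _)
    have := H2 ⟨hx', htI⟩ hd
    rw [dist_eq_norm] at this
    exact this.le
  -- bound T2
  have hB2 : ‖T2‖ ≤ (ε / 2) * |x' - x| := by
    have e2 : T2 = ∫ t in (0:ℝ)..x, (g x' t - g x t - ((x' - x : ℝ) : ℂ) * g' x t) := by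
      rw [intervalIntegral.integral_sub (Iff.mpr intervalIntegrable_iff ?_) ?_,
        intervalIntegral.integral_sub hint1 (intg x hx 0 h0I x hx),
        intervalIntegral.integral_const_mul, hT2]
      · exact ((intg x' hx' 0 h0I x hx).sub (intg x hx 0 h0I x hx)).def'
      · exact (intg' x hx 0 h0I x hx).const_mul _
    have pointwise : ∀ t ∈ Set.uIoc (0:ℝ) x,
        ‖g x' t - g x t - ((x' - x : ℝ) : ℂ) * g' x t‖ ≤ (ε / (2 * (b + 1))) * |x' - x| := by
      intro t ht
      have htI : t ∈ Set.Icc (-b) b := hsub h0I hx (Set.uIoc_subset_uIcc ht)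
      have e3 : g x' t - g x t - ((x' - x : ℝ) : ℂ) * g' x t
          = ∫ ξ in x..x', (g' ξ t - g' x t) := by
        rw [intervalIntegral.integral_sub (intgx t htI x hx x' hx') intervalIntegrable_const,
          key x' hx' t htI, intervalIntegral.integral_const, hsmul]
      rw [e3]
      apply intervalIntegral.norm_integral_le_of_norm_le_const
      intro ξ hξ
      have hξu : ξ ∈ Set.uIcc x x' := Set.uIoc_subset_uIcc hξ
      have hξI : ξ ∈ Set.Icc (-b) b := hsub hx hx' hξu
      have hd : dist (ξ, t) (x, t) < δ₁ := by
        rw [Prod.dist_eq]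
        apply max_lt
        · calc dist ξ x = |ξ - x| := Real.dist_eq ξ x
            _ ≤ |x' - x| := habs ξ hξu
            _ < δ₁ := lt_of_lt_of_le (by rwa [Real.dist_eq] at hdist) (min_le_left _ _)
        · simpa using hδ₁
      have := H1 (ξ, t) ⟨hξI, htI⟩ (x, t) ⟨hx, htI⟩ hd
      rw [dist_eq_norm] at this
      exact this.le
    rw [e2]
    calc ‖∫ t in (0:ℝ)..x, (g x' t - g x t - ((x' - x : ℝ) : ℂ) * g' x t)‖
        ≤ ((ε / (2 * (b + 1))) * |x' - x|) * |x - 0| :=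
          intervalIntegral.norm_integral_le_of_norm_le_const pointwise
      _ ≤ (ε / 2) * |x' - x| := by
          have hxb : |x - 0| ≤ b := by
            rw [sub_zero, abs_le]; exact ⟨hx.1, hx.2⟩
          have h1 : (ε / (2 * (b + 1))) * |x' - x| * |x - 0|
              ≤ (ε / (2 * (b + 1))) * |x' - x| * (b + 1) := by
            apply mul_le_mul_of_nonneg_left (by linarith) (by positivity)
          calc (ε / (2 * (b + 1))) * |x' - x| * |x - 0|
              ≤ (ε / (2 * (b + 1))) * |x' - x| * (b + 1) := h1
            _ = (ε / 2) * |x' - x| := by field_simp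
  calc ‖T1 + T2‖ ≤ ‖T1‖ + ‖T2‖ := norm_add_le _ _
    _ ≤ (ε / 2) * |x' - x| + (ε / 2) * |x' - x| := add_le_add hB1 hB2
    _ = ε * ‖x' - x‖ := by rw [Real.norm_eq_abs]; ring

lemma kernel_calculus {b : ℝ} (hb : 0 < b) {K : ℝ → ℝ → ℂ}
    (hK2 : ContDiffOn ℝ 2 (fun p : ℝ × ℝ => K p.1 p.2) (Set.Icc (-b) b ×ˢ Set.Icc (-b) b)) :
    ∃ Kx Kt Kxx Ktt : ℝ → ℝ → ℂ,
      (∀ t ∈ Set.Icc (-b) b, ∀ x ∈ Set.Icc (-b) b,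
        HasDerivWithinAt (fun x' => K x' t) (Kx x t) (Set.Icc (-b) b) x) ∧
      (∀ x ∈ Set.Icc (-b) b, ∀ t ∈ Set.Icc (-b) b,
        HasDerivWithinAt (fun t' => K x t') (Kt x t) (Set.Icc (-b) b) t) ∧
      (∀ t ∈ Set.Icc (-b) b, ∀ x ∈ Set.Icc (-b) b,
        HasDerivWithinAt (fun x' => Kx x' t) (Kxx x t) (Set.Icc (-b) b) x) ∧
      (∀ x ∈ Set.Icc (-b) b, ∀ t ∈ Set.Icc (-b) b,
        HasDerivWithinAt (fun t' => Kt x t') (Ktt x t) (Set.Icc (-b) b) t) ∧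
      (∀ x ∈ Set.Icc (-b) b, ∀ t ∈ Set.Icc (-b) b, d2x b K x t = Kxx x t) ∧
      (∀ x ∈ Set.Icc (-b) b, ∀ t ∈ Set.Icc (-b) b, d2t b K x t = Ktt x t) ∧
      ContinuousOn (fun p : ℝ × ℝ => Kx p.1 p.2) (Set.Icc (-b) b ×ˢ Set.Icc (-b) b) ∧
      ContinuousOn (fun p : ℝ × ℝ => Kt p.1 p.2) (Set.Icc (-b) b ×ˢ Set.Icc (-b) b) ∧
      ContinuousOn (fun p : ℝ × ℝ => Kxx p.1 p.2) (Set.Icc (-b) b ×ˢ Set.Icc (-b) b) ∧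
      (∀ x ∈ Set.Icc (-b) b,
        HasDerivWithinAt (fun x' => K x' x') (Kx x x + Kt x x) (Set.Icc (-b) b) x) ∧
      (∀ x ∈ Set.Icc (-b) b,
        HasDerivWithinAt (fun x' => K x' (-x')) (Kx x (-x) - Kt x (-x)) (Set.Icc (-b) b) x) := by
  have hbb : -b < b := by linarith
  have hUD : UniqueDiffOn ℝ (Set.Icc (-b) b) := uniqueDiffOn_Icc hbb
  have hUDS : UniqueDiffOn ℝ (Set.Icc (-b) b ×ˢ Set.Icc (-b) b) := hUD.prod hUD
  set S := Set.Icc (-b) b ×ˢ Set.Icc (-b) b with hS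
  set G : ℝ × ℝ → ℂ := fun p => K p.1 p.2 with hG
  rw [show (2 : WithTop ℕ∞) = 1 + 1 by norm_num,
    contDiffOn_succ_iff_fderivWithin hUDS] at hK2
  obtain ⟨hGdiff, -, hFdC1⟩ := hK2
  rw [show (1 : WithTop ℕ∞) = 0 + 1 by norm_num,
    contDiffOn_succ_iff_fderivWithin hUDS, contDiffOn_zero] at hFdC1
  obtain ⟨hFdDiff, -, hFd2C0⟩ := hFdC1
  set Fd := fderivWithin ℝ G S with hFd
  set Fd2 := fderivWithin ℝ (fun y => Fd y) S with hFd2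
  refine ⟨fun x t => Fd (x, t) (1, 0), fun x t => Fd (x, t) (0, 1),
    fun x t => Fd2 (x, t) (1, 0) (1, 0), fun x t => Fd2 (x, t) (0, 1) (0, 1),
    ?_, ?_, ?_, ?_, ?_, ?_, ?_, ?_, ?_, ?_, ?_⟩
  case _ => -- hKx
    intro t ht x hx
    have h1 : HasFDerivWithinAt G (Fd (x, t)) S (x, t) := (hGdiff (x, t) ⟨hx, ht⟩).hasFDerivWithinAt
    have h2 : HasDerivWithinAt (fun x' : ℝ => (x', t)) ((1 : ℝ), (0 : ℝ)) (Set.Icc (-b) b) x :=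
      (hasDerivWithinAt_id x _).prodMk (hasDerivWithinAt_const x _ t)
    exact h1.comp_hasDerivWithinAt x h2 (fun y hy => Set.mk_mem_prod hy ht)
  case _ => -- hKt
    intro x hx t ht
    have h1 : HasFDerivWithinAt G (Fd (x, t)) S (x, t) := (hGdiff (x, t) ⟨hx, ht⟩).hasFDerivWithinAt
    have h2 : HasDerivWithinAt (fun t' : ℝ => (x, t')) ((0 : ℝ), (1 : ℝ)) (Set.Icc (-b) b) t :=
      (hasDerivWithinAt_const t _ x).prodMk (hasDerivWithinAt_id t _)
    exact h1.comp_hasDerivWithinAt t h2 (fun y hy => Set.mk_mem_prod hx hy)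
  case _ => -- hKxx
    intro t ht x hx
    have h1 : HasFDerivWithinAt (fun y => Fd y) (Fd2 (x, t)) S (x, t) :=
      (hFdDiff (x, t) ⟨hx, ht⟩).hasFDerivWithinAt
    have h2 : HasDerivWithinAt (fun x' : ℝ => (x', t)) ((1 : ℝ), (0 : ℝ)) (Set.Icc (-b) b) x :=
      (hasDerivWithinAt_id x _).prodMk (hasDerivWithinAt_const x _ t)
    have h3 : HasDerivWithinAt (fun x' => Fd (x', t)) (Fd2 (x, t) (1, 0)) (Set.Icc (-b) b) x :=
      h1.comp_hasDerivWithinAt x h2 (fun y hy => Set.mk_mem_prod hy ht)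
    simpa using h3.clm_apply (hasDerivWithinAt_const x _ ((1 : ℝ), (0 : ℝ)))
  case _ => -- hKtt
    intro x hx t ht
    have h1 : HasFDerivWithinAt (fun y => Fd y) (Fd2 (x, t)) S (x, t) :=
      (hFdDiff (x, t) ⟨hx, ht⟩).hasFDerivWithinAt
    have h2 : HasDerivWithinAt (fun t' : ℝ => (x, t')) ((0 : ℝ), (1 : ℝ)) (Set.Icc (-b) b) t :=
      (hasDerivWithinAt_const t _ x).prodMk (hasDerivWithinAt_id t _)
    have h3 : HasDerivWithinAt (fun t' => Fd (x, t')) (Fd2 (x, t) (0, 1)) (Set.Icc (-b) b) t :=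
      h1.comp_hasDerivWithinAt t h2 (fun y hy => Set.mk_mem_prod hx hy)
    simpa using h3.clm_apply (hasDerivWithinAt_const t _ ((0 : ℝ), (1 : ℝ)))
  case _ => -- d2x
    intro x hx t ht
    unfold d2x
    have e1 : ∀ x' ∈ Set.Icc (-b) b,
        derivWithin (fun x'' => K x'' t) (Set.Icc (-b) b) x' = Fd (x', t) (1, 0) := by
      intro x' hx'
      have h1 : HasFDerivWithinAt G (Fd (x', t)) S (x', t) :=
        (hGdiff (x', t) ⟨hx', ht⟩).hasFDerivWithinAt
      have h2 : HasDerivWithinAt (fun x'' : ℝ => (x'', t)) ((1 : ℝ), (0 : ℝ)) (Set.Icc (-b) b) x' :=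
        (hasDerivWithinAt_id x' _).prodMk (hasDerivWithinAt_const x' _ t)
      exact (h1.comp_hasDerivWithinAt x' h2 (fun y hy => Set.mk_mem_prod hy ht)).derivWithin (hUD x' hx')
    rw [derivWithin_congr (fun x' hx' => e1 x' hx') (e1 x hx)]
    have h1 : HasFDerivWithinAt (fun y => Fd y) (Fd2 (x, t)) S (x, t) :=
      (hFdDiff (x, t) ⟨hx, ht⟩).hasFDerivWithinAt
    have h2 : HasDerivWithinAt (fun x' : ℝ => (x', t)) ((1 : ℝ), (0 : ℝ)) (Set.Icc (-b) b) x :=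
      (hasDerivWithinAt_id x _).prodMk (hasDerivWithinAt_const x _ t)
    have h3 : HasDerivWithinAt (fun x' => Fd (x', t)) (Fd2 (x, t) (1, 0)) (Set.Icc (-b) b) x :=
      h1.comp_hasDerivWithinAt x h2 (fun y hy => Set.mk_mem_prod hy ht)
    have h4 := h3.clm_apply (hasDerivWithinAt_const x _ ((1 : ℝ), (0 : ℝ)))
    simp only [map_zero, add_zero] at h4
    exact h4.derivWithin (hUD x hx)
  case _ => -- d2t
    intro x hx t ht
    unfold d2t
    have e1 : ∀ t' ∈ Set.Icc (-b) b,
        derivWithin (fun t'' => K x t'') (Set.Icc (-b) b) t' = Fd (x, t') (0, 1) := by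
      intro t' ht'
      have h1 : HasFDerivWithinAt G (Fd (x, t')) S (x, t') :=
        (hGdiff (x, t') ⟨hx, ht'⟩).hasFDerivWithinAt
      have h2 : HasDerivWithinAt (fun t'' : ℝ => (x, t'')) ((0 : ℝ), (1 : ℝ)) (Set.Icc (-b) b) t' :=
        (hasDerivWithinAt_const t' _ x).prodMk (hasDerivWithinAt_id t' _)
      exact (h1.comp_hasDerivWithinAt t' h2 (fun y hy => Set.mk_mem_prod hx hy)).derivWithin (hUD t' ht')
    rw [derivWithin_congr (fun t' ht' => e1 t' ht') (e1 t ht)]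
    have h1 : HasFDerivWithinAt (fun y => Fd y) (Fd2 (x, t)) S (x, t) :=
      (hFdDiff (x, t) ⟨hx, ht⟩).hasFDerivWithinAt
    have h2 : HasDerivWithinAt (fun t' : ℝ => (x, t')) ((0 : ℝ), (1 : ℝ)) (Set.Icc (-b) b) t :=
      (hasDerivWithinAt_const t _ x).prodMk (hasDerivWithinAt_id t _)
    have h3 : HasDerivWithinAt (fun t' => Fd (x, t')) (Fd2 (x, t) (0, 1)) (Set.Icc (-b) b) t :=
      h1.comp_hasDerivWithinAt t h2 (fun y hy => Set.mk_mem_prod hx hy)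
    have h4 := h3.clm_apply (hasDerivWithinAt_const t _ ((0 : ℝ), (1 : ℝ)))
    simp only [map_zero, add_zero] at h4
    exact h4.derivWithin (hUD t ht)
  case _ => -- cont Kx
    exact (hFdDiff.continuousOn.clm_apply continuousOn_const)
  case _ => -- cont Kt
    exact (hFdDiff.continuousOn.clm_apply continuousOn_const)
  case _ => -- cont Kxx
    exact ((hFd2C0.clm_apply continuousOn_const).clm_apply continuousOn_const)
  case _ => -- diagonal
    intro x hx
    have h1 : HasFDerivWithinAt G (Fd (x, x)) S (x, x) := (hGdiff (x, x) ⟨hx, hx⟩).hasFDerivWithinAt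
    have h2 : HasDerivWithinAt (fun x' : ℝ => (x', x')) ((1 : ℝ), (1 : ℝ)) (Set.Icc (-b) b) x :=
      (hasDerivWithinAt_id x _).prodMk (hasDerivWithinAt_id x _)
    have h3 : HasDerivWithinAt (fun x' : ℝ => G (x', x')) (Fd (x, x) ((1 : ℝ), (1 : ℝ)))
        (Set.Icc (-b) b) x :=
      h1.comp_hasDerivWithinAt (f := fun x' : ℝ => (x', x')) x h2 (fun y hy => Set.mk_mem_prod hy hy)
    have e : Fd (x, x) ((1 : ℝ), (1 : ℝ)) = Fd (x, x) (1, 0) + Fd (x, x) (0, 1) := by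
      rw [← map_add, Prod.mk_add_mk]; norm_num
    rwa [e] at h3
  case _ => -- antidiagonal
    intro x hx
    have hnx : -x ∈ Set.Icc (-b) b := by
      constructor
      · have := hx.2; linarith
      · have := hx.1; linarith
    have h1 : HasFDerivWithinAt G (Fd (x, -x)) S (x, -x) :=
      (hGdiff (x, -x) ⟨hx, hnx⟩).hasFDerivWithinAt
    have h2 : HasDerivWithinAt (fun x' : ℝ => (x', -x')) ((1 : ℝ), (-1 : ℝ)) (Set.Icc (-b) b) x :=
      (hasDerivWithinAt_id x _).prodMk (hasDerivWithinAt_id x _).neg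
    have hmt : Set.MapsTo (fun x' : ℝ => (x', -x')) (Set.Icc (-b) b) S := by
      intro y hy
      exact ⟨hy, ⟨by simpa using neg_le_neg hy.2, by simpa using neg_le_neg hy.1⟩⟩
    have h3 : HasDerivWithinAt (fun x' : ℝ => G (x', -x')) (Fd (x, -x) ((1 : ℝ), (-1 : ℝ)))
        (Set.Icc (-b) b) x :=
      h1.comp_hasDerivWithinAt (f := fun x' : ℝ => (x', -x')) x h2 hmt
    have e : Fd (x, -x) ((1 : ℝ), (-1 : ℝ)) = Fd (x, -x) (1, 0) - Fd (x, -x) (0, 1) := by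
      rw [← map_sub, Prod.mk_sub_mk]; norm_num
    rwa [e] at h3

lemma primitive_hasDerivWithin {b : ℝ} (hb : 0 < b) {q : ℝ → ℂ}
    (hqc : ContinuousOn q (Set.Icc (-b) b)) {x : ℝ} (hx : x ∈ Set.Icc (-b) b) :
    HasDerivWithinAt (fun y => ∫ s in (0:ℝ)..y, q s) (q x) (Set.Icc (-b) b) x := by
  have hbb : -b < b := by linarith
  have h0I : (0:ℝ) ∈ Set.Icc (-b) b := by constructor <;> linarith
  have hint : IntervalIntegrable q volume 0 x :=
    (hqc.mono (Set.uIcc_subset_Icc h0I hx)).intervalIntegrable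
  haveI : Fact (x ∈ Set.Icc (-b) b) := ⟨hx⟩
  have hmeas : StronglyMeasurableAtFilter q (nhdsWithin x (Set.Icc (-b) b)) volume :=
    ⟨_, self_mem_nhdsWithin, hqc.aestronglyMeasurable measurableSet_Icc⟩
  exact intervalIntegral.integral_hasDerivWithinAt_right hint hmeas (hqc x hx)

lemma sin_hasDerivAt (ω : ℂ) (hω : ω ≠ 0) (x : ℝ) :
    HasDerivAt (fun y : ℝ => Complex.sin (ω * y) / ω) (Complex.cos (ω * x)) x := by
  have h1 : HasDerivAt (fun z : ℂ => Complex.sin (ω * z)) (Complex.cos (ω * x) * ω) (x : ℂ) := by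
    have h0 : HasDerivAt (fun z : ℂ => ω * z) (ω * 1) (x : ℂ) := (hasDerivAt_id _).const_mul ω
    have := (Complex.hasDerivAt_sin (ω * x)).comp (x : ℂ) h0
    simpa [Function.comp_def] using this
  have h2 := h1.comp_ofReal
  have h3 := h2.div_const ω
  simpa [mul_div_cancel_right₀ _ hω] using h3

lemma cos_hasDerivAt (ω : ℂ) (x : ℝ) :
    HasDerivAt (fun y : ℝ => Complex.cos (ω * y)) (-(Complex.sin (ω * x)) * ω) x := by
  have h1 : HasDerivAt (fun z : ℂ => Complex.cos (ω * z)) (-(Complex.sin (ω * x)) * ω) (x : ℂ) := by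
    have h0 : HasDerivAt (fun z : ℂ => ω * z) (ω * 1) (x : ℂ) := (hasDerivAt_id _).const_mul ω
    have := (Complex.hasDerivAt_cos (ω * x)).comp (x : ℂ) h0
    simpa [Function.comp_def] using this
  exact h1.comp_ofReal

/-- `s(ω,x) = sin(ωx)/ω + ∫₀ˣ (K(x,t)−K(x,−t)) (sin(ωt)/ω) dt` is a `C²`
solution of `s'' − q s + ω² s = 0` with `s(ω,0) = 0`, `∂s/∂x(ω,0) = 1`. -/
theorem sine_type_solution
    (b : ℝ) (hb : 0 < b) (q : ℝ → ℂ) (hq : ContDiffOn ℝ 1 q (Set.Icc (-b) b))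
    (h : ℂ) (K : ℝ → ℝ → ℂ) (hK : IsTransmutationKernel b q h K)
    (ω : ℂ) (hω : ω ≠ 0) :
    ContDiffOn ℝ 2
      (fun x : ℝ => Complex.sin (ω * x) / ω
        + ∫ t in (0:ℝ)..x, (K x t - K x (-t)) * (Complex.sin (ω * t) / ω))
      (Set.Icc (-b) b) ∧
    (∀ x ∈ Set.Icc (-b) b,
      derivWithin
          (derivWithin
            (fun y : ℝ => Complex.sin (ω * y) / ω
              + ∫ t in (0:ℝ)..y, (K y t - K y (-t)) * (Complex.sin (ω * t) / ω))
            (Set.Icc (-b) b))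
          (Set.Icc (-b) b) x
        - q x * (Complex.sin (ω * x) / ω
            + ∫ t in (0:ℝ)..x, (K x t - K x (-t)) * (Complex.sin (ω * t) / ω))
        + ω ^ 2 * (Complex.sin (ω * x) / ω
            + ∫ t in (0:ℝ)..x, (K x t - K x (-t)) * (Complex.sin (ω * t) / ω))
        = 0) ∧
    (Complex.sin (ω * (0:ℝ)) / ω
      + ∫ t in (0:ℝ)..(0:ℝ), (K 0 t - K 0 (-t)) * (Complex.sin (ω * t) / ω)) = 0 ∧
    derivWithin
        (fun y : ℝ => Complex.sin (ω * y) / ω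
          + ∫ t in (0:ℝ)..y, (K y t - K y (-t)) * (Complex.sin (ω * t) / ω))
        (Set.Icc (-b) b) 0 = 1 := by
  have hbb : -b < b := by linarith
  have hUD : UniqueDiffOn ℝ (Set.Icc (-b) b) := uniqueDiffOn_Icc hbb
  have h0I : (0:ℝ) ∈ Set.Icc (-b) b := by constructor <;> linarith
  have hnm : ∀ {t : ℝ}, t ∈ Set.Icc (-b) b → -t ∈ Set.Icc (-b) b := fun ht =>
    ⟨by linarith [ht.2], by linarith [ht.1]⟩
  obtain ⟨Kx, Kt, Kxx, Ktt, hKx, hKt, hKxx, hKtt, hd2x, hd2t, hKxC, hKtC, hKxxC,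
    hdiagK, hadiagK⟩ := kernel_calculus hb hK.1
  have hKC : ContinuousOn (fun p : ℝ × ℝ => K p.1 p.2)
      (Set.Icc (-b) b ×ˢ Set.Icc (-b) b) := hK.1.continuousOn
  have hPDE' : ∀ x ∈ Set.Icc (-b) b, ∀ t ∈ Set.Icc (-b) b,
      Kxx x t - q x * K x t = Ktt x t := fun x hx t ht => by
    rw [← hd2x x hx t ht, ← hd2t x hx t ht]; exact hK.2.1 x hx t ht
  have hqc : ContinuousOn q (Set.Icc (-b) b) := hq.continuousOn
  have husin : Continuous (fun t : ℝ => Complex.sin (ω * ↑t) / ω) :=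
    (Complex.continuous_sin.comp (continuous_const.mul Complex.continuous_ofReal)).div_const ω
  have hucos : Continuous (fun t : ℝ => Complex.cos (ω * ↑t)) :=
    Complex.continuous_cos.comp (continuous_const.mul Complex.continuous_ofReal)
  have hreflect : ∀ {F : ℝ → ℝ → ℂ},
      ContinuousOn (fun p : ℝ × ℝ => F p.1 p.2) (Set.Icc (-b) b ×ˢ Set.Icc (-b) b) →
      ContinuousOn (fun p : ℝ × ℝ => F p.1 (-p.2)) (Set.Icc (-b) b ×ˢ Set.Icc (-b) b) :=
    fun hF => hF.comp ((continuous_fst.prodMk continuous_snd.neg).continuousOn)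
      (fun p hp => ⟨hp.1, hnm hp.2⟩)
  have cslice : ∀ (F : ℝ → ℝ → ℂ),
      ContinuousOn (fun p : ℝ × ℝ => F p.1 p.2) (Set.Icc (-b) b ×ˢ Set.Icc (-b) b) →
      ∀ x ∈ Set.Icc (-b) b, ContinuousOn (fun t => F x t) (Set.Icc (-b) b) :=
    fun F hF x hx => hF.comp ((continuous_const.prodMk continuous_id).continuousOn)
      (fun t ht => ⟨hx, ht⟩)
  have cneg : ∀ (f : ℝ → ℂ), ContinuousOn f (Set.Icc (-b) b) →
      ContinuousOn (fun t => f (-t)) (Set.Icc (-b) b) :=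
    fun f hf => hf.comp continuous_neg.continuousOn (fun t ht => hnm ht)
  -- joint continuity of composite integrands
  have hgC : ContinuousOn (fun p : ℝ × ℝ =>
      (K p.1 p.2 - K p.1 (-p.2)) * (Complex.sin (ω * ↑p.2) / ω))
      (Set.Icc (-b) b ×ˢ Set.Icc (-b) b) :=
    (hKC.sub (hreflect hKC)).mul ((husin.comp continuous_snd).continuousOn)
  have hg'C : ContinuousOn (fun p : ℝ × ℝ =>
      (Kx p.1 p.2 - Kx p.1 (-p.2)) * (Complex.sin (ω * ↑p.2) / ω))
      (Set.Icc (-b) b ×ˢ Set.Icc (-b) b) :=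
    (hKxC.sub (hreflect hKxC)).mul ((husin.comp continuous_snd).continuousOn)
  have hg''C : ContinuousOn (fun p : ℝ × ℝ =>
      (Kxx p.1 p.2 - Kxx p.1 (-p.2)) * (Complex.sin (ω * ↑p.2) / ω))
      (Set.Icc (-b) b ×ˢ Set.Icc (-b) b) :=
    (hKxxC.sub (hreflect hKxxC)).mul ((husin.comp continuous_snd).continuousOn)
  have hgder : ∀ t ∈ Set.Icc (-b) b, ∀ y ∈ Set.Icc (-b) b,
      HasDerivWithinAt (fun x' => (K x' t - K x' (-t)) * (Complex.sin (ω * ↑t) / ω))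
        ((Kx y t - Kx y (-t)) * (Complex.sin (ω * ↑t) / ω)) (Set.Icc (-b) b) y :=
    fun t ht y hy => ((hKx t ht y hy).sub (hKx (-t) (hnm ht) y hy)).mul_const _
  have hg'der : ∀ t ∈ Set.Icc (-b) b, ∀ y ∈ Set.Icc (-b) b,
      HasDerivWithinAt (fun x' => (Kx x' t - Kx x' (-t)) * (Complex.sin (ω * ↑t) / ω))
        ((Kxx y t - Kxx y (-t)) * (Complex.sin (ω * ↑t) / ω)) (Set.Icc (-b) b) y :=
    fun t ht y hy => ((hKxx t ht y hy).sub (hKxx (-t) (hnm ht) y hy)).mul_const _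
  have hF : ∀ {x : ℝ}, x ∈ Set.Icc (-b) b → HasDerivWithinAt
      (fun x' => ∫ t in (0:ℝ)..x', (K x' t - K x' (-t)) * (Complex.sin (ω * ↑t) / ω))
      ((K x x - K x (-x)) * (Complex.sin (ω * ↑x) / ω)
        + ∫ t in (0:ℝ)..x, (Kx x t - Kx x (-t)) * (Complex.sin (ω * ↑t) / ω))
      (Set.Icc (-b) b) x := fun {x} hx =>
    leibniz_aux hb (g := fun y t => (K y t - K y (-t)) * (Complex.sin (ω * ↑t) / ω))
      (g' := fun y t => (Kx y t - Kx y (-t)) * (Complex.sin (ω * ↑t) / ω))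
      hgC hg'C hgder hx
  have hF1 : ∀ {x : ℝ}, x ∈ Set.Icc (-b) b → HasDerivWithinAt
      (fun x' => ∫ t in (0:ℝ)..x', (Kx x' t - Kx x' (-t)) * (Complex.sin (ω * ↑t) / ω))
      ((Kx x x - Kx x (-x)) * (Complex.sin (ω * ↑x) / ω)
        + ∫ t in (0:ℝ)..x, (Kxx x t - Kxx x (-t)) * (Complex.sin (ω * ↑t) / ω))
      (Set.Icc (-b) b) x := fun {x} hx =>
    leibniz_aux hb (g := fun y t => (Kx y t - Kx y (-t)) * (Complex.sin (ω * ↑t) / ω))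
      (g' := fun y t => (Kxx y t - Kxx y (-t)) * (Complex.sin (ω * ↑t) / ω))
      hg'C hg''C hg'der hx
  set SS : ℝ → ℂ := fun x : ℝ => Complex.sin (ω * ↑x) / ω
      + ∫ t in (0:ℝ)..x, (K x t - K x (-t)) * (Complex.sin (ω * ↑t) / ω) with hSSdef
  set S1 : ℝ → ℂ := fun x : ℝ => Complex.cos (ω * ↑x)
      + ((K x x - K x (-x)) * (Complex.sin (ω * ↑x) / ω)
        + ∫ t in (0:ℝ)..x, (Kx x t - Kx x (-t)) * (Complex.sin (ω * ↑t) / ω)) with hS1def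
  have hs1 : ∀ x ∈ Set.Icc (-b) b, HasDerivWithinAt SS (S1 x) (Set.Icc (-b) b) x :=
    fun x hx => ((sin_hasDerivAt ω hω x).hasDerivWithinAt).add (hF hx)
  -- Goursat consequences
  have hq2 : ∀ x ∈ Set.Icc (-b) b,
      (Kx x x + Kt x x) - (Kx x (-x) - Kt x (-x)) = (1/2 : ℂ) * q x := by
    intro x hx
    have hdA : HasDerivWithinAt (fun x' => K x' x' - K x' (-x'))
        ((Kx x x + Kt x x) - (Kx x (-x) - Kt x (-x))) (Set.Icc (-b) b) x :=
      (hdiagK x hx).sub (hadiagK x hx)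
    have heq : Set.EqOn (fun x' => K x' x' - K x' (-x'))
        (fun x' => (1/2 : ℂ) * ∫ s in (0:ℝ)..x', q s) (Set.Icc (-b) b) := by
      intro y hy
      simp only
      rw [hK.2.2.1 y hy, hK.2.2.2 y hy]
      ring
    have hdB : HasDerivWithinAt (fun x' => (1/2 : ℂ) * ∫ s in (0:ℝ)..x', q s)
        ((1/2 : ℂ) * q x) (Set.Icc (-b) b) x :=
      (primitive_hasDerivWithin hb hqc hx).const_mul _
    calc (Kx x x + Kt x x) - (Kx x (-x) - Kt x (-x))
        = derivWithin (fun x' => K x' x' - K x' (-x')) (Set.Icc (-b) b) x :=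
          (hdA.derivWithin (hUD x hx)).symm
      _ = derivWithin (fun x' => (1/2 : ℂ) * ∫ s in (0:ℝ)..x', q s) (Set.Icc (-b) b) x :=
          derivWithin_congr heq (heq hx)
      _ = (1/2 : ℂ) * q x := hdB.derivWithin (hUD x hx)
  -- integration by parts
  have hIBP : ∀ x ∈ Set.Icc (-b) b,
      (∫ t in (0:ℝ)..x,
        ((Kxx x t - Kxx x (-t)) * (Complex.sin (ω * ↑t) / ω)
          - q x * ((K x t - K x (-t)) * (Complex.sin (ω * ↑t) / ω))
          + ω ^ 2 * ((K x t - K x (-t)) * (Complex.sin (ω * ↑t) / ω))))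
      = (Kt x x + Kt x (-x)) * (Complex.sin (ω * ↑x) / ω)
        - (K x x - K x (-x)) * Complex.cos (ω * ↑x) := by
    intro x hx
    have husub := Set.uIcc_subset_Icc h0I hx
    have hcont : ContinuousOn (fun t => (Kt x t + Kt x (-t)) * (Complex.sin (ω * ↑t) / ω)
        - (K x t - K x (-t)) * Complex.cos (ω * ↑t)) (Set.uIcc 0 x) :=
      ((((cslice Kt hKtC x hx).add (cneg _ (cslice Kt hKtC x hx))).mul husin.continuousOn).sub
        (((cslice K hKC x hx).sub (cneg _ (cslice K hKC x hx))).mul hucos.continuousOn)).mono husub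
    have hderiv : ∀ t ∈ Set.Ioo (min 0 x) (max 0 x),
        HasDerivWithinAt (fun t => (Kt x t + Kt x (-t)) * (Complex.sin (ω * ↑t) / ω)
          - (K x t - K x (-t)) * Complex.cos (ω * ↑t))
          ((Kxx x t - Kxx x (-t)) * (Complex.sin (ω * ↑t) / ω)
            - q x * ((K x t - K x (-t)) * (Complex.sin (ω * ↑t) / ω))
            + ω ^ 2 * ((K x t - K x (-t)) * (Complex.sin (ω * ↑t) / ω))) (Set.Ioi t) t := by
      intro t ht
      have htI : t ∈ Set.Icc (-b) b := husub (Set.Ioo_subset_Icc_self ht)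
      have ht1 : -b < t := lt_of_le_of_lt (le_min h0I.1 hx.1) ht.1
      have ht2 : t < b := lt_of_lt_of_le ht.2 (max_le h0I.2 hx.2)
      have hmem : Set.Icc (-b) b ∈ nhds t := Icc_mem_nhds ht1 ht2
      have hmemn : Set.Icc (-b) b ∈ nhds (-t) := Icc_mem_nhds (by linarith) (by linarith)
      have hKtt1 : HasDerivAt (fun t' => Kt x t') (Ktt x t) t :=
        (hKtt x hx t htI).hasDerivAt hmem
      have hKtt2 : HasDerivAt (fun t' => Kt x (-t')) (-Ktt x (-t)) t := by
        have h1 := (hKtt x hx (-t) (hnm htI)).hasDerivAt hmemn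
        have h2 : HasDerivAt (fun t' : ℝ => -t') (-1) t := (hasDerivAt_id t).neg
        have h3 : HasDerivAt ((fun t' => Kt x t') ∘ (fun t' : ℝ => -t')) ((-1 : ℝ) • Ktt x (-t)) t :=
          HasDerivAt.scomp t h1 h2
        simpa [Function.comp_def, neg_smul, one_smul] using h3
      have hK1 : HasDerivAt (fun t' => K x t') (Kt x t) t :=
        (hKt x hx t htI).hasDerivAt hmem
      have hK2' : HasDerivAt (fun t' => K x (-t')) (-Kt x (-t)) t := by
        have h1 := (hKt x hx (-t) (hnm htI)).hasDerivAt hmemn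
        have h2 : HasDerivAt (fun t' : ℝ => -t') (-1) t := (hasDerivAt_id t).neg
        have h3 : HasDerivAt ((fun t' => K x t') ∘ (fun t' : ℝ => -t')) ((-1 : ℝ) • Kt x (-t)) t :=
          HasDerivAt.scomp t h1 h2
        simpa [Function.comp_def, neg_smul, one_smul] using h3
      have hraw := ((hKtt1.add hKtt2).mul (sin_hasDerivAt ω hω t)).sub
        ((hK1.sub hK2').mul (cos_hasDerivAt ω t))
      have : HasDerivAt (fun t => (Kt x t + Kt x (-t)) * (Complex.sin (ω * ↑t) / ω)
          - (K x t - K x (-t)) * Complex.cos (ω * ↑t))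
          ((Kxx x t - Kxx x (-t)) * (Complex.sin (ω * ↑t) / ω)
            - q x * ((K x t - K x (-t)) * (Complex.sin (ω * ↑t) / ω))
            + ω ^ 2 * ((K x t - K x (-t)) * (Complex.sin (ω * ↑t) / ω))) t := by
        refine hraw.congr_deriv ?_
        simp only [Pi.add_apply, Pi.sub_apply]
        rw [← hPDE' x hx t htI, ← hPDE' x hx (-t) (hnm htI)]
        field_simp
        ring
      exact this.hasDerivWithinAt
    have hint : IntervalIntegrable (fun t =>
        (Kxx x t - Kxx x (-t)) * (Complex.sin (ω * ↑t) / ω)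
          - q x * ((K x t - K x (-t)) * (Complex.sin (ω * ↑t) / ω))
          + ω ^ 2 * ((K x t - K x (-t)) * (Complex.sin (ω * ↑t) / ω))) volume 0 x := by
      apply ContinuousOn.intervalIntegrable
      apply ContinuousOn.mono _ husub
      exact ((((cslice Kxx hKxxC x hx).sub (cneg _ (cslice Kxx hKxxC x hx))).mul
          husin.continuousOn).sub
        (continuousOn_const.mul (((cslice K hKC x hx).sub (cneg _ (cslice K hKC x hx))).mul
          husin.continuousOn))).add
        (continuousOn_const.mul (((cslice K hKC x hx).sub (cneg _ (cslice K hKC x hx))).mul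
          husin.continuousOn))
    have hftc := intervalIntegral.integral_eq_sub_of_hasDeriv_right hcont hderiv hint
    rw [hftc]
    norm_num
  -- split the integral of Kxx-term
  have hsplit : ∀ x ∈ Set.Icc (-b) b,
      (∫ t in (0:ℝ)..x, (Kxx x t - Kxx x (-t)) * (Complex.sin (ω * ↑t) / ω))
      = q x * (∫ t in (0:ℝ)..x, (K x t - K x (-t)) * (Complex.sin (ω * ↑t) / ω))
        - ω ^ 2 * (∫ t in (0:ℝ)..x, (K x t - K x (-t)) * (Complex.sin (ω * ↑t) / ω))
        + ((Kt x x + Kt x (-x)) * (Complex.sin (ω * ↑x) / ω)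
          - (K x x - K x (-x)) * Complex.cos (ω * ↑x)) := by
    intro x hx
    have husub := Set.uIcc_subset_Icc h0I hx
    have iAU : IntervalIntegrable (fun t => (K x t - K x (-t)) * (Complex.sin (ω * ↑t) / ω))
        volume 0 x :=
      ((((cslice K hKC x hx).sub (cneg _ (cslice K hKC x hx))).mul
        husin.continuousOn).mono husub).intervalIntegrable
    have iXU : IntervalIntegrable (fun t => (Kxx x t - Kxx x (-t)) * (Complex.sin (ω * ↑t) / ω))
        volume 0 x :=
      ((((cslice Kxx hKxxC x hx).sub (cneg _ (cslice Kxx hKxxC x hx))).mul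
        husin.continuousOn).mono husub).intervalIntegrable
    have e := hIBP x hx
    rw [intervalIntegral.integral_add (iXU.sub (iAU.const_mul (q x)))
        (iAU.const_mul (ω ^ 2)),
      intervalIntegral.integral_sub iXU (iAU.const_mul (q x)),
      intervalIntegral.integral_const_mul, intervalIntegral.integral_const_mul] at e
    linear_combination e
  have hs2 : ∀ x ∈ Set.Icc (-b) b,
      HasDerivWithinAt S1 (q x * SS x - ω ^ 2 * SS x) (Set.Icc (-b) b) x := by
    intro x hx
    have hmid : HasDerivWithinAt
        (fun x' => (K x' x' - K x' (-x')) * (Complex.sin (ω * ↑x') / ω))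
        (((Kx x x + Kt x x) - (Kx x (-x) - Kt x (-x))) * (Complex.sin (ω * ↑x) / ω)
          + (K x x - K x (-x)) * Complex.cos (ω * ↑x)) (Set.Icc (-b) b) x :=
      ((hdiagK x hx).sub (hadiagK x hx)).mul (sin_hasDerivAt ω hω x).hasDerivWithinAt
    have htot := (cos_hasDerivAt ω x).hasDerivWithinAt.add (hmid.add (hF1 hx))
    have heq : q x * SS x - ω ^ 2 * SS x
        = -(Complex.sin (ω * ↑x)) * ω
          + ((((Kx x x + Kt x x) - (Kx x (-x) - Kt x (-x))) * (Complex.sin (ω * ↑x) / ω)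
              + (K x x - K x (-x)) * Complex.cos (ω * ↑x))
            + ((Kx x x - Kx x (-x)) * (Complex.sin (ω * ↑x) / ω)
              + ∫ t in (0:ℝ)..x, (Kxx x t - Kxx x (-t)) * (Complex.sin (ω * ↑t) / ω))) := by
      show q x * (Complex.sin (ω * ↑x) / ω
          + ∫ t in (0:ℝ)..x, (K x t - K x (-t)) * (Complex.sin (ω * ↑t) / ω))
        - ω ^ 2 * (Complex.sin (ω * ↑x) / ω
          + ∫ t in (0:ℝ)..x, (K x t - K x (-t)) * (Complex.sin (ω * ↑t) / ω)) = _
      rw [hsplit x hx,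
        show -(Complex.sin (ω * ↑x)) * ω = -(ω ^ 2) * (Complex.sin (ω * ↑x) / ω) by
          field_simp]
      linear_combination (-2 * (Complex.sin (ω * ↑x) / ω)) * hq2 x hx
    exact heq ▸ htot
  have hSScont : ContinuousOn SS (Set.Icc (-b) b) :=
    fun y hy => (hs1 y hy).continuousWithinAt
  have hd1eq : Set.EqOn (derivWithin SS (Set.Icc (-b) b)) S1 (Set.Icc (-b) b) :=
    fun y hy => (hs1 y hy).derivWithin (hUD y hy)
  refine ⟨?_, ?_, ?_, ?_⟩
  · -- ContDiffOn 2
    rw [show (2 : WithTop ℕ∞) = 1 + 1 by norm_num, contDiffOn_succ_iff_derivWithin hUD]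
    refine ⟨fun y hy => (hs1 y hy).differentiableWithinAt, by simp, ?_⟩
    apply ContDiffOn.congr _ hd1eq
    rw [show (1 : WithTop ℕ∞) = 0 + 1 by norm_num, contDiffOn_succ_iff_derivWithin hUD]
    refine ⟨fun y hy => (hs2 y hy).differentiableWithinAt, by simp, ?_⟩
    rw [contDiffOn_zero]
    apply ContinuousOn.congr _
      (fun y hy => (hs2 y hy).derivWithin (hUD y hy) :
        Set.EqOn (derivWithin S1 (Set.Icc (-b) b))
          (fun y => q y * SS y - ω ^ 2 * SS y) (Set.Icc (-b) b))
    exact (hqc.mul hSScont).sub (continuousOn_const.mul hSScont)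
  · -- the ODE
    intro x hx
    show derivWithin (derivWithin SS (Set.Icc (-b) b)) (Set.Icc (-b) b) x
      - q x * SS x + ω ^ 2 * SS x = 0
    rw [derivWithin_congr hd1eq (hd1eq hx), (hs2 x hx).derivWithin (hUD x hx)]
    ring
  · -- value at 0
    simp
  · -- derivative at 0
    show derivWithin SS (Set.Icc (-b) b) 0 = 1
    rw [hd1eq h0I, hS1def]
    simp
end

section
/- For every λ ∈ ℂ the series y₁ := Σ_{k=0}^∞ (λᵏ/(2k)!)·φ_{2k} and y₂ := Σ_{k=0}^∞ (λᵏ/(2k+1)!)·φ_{2k+1} converge uniformly on [a,b]; the sum functions y₁ and y₂ belong to C²(a,b) ∩ C¹[a,b], satisfy y'' − q·y = λ·y on (a,b), and obey the initial conditions y₁(x₀) = f(x₀), y₁'(x₀) = f'(x₀), y₂(x₀) = 0, y₂'(x₀) = 1/f(x₀). -/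
open Set MeasureTheory Filter intervalIntegral Topology
open scoped Interval

/-- The recursive integrals `X⁽⁰⁾ ≡ 1`, `X⁽ⁿ⁾(x) = n ∫_{x₀}^x X⁽ⁿ⁻¹⁾(s) (f(s)²)^((−1)ⁿ) ds`. -/
noncomputable def Xrec (x₀ : ℝ) (f : ℝ → ℂ) : ℕ → ℝ → ℂ
  | 0 => fun _ => 1
  | n + 1 => fun x => ((n : ℂ) + 1) * ∫ s in x₀..x, Xrec x₀ f n s * (f s ^ 2) ^ ((-1 : ℤ) ^ (n + 1))

/-- The recursive integrals `X̃⁽⁰⁾ ≡ 1`, `X̃⁽ⁿ⁾(x) = n ∫_{x₀}^x X̃⁽ⁿ⁻¹⁾(s) (f(s)²)^((−1)^(n−1)) ds`. -/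
noncomputable def Xtrec (x₀ : ℝ) (f : ℝ → ℂ) : ℕ → ℝ → ℂ
  | 0 => fun _ => 1
  | n + 1 => fun x => ((n : ℂ) + 1) * ∫ s in x₀..x, Xtrec x₀ f n s * (f s ^ 2) ^ ((-1 : ℤ) ^ n)

/-- `φ_k = f·X⁽ᵏ⁾` for odd `k`, `φ_k = f·X̃⁽ᵏ⁾` for even `k`. -/
noncomputable def phiF (x₀ : ℝ) (f : ℝ → ℂ) (k : ℕ) (x : ℝ) : ℂ :=
  if Odd k then f x * Xrec x₀ f k x else f x * Xtrec x₀ f k x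

/-- `ψ_k = X̃⁽ᵏ⁾/f` for odd `k`, `ψ_k = X⁽ᵏ⁾/f` for even `k`. -/
noncomputable def psiF (x₀ : ℝ) (f : ℝ → ℂ) (k : ℕ) (x : ℝ) : ℂ :=
  if Odd k then Xtrec x₀ f k x / f x else Xrec x₀ f k x / f x

/-- The SPPS solution `y₁ = Σ_{k=0}^∞ (λᵏ/(2k)!) φ_{2k}`. -/
noncomputable def sppsY1 (x₀ : ℝ) (f : ℝ → ℂ) (lam : ℂ) (x : ℝ) : ℂ :=
  ∑' k : ℕ, lam ^ k / (Nat.factorial (2 * k) : ℂ) * phiF x₀ f (2 * k) x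

/-- The SPPS solution `y₂ = Σ_{k=0}^∞ (λᵏ/(2k+1)!) φ_{2k+1}`. -/
noncomputable def sppsY2 (x₀ : ℝ) (f : ℝ → ℂ) (lam : ℂ) (x : ℝ) : ℂ :=
  ∑' k : ℕ, lam ^ k / (Nat.factorial (2 * k + 1) : ℂ) * phiF x₀ f (2 * k + 1) x

/-- selector: the `X`-family used in `φ_k`. -/
noncomputable def Asel (x₀ : ℝ) (f : ℝ → ℂ) (j : ℕ) (x : ℝ) : ℂ :=
  if Odd j then Xrec x₀ f j x else Xtrec x₀ f j x

/-- selector: the other family. -/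
noncomputable def Bsel (x₀ : ℝ) (f : ℝ → ℂ) (j : ℕ) (x : ℝ) : ℂ :=
  if Odd j then Xtrec x₀ f j x else Xrec x₀ f j x

/-- formal first derivative of `φ_j`. -/
noncomputable def DPhi (x₀ : ℝ) (f f' : ℝ → ℂ) (j : ℕ) (x : ℝ) : ℂ :=
  f' x * Asel x₀ f j x + (j : ℂ) * (Bsel x₀ f (j - 1) x * (f x)⁻¹)

section helpers
variable {a b x₀ : ℝ}

lemma auxIntble {h : ℝ → ℂ} (hc : ContinuousOn h (Icc a b)) (hx₀ : x₀ ∈ Icc a b)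
    {x : ℝ} (hx : x ∈ Icc a b) : IntervalIntegrable h volume x₀ x :=
  (hc.mono (uIcc_subset_Icc hx₀ hx)).intervalIntegrable

lemma primitive_hasDerivWithinAt (hab : a < b) {h : ℝ → ℂ} (hc : ContinuousOn h (Icc a b))
    (hx₀ : x₀ ∈ Icc a b) {x : ℝ} (hx : x ∈ Icc a b) :
    HasDerivWithinAt (fun u => ∫ s in x₀..u, h s) (h x) (Icc a b) x := by
  rcases eq_or_lt_of_le hx.1 with h1 | h1
  · -- x = a
    have hmem : Icc a b ∈ 𝓝[>] x := by
      rw [← h1]; exact Icc_mem_nhdsGT_of_mem ⟨le_rfl, hab⟩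
    have hmeas : StronglyMeasurableAtFilter h (𝓝[>] x) :=
      ⟨Icc a b, hmem, hc.aestronglyMeasurable measurableSet_Icc⟩
    have hcw : ContinuousWithinAt h (Ioi x) x :=
      (hc.continuousWithinAt hx).mono_of_mem_nhdsWithin hmem
    have := integral_hasDerivWithinAt_right (s := Ici x) (t := Ioi x) (auxIntble hc hx₀ hx) hmeas hcw
    exact this.mono (by rw [← h1]; exact Icc_subset_Ici_self)
  rcases eq_or_lt_of_le hx.2 with h2 | h2
  · -- x = b
    have hmem : Icc a b ∈ 𝓝[≤] x := by
      rw [h2]; exact Icc_mem_nhdsLE_of_mem ⟨hab, le_rfl⟩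
    have hmeas : StronglyMeasurableAtFilter h (𝓝[≤] x) :=
      ⟨Icc a b, hmem, hc.aestronglyMeasurable measurableSet_Icc⟩
    have hcw : ContinuousWithinAt h (Iic x) x :=
      (hc.continuousWithinAt hx).mono_of_mem_nhdsWithin hmem
    have := integral_hasDerivWithinAt_right (s := Iic x) (t := Iic x) (auxIntble hc hx₀ hx) hmeas hcw
    exact this.mono (by rw [h2]; exact Icc_subset_Iic_self)
  · -- interior
    have hmem : Icc a b ∈ 𝓝 x := Icc_mem_nhds h1 h2
    have hmeas : StronglyMeasurableAtFilter h (𝓝 x) :=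
      ⟨Icc a b, hmem, hc.aestronglyMeasurable measurableSet_Icc⟩
    have hca : ContinuousAt h x := (hc.continuousWithinAt hx).continuousAt hmem
    exact (integral_hasDerivAt_right (auxIntble hc hx₀ hx) hmeas hca).hasDerivWithinAt

lemma primitive_norm_le {h : ℝ → ℂ} (hc : ContinuousOn h (Icc a b)) (hx₀ : x₀ ∈ Icc a b)
    {x : ℝ} (hx : x ∈ Icc a b) {B : ℝ} (hB : 0 ≤ B) {n : ℕ}
    (hbd : ∀ s ∈ Icc a b, ‖h s‖ ≤ B * |s - x₀| ^ n) :
    ‖∫ s in x₀..x, h s‖ ≤ B * |x - x₀| ^ (n + 1) / (n + 1) := by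
  have hsub : Ι x₀ x ⊆ Icc a b := uIoc_subset_uIcc.trans (uIcc_subset_Icc hx₀ hx)
  have hint1 : IntegrableOn (fun s => ‖h s‖) (Ι x₀ x) volume := by
    rw [← intervalIntegrable_iff]
    exact (auxIntble hc hx₀ hx).norm
  have hint2 : IntegrableOn (fun s => B * |s - x₀| ^ n) (Ι x₀ x) volume := by
    rw [← intervalIntegrable_iff]
    exact (Continuous.intervalIntegrable (by continuity) _ _)
  calc ‖∫ s in x₀..x, h s‖ ≤ ∫ s in Ι x₀ x, ‖h s‖ := norm_integral_le_integral_norm_uIoc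
    _ ≤ ∫ s in Ι x₀ x, B * |s - x₀| ^ n :=
        setIntegral_mono_on hint1 hint2 measurableSet_uIoc (fun s hs => hbd s (hsub hs))
    _ = B * ∫ s in Ι x₀ x, |s - x₀| ^ n := by rw [MeasureTheory.integral_const_mul]
    _ = B * (|x - x₀| ^ (n + 1) / (n + 1)) := by rw [integral_pow_abs_sub_uIoc]
    _ = B * |x - x₀| ^ (n + 1) / (n + 1) := by ring

end helpers

section recursion
variable {a b x₀ : ℝ}

lemma Xgen_props (hab : a < b) (hx₀ : x₀ ∈ Icc a b)
    (W : ℕ → ℝ → ℂ) (hWc : ∀ n, ContinuousOn (W n) (Icc a b))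
    (C : ℝ) (hC0 : 0 ≤ C) (hW : ∀ n, ∀ s ∈ Icc a b, ‖W n s‖ ≤ C)
    (G : ℕ → ℝ → ℂ) (hG0 : ∀ x, G 0 x = 1)
    (hGrec : ∀ n x, G (n + 1) x = ((n : ℂ) + 1) * ∫ s in x₀..x, G n s * W n s) :
    ∀ n, ContinuousOn (G n) (Icc a b) ∧ (∀ x ∈ Icc a b, ‖G n x‖ ≤ (C * |x - x₀|) ^ n) ∧
      (∀ x ∈ Icc a b,
        HasDerivWithinAt (G (n + 1)) (((n : ℂ) + 1) * (G n x * W n x)) (Icc a b) x) := by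
  intro n
  induction n with
  | zero =>
    refine ⟨?_, ?_, ?_⟩
    · exact (continuousOn_const (c := (1:ℂ))).congr (fun x _ => hG0 x)
    · intro x _; rw [hG0 x]; simp
    · intro x hx
      have hcc : ContinuousOn (fun s => G 0 s * W 0 s) (Icc a b) :=
        ((continuousOn_const (c := (1:ℂ))).congr (fun x _ => hG0 x)).mul (hWc 0)
      have h1 : G 1 = fun x => ((0 : ℂ) + 1) * ∫ s in x₀..x, G 0 s * W 0 s :=
        funext (fun x => by simpa using hGrec 0 x)
      rw [h1]
      simpa using (primitive_hasDerivWithinAt hab hcc hx₀ hx).const_mul ((0:ℂ) + 1)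
  | succ n ih =>
    obtain ⟨hcn, hbn, hdn⟩ := ih
    have hcs : ContinuousOn (G (n + 1)) (Icc a b) :=
      fun x hx => ((hdn x hx).continuousWithinAt)
    have hcc : ContinuousOn (fun s => G (n + 1) s * W (n + 1) s) (Icc a b) :=
      hcs.mul (hWc (n + 1))
    refine ⟨hcs, ?_, ?_⟩
    · intro x hx
      rw [hGrec n x]
      have hbd : ∀ s ∈ Icc a b, ‖G n s * W n s‖ ≤ C ^ (n + 1) * |s - x₀| ^ n := by
        intro s hs
        rw [norm_mul]
        calc ‖G n s‖ * ‖W n s‖ ≤ (C * |s - x₀|) ^ n * C := by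
              apply mul_le_mul (hbn s hs) (hW n s hs) (norm_nonneg _)
              positivity
          _ = C ^ (n + 1) * |s - x₀| ^ n := by rw [mul_pow]; ring
      have hccn : ContinuousOn (fun s => G n s * W n s) (Icc a b) := hcn.mul (hWc n)
      have := primitive_norm_le hccn hx₀ hx (by positivity) hbd
      rw [norm_mul]
      have hnn : ‖(n : ℂ) + 1‖ = (n : ℝ) + 1 := by
        simpa using Complex.norm_natCast (n + 1)
      rw [hnn]
      calc ((n : ℝ) + 1) * ‖∫ s in x₀..x, G n s * W n s‖
          ≤ ((n : ℝ) + 1) * (C ^ (n + 1) * |x - x₀| ^ (n + 1) / (n + 1)) := by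
            apply mul_le_mul_of_nonneg_left _ (by positivity)
            simpa using this
        _ = (C * |x - x₀|) ^ (n + 1) := by
            rw [mul_pow]; field_simp
    · intro x hx
      have h1 : G (n + 2) = fun x => (((n + 1 : ℕ) : ℂ) + 1) * ∫ s in x₀..x, G (n + 1) s * W (n + 1) s :=
        funext (fun x => hGrec (n + 1) x)
      rw [h1]
      exact (primitive_hasDerivWithinAt hab hcc hx₀ hx).const_mul _

end recursion

section selectors
variable {a b x₀ : ℝ} {f : ℝ → ℂ}

lemma zpow_even {z : ℂ} {n : ℕ} (hn : Even n) : (z ^ 2) ^ ((-1 : ℤ) ^ n) = z ^ 2 := by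
  rw [hn.neg_one_pow, zpow_one]

lemma zpow_odd {z : ℂ} {n : ℕ} (hn : Odd n) : (z ^ 2) ^ ((-1 : ℤ) ^ n) = (z ^ 2)⁻¹ := by
  rw [hn.neg_one_pow, zpow_neg_one]

lemma phiF_eq (j : ℕ) (x : ℝ) : phiF x₀ f j x = f x * Asel x₀ f j x := by
  by_cases h : Odd j <;> simp [phiF, Asel, h]

lemma sel_props (hab : a < b) (hx₀ : x₀ ∈ Icc a b)
    (hfc : ContinuousOn f (Icc a b)) (hfne : ∀ x ∈ Icc a b, f x ≠ 0)
    (C : ℝ) (hC0 : 0 ≤ C) (hC2 : ∀ s ∈ Icc a b, ‖f s ^ 2‖ ≤ C)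
    (hC2' : ∀ s ∈ Icc a b, ‖(f s ^ 2)⁻¹‖ ≤ C) :
    ∀ j, ContinuousOn (Asel x₀ f j) (Icc a b) ∧ ContinuousOn (Bsel x₀ f j) (Icc a b) ∧
      (∀ x ∈ Icc a b, ‖Asel x₀ f j x‖ ≤ (C * |x - x₀|) ^ j ∧
        ‖Bsel x₀ f j x‖ ≤ (C * |x - x₀|) ^ j) ∧
      (∀ x ∈ Icc a b,
        HasDerivWithinAt (Asel x₀ f (j + 1))
          (((j : ℂ) + 1) * (Bsel x₀ f j x * (f x ^ 2)⁻¹)) (Icc a b) x ∧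
        HasDerivWithinAt (Bsel x₀ f (j + 1))
          (((j : ℂ) + 1) * (Asel x₀ f j x * f x ^ 2)) (Icc a b) x) := by
  have hc2 : ContinuousOn (fun s => f s ^ 2) (Icc a b) := hfc.pow 2
  have hc2' : ContinuousOn (fun s => (f s ^ 2)⁻¹) (Icc a b) :=
    hc2.inv₀ (fun s hs => pow_ne_zero 2 (hfne s hs))
  have hWc : ∀ (e : ℕ → ℕ) (n : ℕ),
      ContinuousOn (fun s => (f s ^ 2) ^ ((-1 : ℤ) ^ (e n))) (Icc a b) := by
    intro e n
    rcases Nat.even_or_odd (e n) with he | he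
    · exact hc2.congr (fun s _ => zpow_even he)
    · exact hc2'.congr (fun s _ => zpow_odd he)
  have hWb : ∀ (e : ℕ → ℕ) (n : ℕ), ∀ s ∈ Icc a b,
      ‖(f s ^ 2) ^ ((-1 : ℤ) ^ (e n))‖ ≤ C := by
    intro e n s hs
    rcases Nat.even_or_odd (e n) with he | he
    · rw [zpow_even he]; exact hC2 s hs
    · rw [zpow_odd he]; exact hC2' s hs
  have hXr := Xgen_props hab hx₀ (fun n s => (f s ^ 2) ^ ((-1 : ℤ) ^ (n + 1)))
    (hWc (· + 1)) C hC0 (hWb (· + 1)) (Xrec x₀ f) (fun _ => rfl) (fun _ _ => rfl)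
  have hXt := Xgen_props hab hx₀ (fun n s => (f s ^ 2) ^ ((-1 : ℤ) ^ n))
    (hWc id) C hC0 (hWb id) (Xtrec x₀ f) (fun _ => rfl) (fun _ _ => rfl)
  intro j
  rcases Nat.even_or_odd j with hj | hj
  · have hjo : ¬ Odd j := Nat.not_odd_iff_even.mpr hj
    have hAe : Asel x₀ f j = Xtrec x₀ f j := funext fun x => if_neg hjo
    have hBe : Bsel x₀ f j = Xrec x₀ f j := funext fun x => if_neg hjo
    have hj1 : Odd (j + 1) := Even.add_one hj
    have hA1 : Asel x₀ f (j + 1) = Xrec x₀ f (j + 1) := funext fun x => if_pos hj1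
    have hB1 : Bsel x₀ f (j + 1) = Xtrec x₀ f (j + 1) := funext fun x => if_pos hj1
    refine ⟨hAe ▸ (hXt j).1, hBe ▸ (hXr j).1, fun x hx => ⟨hAe ▸ (hXt j).2.1 x hx,
      hBe ▸ (hXr j).2.1 x hx⟩, fun x hx => ⟨?_, ?_⟩⟩
    · rw [hA1, hBe]
      have := (hXr j).2.2 x hx
      simpa only [zpow_odd hj1] using this
    · rw [hB1, hAe]
      have := (hXt j).2.2 x hx
      simpa only [zpow_even hj] using this
  · have hAe : Asel x₀ f j = Xrec x₀ f j := funext fun x => if_pos hj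
    have hBe : Bsel x₀ f j = Xtrec x₀ f j := funext fun x => if_pos hj
    have hj1 : ¬ Odd (j + 1) := Nat.not_odd_iff_even.mpr hj.add_one
    have hA1 : Asel x₀ f (j + 1) = Xtrec x₀ f (j + 1) := funext fun x => if_neg hj1
    have hB1 : Bsel x₀ f (j + 1) = Xrec x₀ f (j + 1) := funext fun x => if_neg hj1
    refine ⟨hAe ▸ (hXr j).1, hBe ▸ (hXt j).1, fun x hx => ⟨hAe ▸ (hXr j).2.1 x hx,
      hBe ▸ (hXt j).2.1 x hx⟩, fun x hx => ⟨?_, ?_⟩⟩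
    · rw [hA1, hBe]
      have := (hXt j).2.2 x hx
      simpa only [zpow_odd hj] using this
    · rw [hB1, hAe]
      have := (hXr j).2.2 x hx
      simpa only [zpow_even (Nat.not_odd_iff_even.mp hj1)] using this

end selectors

section phi
variable {a b x₀ : ℝ} {f f' q : ℝ → ℂ}

lemma Asel_zero : Asel x₀ f 0 = fun _ => (1 : ℂ) := funext fun _ => if_neg (by decide)
lemma Bsel_zero : Bsel x₀ f 0 = fun _ => (1 : ℂ) := funext fun _ => if_neg (by decide)

lemma Xrec_base : ∀ n, Xrec x₀ f (n + 1) x₀ = 0 := fun n => by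
  show ((n : ℂ) + 1) * ∫ s in x₀..x₀, _ = 0
  rw [intervalIntegral.integral_same, mul_zero]

lemma Xtrec_base : ∀ n, Xtrec x₀ f (n + 1) x₀ = 0 := fun n => by
  show ((n : ℂ) + 1) * ∫ s in x₀..x₀, _ = 0
  rw [intervalIntegral.integral_same, mul_zero]

lemma Asel_base (n : ℕ) : Asel x₀ f (n + 1) x₀ = 0 := by
  unfold Asel; split_ifs <;> [exact Xrec_base n; exact Xtrec_base n]

lemma Bsel_base (n : ℕ) : Bsel x₀ f (n + 1) x₀ = 0 := by
  unfold Bsel; split_ifs <;> [exact Xtrec_base n; exact Xrec_base n]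

lemma phi_hasDerivWithinAt (hab : a < b) (hx₀ : x₀ ∈ Icc a b)
    (hfc : ContinuousOn f (Icc a b)) (hfne : ∀ x ∈ Icc a b, f x ≠ 0)
    (C : ℝ) (hC0 : 0 ≤ C) (hC2 : ∀ s ∈ Icc a b, ‖f s ^ 2‖ ≤ C)
    (hC2' : ∀ s ∈ Icc a b, ‖(f s ^ 2)⁻¹‖ ≤ C)
    (hfd : ∀ x ∈ Icc a b, HasDerivWithinAt f (f' x) (Icc a b) x) :
    ∀ j, ∀ x ∈ Icc a b, HasDerivWithinAt (phiF x₀ f j) (DPhi x₀ f f' j x) (Icc a b) x := by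
  have hsel := sel_props hab hx₀ hfc hfne C hC0 hC2 hC2'
  intro j x hx
  have hphi : phiF x₀ f j = fun y => f y * Asel x₀ f j y := funext (phiF_eq j)
  rw [hphi]
  cases j with
  | zero =>
    simp only [Asel_zero]
    convert (hfd x hx).mul_const (1 : ℂ) using 1
    · rfl
    simp [DPhi, Asel_zero, Bsel_zero]
  | succ m =>
    have h := (hfd x hx).mul ((hsel m).2.2.2 x hx).1
    convert h using 1
    · rfl
    · rfl
    simp only [DPhi, Nat.add_sub_cancel]
    push_cast
    field_simp [hfne x hx]

lemma phi_continuousOn (hab : a < b) (hx₀ : x₀ ∈ Icc a b)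
    (hfc : ContinuousOn f (Icc a b)) (hfne : ∀ x ∈ Icc a b, f x ≠ 0)
    (C : ℝ) (hC0 : 0 ≤ C) (hC2 : ∀ s ∈ Icc a b, ‖f s ^ 2‖ ≤ C)
    (hC2' : ∀ s ∈ Icc a b, ‖(f s ^ 2)⁻¹‖ ≤ C) (j : ℕ) :
    ContinuousOn (phiF x₀ f j) (Icc a b) :=
  (hfc.mul ((sel_props hab hx₀ hfc hfne C hC0 hC2 hC2' j).1)).congr
    (fun x _ => phiF_eq j x)

lemma DPhi_continuousOn (hab : a < b) (hx₀ : x₀ ∈ Icc a b)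
    (hfc : ContinuousOn f (Icc a b)) (hfne : ∀ x ∈ Icc a b, f x ≠ 0)
    (C : ℝ) (hC0 : 0 ≤ C) (hC2 : ∀ s ∈ Icc a b, ‖f s ^ 2‖ ≤ C)
    (hC2' : ∀ s ∈ Icc a b, ‖(f s ^ 2)⁻¹‖ ≤ C)
    (hf'c : ContinuousOn f' (Icc a b)) (j : ℕ) :
    ContinuousOn (DPhi x₀ f f' j) (Icc a b) := by
  have hsel := sel_props hab hx₀ hfc hfne C hC0 hC2 hC2'
  exact (hf'c.mul (hsel j).1).add
    (continuousOn_const.mul (((hsel (j - 1)).2.1).mul (hfc.inv₀ hfne)))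

lemma DPhi_hasDerivAt (hab : a < b) (hx₀ : x₀ ∈ Icc a b)
    (hfc : ContinuousOn f (Icc a b)) (hfne : ∀ x ∈ Icc a b, f x ≠ 0)
    (C : ℝ) (hC0 : 0 ≤ C) (hC2 : ∀ s ∈ Icc a b, ‖f s ^ 2‖ ≤ C)
    (hC2' : ∀ s ∈ Icc a b, ‖(f s ^ 2)⁻¹‖ ≤ C)
    (hfd : ∀ x ∈ Icc a b, HasDerivWithinAt f (f' x) (Icc a b) x)
    (hf'' : ∀ x ∈ Ioo a b, HasDerivAt f' (q x * f x) x) :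
    ∀ j, ∀ x ∈ Ioo a b, HasDerivAt (DPhi x₀ f f' j)
      (q x * phiF x₀ f j x + (j : ℂ) * ((j : ℂ) - 1) * phiF x₀ f (j - 2) x) x := by
  have hsel := sel_props hab hx₀ hfc hfne C hC0 hC2 hC2'
  intro j x hx
  have hxI : x ∈ Icc a b := Ioo_subset_Icc_self hx
  have hmem : Icc a b ∈ 𝓝 x := Icc_mem_nhds hx.1 hx.2
  have hfx : f x ≠ 0 := hfne x hxI
  have hfdx : HasDerivAt f (f' x) x := (hfd x hxI).hasDerivAt hmem
  have hinv : HasDerivAt (fun y => (f y)⁻¹) (-(f' x) / f x ^ 2) x := by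
    have h := (hasDerivAt_const x (1 : ℂ)).div hfdx hfx
    simp only [Pi.div_def, one_div] at h
    convert h using 1
    · rfl
    ring
  have hA : ∀ m, HasDerivAt (Asel x₀ f (m + 1))
      (((m : ℂ) + 1) * (Bsel x₀ f m x * (f x ^ 2)⁻¹)) x :=
    fun m => (((hsel m).2.2.2 x hxI).1).hasDerivAt hmem
  have hB : ∀ m, HasDerivAt (Bsel x₀ f (m + 1))
      (((m : ℂ) + 1) * (Asel x₀ f m x * f x ^ 2)) x :=
    fun m => (((hsel m).2.2.2 x hxI).2).hasDerivAt hmem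
  match j with
  | 0 =>
    have h0 : DPhi x₀ f f' 0 = fun y => f' y := by
      funext y; simp [DPhi, Asel_zero]
    rw [h0]
    have : (q x * phiF x₀ f 0 x + (0 : ℂ) * ((0 : ℂ) - 1) * phiF x₀ f (0 - 2) x)
        = q x * f x := by
      rw [phiF_eq, Asel_zero]; simp
    simp only [Nat.cast_zero] at this ⊢
    rw [this]
    exact hf'' x hx
  | 1 =>
    have h1 : DPhi x₀ f f' 1 = fun y => f' y * Asel x₀ f 1 y + (f y)⁻¹ := by
      funext y; simp [DPhi, Bsel_zero]
    rw [h1]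
    have h := ((hf'' x hx).mul (hA 0)).add hinv
    convert h using 1
    · rfl
    · rfl
    rw [phiF_eq, phiF_eq]
    simp only [Nat.cast_one, Nat.cast_zero, Bsel_zero, Asel_zero]
    field_simp [hfx]
    ring
  | (m + 2) =>
    have hD : DPhi x₀ f f' (m + 2) = fun y =>
        f' y * Asel x₀ f (m + 2) y + ((m : ℂ) + 2) * (Bsel x₀ f (m + 1) y * (f y)⁻¹) := by
      funext y
      simp only [DPhi, Nat.add_sub_cancel]
      push_cast
      ring
    rw [hD]
    have h := ((hf'' x hx).mul (hA (m + 1))).add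
      (HasDerivAt.const_mul ((m : ℂ) + 2) ((hB m).mul hinv))
    convert h using 1
    · rfl
    · rfl
    rw [phiF_eq, phiF_eq]
    push_cast
    field_simp [hfx]
    ring

end phi

section master

lemma master_series {a b : ℝ} (hab : a < b)
    (F F' F'' : ℕ → ℝ → ℂ) (u u' u'' : ℕ → ℝ)
    (hu : Summable u) (hu' : Summable u') (hu'' : Summable u'')
    (hbF : ∀ k, ∀ x ∈ Icc a b, ‖F k x‖ ≤ u k)
    (hbF' : ∀ k, ∀ x ∈ Icc a b, ‖F' k x‖ ≤ u' k)
    (hbF'' : ∀ k, ∀ x ∈ Icc a b, ‖F'' k x‖ ≤ u'' k)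
    (hFd : ∀ k, ∀ x ∈ Icc a b, HasDerivWithinAt (F k) (F' k x) (Icc a b) x)
    (hF'c : ∀ k, ContinuousOn (F' k) (Icc a b))
    (hF''d : ∀ k, ∀ x ∈ Ioo a b, HasDerivAt (F' k) (F'' k x) x)
    (hTc : ContinuousOn (fun x => ∑' k, F'' k x) (Ioo a b)) :
    TendstoUniformlyOn (fun N x => ∑ k ∈ Finset.range N, F k x)
        (fun x => ∑' k, F k x) atTop (Icc a b) ∧
      (∀ x ∈ Icc a b,
        HasDerivWithinAt (fun y => ∑' k, F k y) (∑' k, F' k x) (Icc a b) x) ∧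
      ContDiffOn ℝ 1 (fun y => ∑' k, F k y) (Icc a b) ∧
      ContDiffOn ℝ 2 (fun y => ∑' k, F k y) (Ioo a b) ∧
      (∀ x ∈ Ioo a b,
        derivWithin (derivWithin (fun y => ∑' k, F k y) (Icc a b)) (Icc a b) x
          = ∑' k, F'' k x) := by
  set Y : ℝ → ℂ := fun y => ∑' k, F k y with hY
  set S : ℝ → ℂ := fun y => ∑' k, F' k y with hS
  set T : ℝ → ℂ := fun y => ∑' k, F'' k y with hT
  have hFc : ∀ k, ContinuousOn (F k) (Icc a b) :=
    fun k x hx => (hFd k x hx).continuousWithinAt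
  have htu : TendstoUniformlyOn (fun N x => ∑ k ∈ Finset.range N, F k x) Y atTop (Icc a b) :=
    tendstoUniformlyOn_tsum_nat hu hbF
  have htu' : TendstoUniformlyOn (fun N x => ∑ k ∈ Finset.range N, F' k x) S atTop (Icc a b) :=
    tendstoUniformlyOn_tsum_nat hu' hbF'
  have htu'' : TendstoUniformlyOn (fun N x => ∑ k ∈ Finset.range N, F'' k x) T atTop (Icc a b) :=
    tendstoUniformlyOn_tsum_nat hu'' hbF''
  have hYc : ContinuousOn Y (Icc a b) :=
    htu.continuousOn (Eventually.of_forall fun N =>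
      continuousOn_finset_sum _ (fun k _ => hFc k)).frequently
  have hSc : ContinuousOn S (Icc a b) :=
    htu'.continuousOn (Eventually.of_forall fun N =>
      continuousOn_finset_sum _ (fun k _ => hF'c k)).frequently
  have hYd' : ∀ x ∈ Ioo a b, HasDerivAt Y (S x) x := by
    intro x hx
    exact hasDerivAt_of_tendstoUniformlyOn isOpen_Ioo (htu'.mono Ioo_subset_Icc_self)
      (Eventually.of_forall fun N y hy => HasDerivAt.sum
        (fun k _ => (hFd k y (Ioo_subset_Icc_self hy)).hasDerivAt (Icc_mem_nhds hy.1 hy.2)))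
      (fun y hy => by simpa only [Finset.sum_apply] using htu.tendsto_at (Ioo_subset_Icc_self hy)) hx
  have hdiff : DifferentiableOn ℝ Y (Ioo a b) :=
    fun y hy => ((hYd' y hy).differentiableAt).differentiableWithinAt
  have henda : HasDerivWithinAt Y (S a) (Icc a b) a := by
    have haI : a ∈ Icc a b := left_mem_Icc.mpr hab.le
    have hmm : Ioo a b ∈ 𝓝[>] a := Ioo_mem_nhdsGT_of_mem ⟨le_rfl, hab⟩
    have hlim : ContinuousWithinAt Y (Ioo a b) a :=
      (hYc.continuousWithinAt haI).mono Ioo_subset_Icc_self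
    have h1 : Tendsto S (𝓝[>] a) (𝓝 (S a)) := by
      have h2 := hSc.continuousWithinAt haI
      rw [ContinuousWithinAt, nhdsWithin_Icc_eq_nhdsGE hab] at h2
      exact h2.mono_left (nhdsWithin_mono a Ioi_subset_Ici_self)
    have hlim' : Tendsto (fun y => deriv Y y) (𝓝[>] a) (𝓝 (S a)) := by
      apply h1.congr'
      filter_upwards [hmm] with y hy
      exact ((hYd' y hy).deriv).symm
    exact (hasDerivWithinAt_Ici_of_tendsto_deriv hdiff hlim hmm hlim').mono
      Icc_subset_Ici_self
  have hendb : HasDerivWithinAt Y (S b) (Icc a b) b := by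
    have hbI : b ∈ Icc a b := right_mem_Icc.mpr hab.le
    have hmm : Ioo a b ∈ 𝓝[<] b := Ioo_mem_nhdsLT_of_mem ⟨hab, le_rfl⟩
    have hlim : ContinuousWithinAt Y (Ioo a b) b :=
      (hYc.continuousWithinAt hbI).mono Ioo_subset_Icc_self
    have h1 : Tendsto S (𝓝[<] b) (𝓝 (S b)) := by
      have h2 := hSc.continuousWithinAt hbI
      rw [ContinuousWithinAt, nhdsWithin_Icc_eq_nhdsLE hab] at h2
      exact h2.mono_left (nhdsWithin_mono b Iio_subset_Iic_self)
    have hlim' : Tendsto (fun y => deriv Y y) (𝓝[<] b) (𝓝 (S b)) := by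
      apply h1.congr'
      filter_upwards [hmm] with y hy
      exact ((hYd' y hy).deriv).symm
    exact (hasDerivWithinAt_Iic_of_tendsto_deriv hdiff hlim hmm hlim').mono
      Icc_subset_Iic_self
  have hYd : ∀ x ∈ Icc a b, HasDerivWithinAt Y (S x) (Icc a b) x := by
    intro x hx
    rcases eq_or_lt_of_le hx.1 with h1 | h1
    · subst h1; exact henda
    rcases eq_or_lt_of_le hx.2 with h2 | h2
    · subst h2; exact hendb
    · exact (hYd' x ⟨h1, h2⟩).hasDerivWithinAt
  have hdw : EqOn (derivWithin Y (Icc a b)) S (Icc a b) :=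
    fun x hx => (hYd x hx).derivWithin (uniqueDiffOn_Icc hab x hx)
  have hC1 : ContDiffOn ℝ 1 Y (Icc a b) := by
    rw [show (1 : WithTop ℕ∞) = 0 + 1 by norm_num,
      contDiffOn_succ_iff_derivWithin (uniqueDiffOn_Icc hab)]
    refine ⟨fun x hx => (hYd x hx).differentiableWithinAt, by simp, ?_⟩
    rw [contDiffOn_zero]
    exact hSc.congr hdw
  have hSd : ∀ x ∈ Ioo a b, HasDerivAt S (T x) x := by
    intro x hx
    exact hasDerivAt_of_tendstoUniformlyOn isOpen_Ioo (htu''.mono Ioo_subset_Icc_self)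
      (Eventually.of_forall fun N y hy => HasDerivAt.sum (fun k _ => hF''d k y hy))
      (fun y hy => by simpa only [Finset.sum_apply] using htu'.tendsto_at (Ioo_subset_Icc_self hy)) hx
  have hder : EqOn (deriv Y) S (Ioo a b) := fun x hx => (hYd' x hx).deriv
  have hC2 : ContDiffOn ℝ 2 Y (Ioo a b) := by
    rw [show (2 : WithTop ℕ∞) = 1 + 1 by norm_num,
      contDiffOn_succ_iff_deriv_of_isOpen isOpen_Ioo]
    refine ⟨hdiff, by simp, ?_⟩
    rw [show (1 : WithTop ℕ∞) = 0 + 1 by norm_num,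
      contDiffOn_succ_iff_deriv_of_isOpen isOpen_Ioo]
    have heq : ∀ x ∈ Ioo a b, deriv Y =ᶠ[𝓝 x] S := by
      intro x hx
      filter_upwards [isOpen_Ioo.mem_nhds hx] with y hy
      exact hder hy
    refine ⟨?_, by simp, ?_⟩
    · intro x hx
      exact (((hSd x hx).differentiableAt).congr_of_eventuallyEq
        (heq x hx)).differentiableWithinAt
    · rw [contDiffOn_zero]
      apply hTc.congr
      intro x hx
      rw [(heq x hx).deriv_eq]
      exact (hSd x hx).deriv
  have hsecond : ∀ x ∈ Ioo a b,
      derivWithin (derivWithin Y (Icc a b)) (Icc a b) x = T x := by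
    intro x hx
    have h1 : derivWithin (derivWithin Y (Icc a b)) (Icc a b) x
        = derivWithin S (Icc a b) x :=
      derivWithin_congr hdw (hdw (Ioo_subset_Icc_self hx))
    rw [h1, derivWithin_of_mem_nhds (Icc_mem_nhds hx.1 hx.2)]
    exact (hSd x hx).deriv
  exact ⟨htu, hYd, hC1, hC2, hsecond⟩

end master

section bounds

lemma coeff_norm (lam : ℂ) (k n : ℕ) :
    ‖lam ^ k / ((n.factorial : ℕ) : ℂ)‖ = ‖lam‖ ^ k / (n.factorial : ℝ) := by
  rw [norm_div, norm_pow, Complex.norm_natCast]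

lemma sq_le_four_pow : ∀ k : ℕ, ((k : ℝ) + 1) ^ 2 ≤ 4 ^ k := by
  intro k
  induction k with
  | zero => norm_num
  | succ n ih =>
    have h1 : (0:ℝ) ≤ (n:ℝ) := Nat.cast_nonneg n
    have h2 : (1:ℝ) ≤ 4 ^ n := one_le_pow₀ (by norm_num)
    push_cast
    push_cast at ih
    rw [pow_succ (4:ℝ) n]
    have h3 : (n:ℝ) + 1 ≤ 4 ^ n := by nlinarith
    nlinarith

lemma norm_term_le {lam : ℂ} {Q M : ℝ} (k j n : ℕ) (hj : j ≤ 2 * k + 1) (hkn : k ≤ n)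
    (z : ℂ) (hQ : 1 ≤ Q) (hM : 0 ≤ M)
    (hz : ‖z‖ ≤ M * ((j : ℝ) + 1) ^ 2 * Q ^ j) :
    ‖lam ^ k / ((n.factorial : ℕ) : ℂ) * z‖
      ≤ 4 * M * Q * ((‖lam‖ * (4 * Q ^ 2)) ^ k / (k.factorial : ℝ)) := by
  have hk : (0:ℝ) < (k.factorial : ℝ) := by exact_mod_cast k.factorial_pos
  have hn : (0:ℝ) < (n.factorial : ℝ) := by exact_mod_cast n.factorial_pos
  have hfle : (k.factorial : ℝ) ≤ (n.factorial : ℝ) := by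
    exact_mod_cast Nat.factorial_le hkn
  have hQ0 : (0:ℝ) < Q := lt_of_lt_of_le one_pos hQ
  have h1 : ((j : ℝ) + 1) ^ 2 ≤ 4 * 4 ^ k := by
    have hj' : ((j : ℝ) + 1) ≤ 2 * ((k : ℝ) + 1) := by
      have : (j : ℝ) ≤ 2 * k + 1 := by exact_mod_cast hj
      linarith
    have := sq_le_four_pow k
    nlinarith [(Nat.cast_nonneg j : (0:ℝ) ≤ (j:ℝ)), (Nat.cast_nonneg k : (0:ℝ) ≤ (k:ℝ))]
  have h2 : Q ^ j ≤ Q * (Q ^ 2) ^ k := by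
    have : Q ^ j ≤ Q ^ (2 * k + 1) := pow_le_pow_right₀ hQ hj
    calc Q ^ j ≤ Q ^ (2 * k + 1) := this
      _ = Q * (Q ^ 2) ^ k := by rw [← pow_mul, pow_succ, mul_comm]
  rw [norm_mul, coeff_norm]
  calc ‖lam‖ ^ k / (n.factorial : ℝ) * ‖z‖
      ≤ ‖lam‖ ^ k / (k.factorial : ℝ) * (M * (((j : ℝ) + 1) ^ 2) * Q ^ j) := by
        apply mul_le_mul _ hz (norm_nonneg _) (by positivity)
        exact div_le_div_of_nonneg_left (by positivity) hk hfle
    _ ≤ ‖lam‖ ^ k / (k.factorial : ℝ) * (M * (4 * 4 ^ k) * (Q * (Q ^ 2) ^ k)) := by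
        have hnn : (0:ℝ) ≤ ‖lam‖ ^ k / (k.factorial : ℝ) := by positivity
        apply mul_le_mul_of_nonneg_left _ hnn
        apply mul_le_mul _ h2 (by positivity) (by positivity)
        exact mul_le_mul_of_nonneg_left h1 hM
    _ = 4 * M * Q * ((‖lam‖ * (4 * Q ^ 2)) ^ k / (k.factorial : ℝ)) := by
        rw [mul_pow, mul_pow]
        field_simp

lemma fact_shift (n : ℕ) :
    (((n + 2).factorial : ℕ) : ℂ) = ((n : ℂ) + 2) * ((n : ℂ) + 1) * ((n.factorial : ℕ) : ℂ) := by
  have : (n + 2).factorial = (n + 2) * ((n + 1) * n.factorial) := by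
    rw [Nat.factorial_succ, Nat.factorial_succ]
  rw [this]
  push_cast
  ring

lemma fact_cast_ne (n : ℕ) : ((n.factorial : ℕ) : ℂ) ≠ 0 :=
  Nat.cast_ne_zero.mpr n.factorial_ne_zero

end bounds

set_option maxHeartbeats 3000000

/-- the SPPS series converge uniformly on `[a,b]`; the sums `y₁, y₂` are in
`C²(a,b) ∩ C¹[a,b]`, solve `y'' − q y = λ y` on `(a,b)` and satisfy the stated initial
conditions at `x₀`. -/
theorem spps_representation
    (a b : ℝ) (hab : a < b) (q : ℝ → ℂ) (hq : ContinuousOn q (Set.Icc a b))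
    (f : ℝ → ℂ) (hf1 : ContDiffOn ℝ 1 f (Set.Icc a b)) (hf2 : ContDiffOn ℝ 2 f (Set.Ioo a b))
    (hfeq : ∀ x ∈ Set.Ioo a b,
      derivWithin (derivWithin f (Set.Icc a b)) (Set.Icc a b) x = q x * f x)
    (hfne : ∀ x ∈ Set.Icc a b, f x ≠ 0)
    (x₀ : ℝ) (hx₀ : x₀ ∈ Set.Icc a b) (lam : ℂ) :
    TendstoUniformlyOn
      (fun N x => ∑ k ∈ Finset.range N, lam ^ k / (Nat.factorial (2 * k) : ℂ) * phiF x₀ f (2 * k) x)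
      (sppsY1 x₀ f lam) atTop (Set.Icc a b) ∧
    TendstoUniformlyOn
      (fun N x => ∑ k ∈ Finset.range N,
        lam ^ k / (Nat.factorial (2 * k + 1) : ℂ) * phiF x₀ f (2 * k + 1) x)
      (sppsY2 x₀ f lam) atTop (Set.Icc a b) ∧
    ContDiffOn ℝ 1 (sppsY1 x₀ f lam) (Set.Icc a b) ∧
    ContDiffOn ℝ 2 (sppsY1 x₀ f lam) (Set.Ioo a b) ∧
    ContDiffOn ℝ 1 (sppsY2 x₀ f lam) (Set.Icc a b) ∧
    ContDiffOn ℝ 2 (sppsY2 x₀ f lam) (Set.Ioo a b) ∧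
    (∀ x ∈ Set.Ioo a b,
      derivWithin (derivWithin (sppsY1 x₀ f lam) (Set.Icc a b)) (Set.Icc a b) x
        - q x * sppsY1 x₀ f lam x = lam * sppsY1 x₀ f lam x) ∧
    (∀ x ∈ Set.Ioo a b,
      derivWithin (derivWithin (sppsY2 x₀ f lam) (Set.Icc a b)) (Set.Icc a b) x
        - q x * sppsY2 x₀ f lam x = lam * sppsY2 x₀ f lam x) ∧
    sppsY1 x₀ f lam x₀ = f x₀ ∧
    derivWithin (sppsY1 x₀ f lam) (Set.Icc a b) x₀ = derivWithin f (Set.Icc a b) x₀ ∧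
    sppsY2 x₀ f lam x₀ = 0 ∧
    derivWithin (sppsY2 x₀ f lam) (Set.Icc a b) x₀ = 1 / f x₀ := by
  have hIcc := uniqueDiffOn_Icc hab
  have hfc : ContinuousOn f (Icc a b) := hf1.continuousOn
  set f' : ℝ → ℂ := derivWithin f (Set.Icc a b) with hf'def
  have hfd : ∀ x ∈ Icc a b, HasDerivWithinAt f (f' x) (Icc a b) x := fun x hx =>
    ((hf1.differentiableOn one_ne_zero) x hx).hasDerivWithinAt
  have hf'c : ContinuousOn f' (Icc a b) := hf1.continuousOn_derivWithin hIcc le_rfl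
  -- second derivative of f at interior points
  have hf'' : ∀ x ∈ Ioo a b, HasDerivAt f' (q x * f x) x := by
    intro x hx
    rw [show (2 : WithTop ℕ∞) = 1 + 1 by norm_num,
      contDiffOn_succ_iff_deriv_of_isOpen isOpen_Ioo] at hf2
    have hdd : DifferentiableAt ℝ (deriv f) x :=
      ((hf2.2.2.differentiableOn one_ne_zero) x hx).differentiableAt (isOpen_Ioo.mem_nhds hx)
    have heq : f' =ᶠ[𝓝 x] deriv f := by
      filter_upwards [isOpen_Ioo.mem_nhds hx] with y hy
      exact derivWithin_of_mem_nhds (Icc_mem_nhds hy.1 hy.2)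
    have hda : HasDerivAt f' (deriv (deriv f) x) x :=
      hdd.hasDerivAt.congr_of_eventuallyEq heq
    have hval : derivWithin f' (Icc a b) x = deriv (deriv f) x :=
      (hda.hasDerivWithinAt).derivWithin (hIcc x (Ioo_subset_Icc_self hx))
    rw [show deriv (deriv f) x = q x * f x from by rw [← hval]; exact hfeq x hx] at hda
    exact hda
  -- bounds
  have hne : (Icc a b).Nonempty := nonempty_Icc.mpr hab.le
  obtain ⟨M, hM⟩ := isCompact_Icc.exists_bound_of_continuousOn hfc
  obtain ⟨M', hM'⟩ := isCompact_Icc.exists_bound_of_continuousOn hf'c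
  obtain ⟨Mq, hMq⟩ := isCompact_Icc.exists_bound_of_continuousOn hq
  obtain ⟨z, hz, hzmin'⟩ := isCompact_Icc.exists_isMinOn hne
    (continuous_norm.comp_continuousOn hfc)
  have hzmin : ∀ y ∈ Icc a b, ‖f z‖ ≤ ‖f y‖ := fun y hy => hzmin' hy
  set m : ℝ := ‖f z‖ with hmdef
  have hm0 : 0 < m := norm_pos_iff.mpr (hfne z hz)
  have hM0 : 0 ≤ M := (norm_nonneg _).trans (hM z hz)
  have hM'0 : 0 ≤ M' := (norm_nonneg _).trans (hM' z hz)
  have hMq0 : 0 ≤ Mq := (norm_nonneg _).trans (hMq z hz)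
  obtain ⟨C, hCdef⟩ : ∃ c : ℝ, c = M ^ 2 + (m ^ 2)⁻¹ := ⟨_, rfl⟩
  have hC0 : 0 ≤ C := by rw [hCdef]; positivity
  have hC2 : ∀ s ∈ Icc a b, ‖f s ^ 2‖ ≤ C := by
    intro s hs
    rw [norm_pow, hCdef]
    have := hM s hs
    nlinarith [norm_nonneg (f s), sq_nonneg m, inv_nonneg.mpr (sq_nonneg m)]
  have hC2' : ∀ s ∈ Icc a b, ‖(f s ^ 2)⁻¹‖ ≤ C := by
    intro s hs
    rw [norm_inv, norm_pow, hCdef]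
    have h1 : m ≤ ‖f s‖ := hzmin s hs
    have h2 : m ^ 2 ≤ ‖f s‖ ^ 2 := by nlinarith
    have h3 : (‖f s‖ ^ 2)⁻¹ ≤ (m ^ 2)⁻¹ := by
      apply inv_anti₀ (by positivity) h2
    nlinarith [sq_nonneg M]
  obtain ⟨Q, hQdef⟩ : ∃ t : ℝ, t = C * (b - a) + 1 := ⟨_, rfl⟩
  have hQ1 : 1 ≤ Q := by
    rw [hQdef]
    have : 0 ≤ C * (b - a) := mul_nonneg hC0 (by linarith)
    linarith
  have hQ0 : 0 < Q := lt_of_lt_of_le one_pos hQ1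
  have hsel := sel_props hab hx₀ hfc hfne C hC0 hC2 hC2'
  have habs : ∀ x ∈ Icc a b, C * |x - x₀| ≤ Q := by
    intro x hx
    have h1 : |x - x₀| ≤ b - a := by
      rw [abs_le]
      constructor <;> [linarith [hx.1, hx₀.2]; linarith [hx.2, hx₀.1] ]
    have := mul_le_mul_of_nonneg_left h1 hC0
    rw [hQdef]
    linarith
  have hAb : ∀ j, ∀ x ∈ Icc a b, ‖Asel x₀ f j x‖ ≤ Q ^ j := by
    intro j x hx
    exact le_trans ((hsel j).2.2.1 x hx).1
      (pow_le_pow_left₀ (mul_nonneg hC0 (abs_nonneg _)) (habs x hx) j)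
  have hBb : ∀ j, ∀ x ∈ Icc a b, ‖Bsel x₀ f j x‖ ≤ Q ^ j := by
    intro j x hx
    exact le_trans ((hsel j).2.2.1 x hx).2
      (pow_le_pow_left₀ (mul_nonneg hC0 (abs_nonneg _)) (habs x hx) j)
  -- normalized bounds for the three levels
  have hphib : ∀ j, ∀ x ∈ Icc a b, ‖phiF x₀ f j x‖ ≤ M * ((j : ℝ) + 1) ^ 2 * Q ^ j := by
    intro j x hx
    rw [phiF_eq, norm_mul]
    have h1 : ‖f x‖ * ‖Asel x₀ f j x‖ ≤ M * Q ^ j :=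
      mul_le_mul (hM x hx) (hAb j x hx) (norm_nonneg _) hM0
    have h2 : (1:ℝ) ≤ ((j : ℝ) + 1) ^ 2 := by nlinarith [Nat.cast_nonneg (α := ℝ) j]
    calc ‖f x‖ * ‖Asel x₀ f j x‖ ≤ M * Q ^ j := h1
      _ ≤ M * ((j : ℝ) + 1) ^ 2 * Q ^ j :=
        mul_le_mul_of_nonneg_right (le_mul_of_one_le_right hM0 h2) (pow_nonneg hQ0.le j)
  have hDb : ∀ j, ∀ x ∈ Icc a b,
      ‖DPhi x₀ f f' j x‖ ≤ (M' + m⁻¹) * ((j : ℝ) + 1) ^ 2 * Q ^ j := by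
    intro j x hx
    have hinvb : ‖(f x)⁻¹‖ ≤ m⁻¹ := by
      rw [norm_inv]
      exact inv_anti₀ hm0 (hzmin x hx)
    have hQj : (0:ℝ) ≤ Q ^ j := pow_nonneg hQ0.le j
    have hmi : (0:ℝ) ≤ m⁻¹ := inv_nonneg.mpr hm0.le
    have h1 : ‖DPhi x₀ f f' j x‖
        ≤ M' * Q ^ j + (j : ℝ) * (Q ^ (j - 1) * m⁻¹) := by
      refine (norm_add_le _ _).trans ?_
      rw [norm_mul, norm_mul, norm_mul, Complex.norm_natCast]
      apply add_le_add
      · exact mul_le_mul (hM' x hx) (hAb j x hx) (norm_nonneg _) hM'0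
      · apply mul_le_mul_of_nonneg_left _ (Nat.cast_nonneg j)
        exact mul_le_mul (hBb (j-1) x hx) hinvb (norm_nonneg _) (pow_nonneg hQ0.le _)
    have h2 : Q ^ (j - 1) ≤ Q ^ j := pow_le_pow_right₀ hQ1 (Nat.sub_le j 1)
    have h3 : (j : ℝ) ≤ ((j : ℝ) + 1) ^ 2 := by nlinarith [Nat.cast_nonneg (α := ℝ) j]
    have h4 : (1:ℝ) ≤ ((j : ℝ) + 1) ^ 2 := by nlinarith [Nat.cast_nonneg (α := ℝ) j]
    have hj0 : (0:ℝ) ≤ (j : ℝ) := Nat.cast_nonneg j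
    have e1 : M' * Q ^ j ≤ M' * ((j : ℝ) + 1) ^ 2 * Q ^ j :=
      mul_le_mul_of_nonneg_right (le_mul_of_one_le_right hM'0 h4) hQj
    have e2 : (j : ℝ) * (Q ^ (j - 1) * m⁻¹) ≤ m⁻¹ * ((j : ℝ) + 1) ^ 2 * Q ^ j := by
      calc (j : ℝ) * (Q ^ (j - 1) * m⁻¹) ≤ (j : ℝ) * (Q ^ j * m⁻¹) :=
            mul_le_mul_of_nonneg_left (mul_le_mul_of_nonneg_right h2 hmi) hj0
        _ ≤ ((j : ℝ) + 1) ^ 2 * (Q ^ j * m⁻¹) :=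
            mul_le_mul_of_nonneg_right h3 (mul_nonneg hQj hmi)
        _ = m⁻¹ * ((j : ℝ) + 1) ^ 2 * Q ^ j := by ring
    calc ‖DPhi x₀ f f' j x‖ ≤ M' * Q ^ j + (j : ℝ) * (Q ^ (j - 1) * m⁻¹) := h1
      _ ≤ M' * ((j : ℝ) + 1) ^ 2 * Q ^ j + m⁻¹ * ((j : ℝ) + 1) ^ 2 * Q ^ j := add_le_add e1 e2
      _ = (M' + m⁻¹) * ((j : ℝ) + 1) ^ 2 * Q ^ j := by ring
  have hQQ : ∀ j, Q ^ (j - 2) ≤ Q ^ j := fun j => pow_le_pow_right₀ hQ1 (Nat.sub_le j 2)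
  have hSb : ∀ j, ∀ x ∈ Icc a b,
      ‖q x * phiF x₀ f j x + (j : ℂ) * ((j : ℂ) - 1) * phiF x₀ f (j - 2) x‖
        ≤ (M * (Mq + 2)) * ((j : ℝ) + 1) ^ 2 * Q ^ j := by
    intro j x hx
    have hphij : ‖phiF x₀ f j x‖ ≤ M * Q ^ j := by
      rw [phiF_eq, norm_mul]
      exact mul_le_mul (hM x hx) (hAb j x hx) (norm_nonneg _) hM0
    have hphij2 : ‖phiF x₀ f (j - 2) x‖ ≤ M * Q ^ j := by
      rw [phiF_eq, norm_mul]
      calc ‖f x‖ * ‖Asel x₀ f (j - 2) x‖ ≤ M * Q ^ (j - 2) :=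
            mul_le_mul (hM x hx) (hAb (j - 2) x hx) (norm_nonneg _) hM0
        _ ≤ M * Q ^ j := mul_le_mul_of_nonneg_left (hQQ j) hM0
    have hjj : ‖(j : ℂ) * ((j : ℂ) - 1)‖ ≤ (j : ℝ) * ((j : ℝ) + 1) := by
      rw [norm_mul, Complex.norm_natCast]
      apply mul_le_mul_of_nonneg_left _ (Nat.cast_nonneg j)
      calc ‖(j : ℂ) - 1‖ ≤ ‖(j : ℂ)‖ + ‖(1 : ℂ)‖ := norm_sub_le _ _
        _ = (j : ℝ) + 1 := by rw [Complex.norm_natCast, norm_one]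
    have h1 : ‖q x * phiF x₀ f j x + (j : ℂ) * ((j : ℂ) - 1) * phiF x₀ f (j - 2) x‖
        ≤ Mq * (M * Q ^ j) + ((j : ℝ) * ((j : ℝ) + 1)) * (M * Q ^ j) := by
      refine (norm_add_le _ _).trans ?_
      rw [norm_mul, norm_mul]
      apply add_le_add
      · exact mul_le_mul (hMq x hx) hphij (norm_nonneg _) hMq0
      · exact mul_le_mul hjj hphij2 (norm_nonneg _)
          (mul_nonneg (Nat.cast_nonneg j) (by nlinarith [Nat.cast_nonneg (α := ℝ) j]))
    have hj0 : (0:ℝ) ≤ (j : ℝ) := Nat.cast_nonneg j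
    have hQj : (0:ℝ) ≤ Q ^ j := pow_nonneg hQ0.le j
    have e3 : Mq * (M * Q ^ j) ≤ Mq * M * ((j : ℝ) + 1) ^ 2 * Q ^ j := by
      have h4 : (1:ℝ) ≤ ((j : ℝ) + 1) ^ 2 := by nlinarith
      calc Mq * (M * Q ^ j) = Mq * M * Q ^ j := by ring
        _ ≤ Mq * M * ((j : ℝ) + 1) ^ 2 * Q ^ j :=
          mul_le_mul_of_nonneg_right (le_mul_of_one_le_right (mul_nonneg hMq0 hM0) h4) hQj
    have e4 : ((j : ℝ) * ((j : ℝ) + 1)) * (M * Q ^ j)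
        ≤ 2 * M * ((j : ℝ) + 1) ^ 2 * Q ^ j := by
      have h5 : (j : ℝ) * ((j : ℝ) + 1) ≤ 2 * ((j : ℝ) + 1) ^ 2 := by nlinarith
      calc ((j : ℝ) * ((j : ℝ) + 1)) * (M * Q ^ j)
          ≤ (2 * ((j : ℝ) + 1) ^ 2) * (M * Q ^ j) :=
            mul_le_mul_of_nonneg_right h5 (mul_nonneg hM0 hQj)
        _ = 2 * M * ((j : ℝ) + 1) ^ 2 * Q ^ j := by ring
    calc ‖q x * phiF x₀ f j x + (j : ℂ) * ((j : ℂ) - 1) * phiF x₀ f (j - 2) x‖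
        ≤ Mq * (M * Q ^ j) + ((j : ℝ) * ((j : ℝ) + 1)) * (M * Q ^ j) := h1
      _ ≤ Mq * M * ((j : ℝ) + 1) ^ 2 * Q ^ j + 2 * M * ((j : ℝ) + 1) ^ 2 * Q ^ j :=
          add_le_add e3 e4
      _ = (M * (Mq + 2)) * ((j : ℝ) + 1) ^ 2 * Q ^ j := by ring
  -- summable bounds
  have hu : ∀ c : ℝ, Summable (fun k : ℕ => c * ((‖lam‖ * (4 * Q ^ 2)) ^ k / (k.factorial : ℝ))) :=
    fun c => (Real.summable_pow_div_factorial _).mul_left c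
  have hb1 : ∀ (k : ℕ), ∀ x ∈ Icc a b,
      ‖lam ^ k / (Nat.factorial (2 * k) : ℂ) * phiF x₀ f (2 * k) x‖
        ≤ 4 * M * Q * ((‖lam‖ * (4 * Q ^ 2)) ^ k / (k.factorial : ℝ)) :=
    fun k x hx => norm_term_le k (2 * k) (2 * k) (by omega) (by omega) _ hQ1 hM0
      (hphib (2 * k) x hx)
  have hb1' : ∀ (k : ℕ), ∀ x ∈ Icc a b,
      ‖lam ^ k / (Nat.factorial (2 * k) : ℂ) * DPhi x₀ f f' (2 * k) x‖
        ≤ 4 * (M' + m⁻¹) * Q * ((‖lam‖ * (4 * Q ^ 2)) ^ k / (k.factorial : ℝ)) :=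
    fun k x hx => norm_term_le k (2 * k) (2 * k) (by omega) (by omega) _ hQ1
      (add_nonneg hM'0 (inv_nonneg.mpr hm0.le)) (hDb (2 * k) x hx)
  have hb1'' : ∀ (k : ℕ), ∀ x ∈ Icc a b,
      ‖lam ^ k / (Nat.factorial (2 * k) : ℂ) *
          (q x * phiF x₀ f (2 * k) x
            + ((2 * k : ℕ) : ℂ) * (((2 * k : ℕ) : ℂ) - 1) * phiF x₀ f (2 * k - 2) x)‖
        ≤ 4 * (M * (Mq + 2)) * Q * ((‖lam‖ * (4 * Q ^ 2)) ^ k / (k.factorial : ℝ)) :=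
    fun k x hx => norm_term_le k (2 * k) (2 * k) (by omega) (by omega) _ hQ1
      (mul_nonneg hM0 (by linarith)) (hSb (2 * k) x hx)
  have hb2 : ∀ (k : ℕ), ∀ x ∈ Icc a b,
      ‖lam ^ k / (Nat.factorial (2 * k + 1) : ℂ) * phiF x₀ f (2 * k + 1) x‖
        ≤ 4 * M * Q * ((‖lam‖ * (4 * Q ^ 2)) ^ k / (k.factorial : ℝ)) :=
    fun k x hx => norm_term_le k (2 * k + 1) (2 * k + 1) (by omega) (by omega) _ hQ1 hM0
      (hphib (2 * k + 1) x hx)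
  have hb2' : ∀ (k : ℕ), ∀ x ∈ Icc a b,
      ‖lam ^ k / (Nat.factorial (2 * k + 1) : ℂ) * DPhi x₀ f f' (2 * k + 1) x‖
        ≤ 4 * (M' + m⁻¹) * Q * ((‖lam‖ * (4 * Q ^ 2)) ^ k / (k.factorial : ℝ)) :=
    fun k x hx => norm_term_le k (2 * k + 1) (2 * k + 1) (by omega) (by omega) _ hQ1
      (add_nonneg hM'0 (inv_nonneg.mpr hm0.le)) (hDb (2 * k + 1) x hx)
  have hb2'' : ∀ (k : ℕ), ∀ x ∈ Icc a b,
      ‖lam ^ k / (Nat.factorial (2 * k + 1) : ℂ) *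
          (q x * phiF x₀ f (2 * k + 1) x
            + ((2 * k + 1 : ℕ) : ℂ) * (((2 * k + 1 : ℕ) : ℂ) - 1) * phiF x₀ f (2 * k + 1 - 2) x)‖
        ≤ 4 * (M * (Mq + 2)) * Q * ((‖lam‖ * (4 * Q ^ 2)) ^ k / (k.factorial : ℝ)) :=
    fun k x hx => norm_term_le k (2 * k + 1) (2 * k + 1) (by omega) (by omega) _ hQ1
      (mul_nonneg hM0 (by linarith)) (hSb (2 * k + 1) x hx)
  -- derivative data
  have hphid := phi_hasDerivWithinAt hab hx₀ hfc hfne C hC0 hC2 hC2' hfd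
  have hphidd := DPhi_hasDerivAt hab hx₀ hfc hfne C hC0 hC2 hC2' hfd hf''
  have hDc := DPhi_continuousOn hab hx₀ hfc hfne C hC0 hC2 hC2' hf'c
  have hphic := phi_continuousOn hab hx₀ hfc hfne C hC0 hC2 hC2'
  -- pointwise summability
  have hsumF1 : ∀ x ∈ Icc a b,
      Summable (fun k : ℕ => lam ^ k / (Nat.factorial (2 * k) : ℂ) * phiF x₀ f (2 * k) x) :=
    fun x hx => Summable.of_norm (Summable.of_nonneg_of_le
      (fun k => norm_nonneg _) (fun k => hb1 k x hx) (hu _))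
  have hsumF2 : ∀ x ∈ Icc a b,
      Summable (fun k : ℕ =>
        lam ^ k / (Nat.factorial (2 * k + 1) : ℂ) * phiF x₀ f (2 * k + 1) x) :=
    fun x hx => Summable.of_norm (Summable.of_nonneg_of_le
      (fun k => norm_nonneg _) (fun k => hb2 k x hx) (hu _))
  -- the second-derivative tsum identities
  have hY1e : sppsY1 x₀ f lam
      = fun x => ∑' k : ℕ, lam ^ k / (Nat.factorial (2 * k) : ℂ) * phiF x₀ f (2 * k) x := rfl
  have hY2e : sppsY2 x₀ f lam
      = fun x => ∑' k : ℕ,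
          lam ^ k / (Nat.factorial (2 * k + 1) : ℂ) * phiF x₀ f (2 * k + 1) x := rfl
  have hT1eq : ∀ x ∈ Icc a b,
      (∑' k : ℕ, lam ^ k / (Nat.factorial (2 * k) : ℂ) *
          (q x * phiF x₀ f (2 * k) x
            + ((2 * k : ℕ) : ℂ) * (((2 * k : ℕ) : ℂ) - 1) * phiF x₀ f (2 * k - 2) x))
        = q x * sppsY1 x₀ f lam x + lam * sppsY1 x₀ f lam x := by
    intro x hx
    have hs0 := hsumF1 x hx
    have hs1 : Summable (fun k : ℕ =>
        q x * (lam ^ k / (Nat.factorial (2 * k) : ℂ) * phiF x₀ f (2 * k) x)) :=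
      hs0.mul_left _
    have hGsucc : ∀ k : ℕ, lam ^ (k + 1) / (Nat.factorial (2 * (k + 1)) : ℂ) *
        (((2 * (k + 1) : ℕ) : ℂ) * (((2 * (k + 1) : ℕ) : ℂ) - 1) * phiF x₀ f (2 * (k + 1) - 2) x)
        = lam * (lam ^ k / (Nat.factorial (2 * k) : ℂ) * phiF x₀ f (2 * k) x) := by
      intro k
      have e1 : 2 * (k + 1) = 2 * k + 2 := by ring
      rw [e1, show 2 * k + 2 - 2 = 2 * k from by omega, fact_shift (2 * k)]
      have hnz1 : ((Nat.factorial (2 * k) : ℕ) : ℂ) ≠ 0 := fact_cast_ne _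
      have hnz2 : ((2 * k : ℕ) : ℂ) + 2 ≠ 0 := by
        exact_mod_cast (Nat.cast_ne_zero (R := ℂ)).mpr (show 2 * k + 2 ≠ 0 by omega)
      have hnz3 : ((2 * k : ℕ) : ℂ) + 1 ≠ 0 := by
        exact_mod_cast (Nat.cast_ne_zero (R := ℂ)).mpr (show 2 * k + 1 ≠ 0 by omega)
      push_cast
      push_cast at hnz2 hnz3
      field_simp
      ring
    have hGsum : Summable (fun k : ℕ => lam ^ k / (Nat.factorial (2 * k) : ℂ) *
        (((2 * k : ℕ) : ℂ) * (((2 * k : ℕ) : ℂ) - 1) * phiF x₀ f (2 * k - 2) x)) := by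
      apply (summable_nat_add_iff 1).mp
      exact (hs0.mul_left lam).congr (fun k => (hGsucc k).symm)
    calc (∑' k : ℕ, lam ^ k / (Nat.factorial (2 * k) : ℂ) *
          (q x * phiF x₀ f (2 * k) x
            + ((2 * k : ℕ) : ℂ) * (((2 * k : ℕ) : ℂ) - 1) * phiF x₀ f (2 * k - 2) x))
        = ∑' k : ℕ, (q x * (lam ^ k / (Nat.factorial (2 * k) : ℂ) * phiF x₀ f (2 * k) x)
          + lam ^ k / (Nat.factorial (2 * k) : ℂ) *
            (((2 * k : ℕ) : ℂ) * (((2 * k : ℕ) : ℂ) - 1) * phiF x₀ f (2 * k - 2) x)) :=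
          tsum_congr (fun k => by ring)
      _ = (∑' k : ℕ, q x * (lam ^ k / (Nat.factorial (2 * k) : ℂ) * phiF x₀ f (2 * k) x))
          + ∑' k : ℕ, lam ^ k / (Nat.factorial (2 * k) : ℂ) *
            (((2 * k : ℕ) : ℂ) * (((2 * k : ℕ) : ℂ) - 1) * phiF x₀ f (2 * k - 2) x) :=
          Summable.tsum_add hs1 hGsum
      _ = q x * sppsY1 x₀ f lam x + lam * sppsY1 x₀ f lam x := by
          simp only [hY1e]
          congr 1
          · exact tsum_mul_left
          · rw [Summable.tsum_eq_zero_add hGsum]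
            simp only [hGsucc]
            rw [tsum_mul_left]
            norm_num
  have hT2eq : ∀ x ∈ Icc a b,
      (∑' k : ℕ, lam ^ k / (Nat.factorial (2 * k + 1) : ℂ) *
          (q x * phiF x₀ f (2 * k + 1) x
            + ((2 * k + 1 : ℕ) : ℂ) * (((2 * k + 1 : ℕ) : ℂ) - 1) * phiF x₀ f (2 * k + 1 - 2) x))
        = q x * sppsY2 x₀ f lam x + lam * sppsY2 x₀ f lam x := by
    intro x hx
    have hs0 := hsumF2 x hx
    have hs1 : Summable (fun k : ℕ =>
        q x * (lam ^ k / (Nat.factorial (2 * k + 1) : ℂ) * phiF x₀ f (2 * k + 1) x)) :=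
      hs0.mul_left _
    have hGsucc : ∀ k : ℕ, lam ^ (k + 1) / (Nat.factorial (2 * (k + 1) + 1) : ℂ) *
        (((2 * (k + 1) + 1 : ℕ) : ℂ) * (((2 * (k + 1) + 1 : ℕ) : ℂ) - 1)
          * phiF x₀ f (2 * (k + 1) + 1 - 2) x)
        = lam * (lam ^ k / (Nat.factorial (2 * k + 1) : ℂ) * phiF x₀ f (2 * k + 1) x) := by
      intro k
      have e1 : 2 * (k + 1) + 1 = (2 * k + 1) + 2 := by ring
      rw [e1, show (2 * k + 1) + 2 - 2 = 2 * k + 1 from by omega, fact_shift (2 * k + 1)]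
      have hnz1 : ((Nat.factorial (2 * k + 1) : ℕ) : ℂ) ≠ 0 := fact_cast_ne _
      have hnz2 : ((2 * k + 1 : ℕ) : ℂ) + 2 ≠ 0 := by
        exact_mod_cast (Nat.cast_ne_zero (R := ℂ)).mpr (show 2 * k + 1 + 2 ≠ 0 by omega)
      have hnz3 : ((2 * k + 1 : ℕ) : ℂ) + 1 ≠ 0 := by
        exact_mod_cast (Nat.cast_ne_zero (R := ℂ)).mpr (show 2 * k + 1 + 1 ≠ 0 by omega)
      push_cast
      push_cast at hnz2 hnz3
      field_simp
      ring
    have hGsum : Summable (fun k : ℕ => lam ^ k / (Nat.factorial (2 * k + 1) : ℂ) *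
        (((2 * k + 1 : ℕ) : ℂ) * (((2 * k + 1 : ℕ) : ℂ) - 1) * phiF x₀ f (2 * k + 1 - 2) x)) := by
      apply (summable_nat_add_iff 1).mp
      exact (hs0.mul_left lam).congr (fun k => (hGsucc k).symm)
    calc (∑' k : ℕ, lam ^ k / (Nat.factorial (2 * k + 1) : ℂ) *
          (q x * phiF x₀ f (2 * k + 1) x
            + ((2 * k + 1 : ℕ) : ℂ) * (((2 * k + 1 : ℕ) : ℂ) - 1) * phiF x₀ f (2 * k + 1 - 2) x))
        = ∑' k : ℕ, (q x * (lam ^ k / (Nat.factorial (2 * k + 1) : ℂ) * phiF x₀ f (2 * k + 1) x)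
          + lam ^ k / (Nat.factorial (2 * k + 1) : ℂ) *
            (((2 * k + 1 : ℕ) : ℂ) * (((2 * k + 1 : ℕ) : ℂ) - 1) * phiF x₀ f (2 * k + 1 - 2) x)) :=
          tsum_congr (fun k => by ring)
      _ = (∑' k : ℕ, q x * (lam ^ k / (Nat.factorial (2 * k + 1) : ℂ) * phiF x₀ f (2 * k + 1) x))
          + ∑' k : ℕ, lam ^ k / (Nat.factorial (2 * k + 1) : ℂ) *
            (((2 * k + 1 : ℕ) : ℂ) * (((2 * k + 1 : ℕ) : ℂ) - 1) * phiF x₀ f (2 * k + 1 - 2) x) :=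
          Summable.tsum_add hs1 hGsum
      _ = q x * sppsY2 x₀ f lam x + lam * sppsY2 x₀ f lam x := by
          simp only [hY2e]
          congr 1
          · exact tsum_mul_left
          · rw [Summable.tsum_eq_zero_add hGsum]
            simp only [hGsucc]
            rw [tsum_mul_left]
            have h00 : lam ^ 0 / (Nat.factorial (2 * 0 + 1) : ℂ) *
                (((2 * 0 + 1 : ℕ) : ℂ) * (((2 * 0 + 1 : ℕ) : ℂ) - 1)
                  * phiF x₀ f (2 * 0 + 1 - 2) x) = 0 := by norm_num
            rw [h00, zero_add]
  -- continuity of the sums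
  have hY1c : ContinuousOn
      (fun x => ∑' k : ℕ, lam ^ k / (Nat.factorial (2 * k) : ℂ) * phiF x₀ f (2 * k) x)
      (Icc a b) :=
    (tendstoUniformlyOn_tsum_nat (hu _) hb1).continuousOn
      (Eventually.of_forall fun N => continuousOn_finset_sum _ fun k _ =>
        continuousOn_const.mul (hphic (2 * k))).frequently
  have hY2c : ContinuousOn
      (fun x => ∑' k : ℕ, lam ^ k / (Nat.factorial (2 * k + 1) : ℂ) * phiF x₀ f (2 * k + 1) x)
      (Icc a b) :=
    (tendstoUniformlyOn_tsum_nat (hu _) hb2).continuousOn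
      (Eventually.of_forall fun N => continuousOn_finset_sum _ fun k _ =>
        continuousOn_const.mul (hphic (2 * k + 1))).frequently
  -- master applications
  have hmas1 := master_series hab
    (fun k x => lam ^ k / (Nat.factorial (2 * k) : ℂ) * phiF x₀ f (2 * k) x)
    (fun k x => lam ^ k / (Nat.factorial (2 * k) : ℂ) * DPhi x₀ f f' (2 * k) x)
    (fun k x => lam ^ k / (Nat.factorial (2 * k) : ℂ) *
      (q x * phiF x₀ f (2 * k) x
        + ((2 * k : ℕ) : ℂ) * (((2 * k : ℕ) : ℂ) - 1) * phiF x₀ f (2 * k - 2) x))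
    _ _ _ (hu _) (hu _) (hu _) hb1 hb1' hb1''
    (fun k x hx => (hphid (2 * k) x hx).const_mul _)
    (fun k => continuousOn_const.mul (hDc (2 * k)))
    (fun k x hx => HasDerivAt.const_mul _ (hphidd (2 * k) x hx))
    (by
      apply ContinuousOn.congr
        (((hq.mono Ioo_subset_Icc_self).mul (hY1c.mono Ioo_subset_Icc_self)).add
          (continuousOn_const.mul (hY1c.mono Ioo_subset_Icc_self)))
      intro x hx
      rw [hY1e] at hT1eq
      exact hT1eq x (Ioo_subset_Icc_self hx))
  have hmas2 := master_series hab
    (fun k x => lam ^ k / (Nat.factorial (2 * k + 1) : ℂ) * phiF x₀ f (2 * k + 1) x)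
    (fun k x => lam ^ k / (Nat.factorial (2 * k + 1) : ℂ) * DPhi x₀ f f' (2 * k + 1) x)
    (fun k x => lam ^ k / (Nat.factorial (2 * k + 1) : ℂ) *
      (q x * phiF x₀ f (2 * k + 1) x
        + ((2 * k + 1 : ℕ) : ℂ) * (((2 * k + 1 : ℕ) : ℂ) - 1) * phiF x₀ f (2 * k + 1 - 2) x))
    _ _ _ (hu _) (hu _) (hu _) hb2 hb2' hb2''
    (fun k x hx => (hphid (2 * k + 1) x hx).const_mul _)
    (fun k => continuousOn_const.mul (hDc (2 * k + 1)))
    (fun k x hx => HasDerivAt.const_mul _ (hphidd (2 * k + 1) x hx))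
    (by
      apply ContinuousOn.congr
        (((hq.mono Ioo_subset_Icc_self).mul (hY2c.mono Ioo_subset_Icc_self)).add
          (continuousOn_const.mul (hY2c.mono Ioo_subset_Icc_self)))
      intro x hx
      rw [hY2e] at hT2eq
      exact hT2eq x (Ioo_subset_Icc_self hx))
  obtain ⟨hm11, hm12, hm13, hm14, hm15⟩ := hmas1
  obtain ⟨hm21, hm22, hm23, hm24, hm25⟩ := hmas2
  rw [← hY1e] at hm11 hm13 hm14
  rw [← hY2e] at hm21 hm23 hm24
  refine ⟨hm11, hm21, hm13, hm14, hm23, hm24, ?_, ?_, ?_, ?_, ?_, ?_⟩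
  · -- ODE for y₁
    intro x hx
    have h := hm15 x hx
    rw [hT1eq x (Ioo_subset_Icc_self hx)] at h
    rw [← hY1e] at h
    rw [h]
    ring
  · intro x hx
    have h := hm25 x hx
    rw [hT2eq x (Ioo_subset_Icc_self hx)] at h
    rw [← hY2e] at h
    rw [h]
    ring
  · -- y₁(x₀) = f x₀
    rw [show sppsY1 x₀ f lam x₀
        = ∑' k : ℕ, lam ^ k / (Nat.factorial (2 * k) : ℂ) * phiF x₀ f (2 * k) x₀ from rfl]
    rw [tsum_eq_single 0 ?_]
    · norm_num [phiF_eq, Asel_zero]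
    · intro k hk
      obtain ⟨j, rfl⟩ := Nat.exists_eq_succ_of_ne_zero hk
      rw [show 2 * (j + 1) = (2 * j + 1) + 1 from by ring, phiF_eq, Asel_base, mul_zero,
        mul_zero]
  · -- y₁'(x₀) = f'(x₀)
    have hdY1 : derivWithin (sppsY1 x₀ f lam) (Icc a b) x₀
        = ∑' k : ℕ, lam ^ k / (Nat.factorial (2 * k) : ℂ) * DPhi x₀ f f' (2 * k) x₀ := by
      rw [hY1e]
      exact (hm12 x₀ hx₀).derivWithin (hIcc x₀ hx₀)
    rw [hdY1, tsum_eq_single 0 ?_]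
    · have e0 : DPhi x₀ f f' (2 * 0) x₀ = f' x₀ := by
        simp [DPhi, Asel_zero]
      rw [e0]
      norm_num
    · intro k hk
      obtain ⟨j, rfl⟩ := Nat.exists_eq_succ_of_ne_zero hk
      have e1 : Asel x₀ f (2 * (j + 1)) x₀ = 0 := Asel_base (2 * j + 1)
      have e2 : Bsel x₀ f (2 * (j + 1) - 1) x₀ = 0 := Bsel_base (2 * j)
      have e3 : DPhi x₀ f f' (2 * (j + 1)) x₀ = 0 := by
        simp [DPhi, e1, e2]
      rw [e3, mul_zero]
  · -- y₂(x₀) = 0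
    rw [show sppsY2 x₀ f lam x₀
        = ∑' k : ℕ, lam ^ k / (Nat.factorial (2 * k + 1) : ℂ) * phiF x₀ f (2 * k + 1) x₀
        from rfl]
    have hz0 : ∀ k : ℕ,
        lam ^ k / (Nat.factorial (2 * k + 1) : ℂ) * phiF x₀ f (2 * k + 1) x₀ = 0 := by
      intro k
      have e1 : Asel x₀ f (2 * k + 1) x₀ = 0 := Asel_base (2 * k)
      rw [phiF_eq, e1, mul_zero, mul_zero]
    rw [tsum_congr hz0, tsum_zero]
  · -- y₂'(x₀) = 1 / f x₀
    have hdY2 : derivWithin (sppsY2 x₀ f lam) (Icc a b) x₀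
        = ∑' k : ℕ, lam ^ k / (Nat.factorial (2 * k + 1) : ℂ) * DPhi x₀ f f' (2 * k + 1) x₀ := by
      rw [hY2e]
      exact (hm22 x₀ hx₀).derivWithin (hIcc x₀ hx₀)
    rw [hdY2, tsum_eq_single 0 ?_]
    · have e1 : Asel x₀ f (2 * 0 + 1) x₀ = 0 := Asel_base 0
      have e0 : DPhi x₀ f f' (2 * 0 + 1) x₀ = (f x₀)⁻¹ := by
        simp [DPhi, e1, Bsel_zero]
      rw [e0]
      rw [one_div]
      norm_num
    · intro k hk
      obtain ⟨j, rfl⟩ := Nat.exists_eq_succ_of_ne_zero hk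
      have e1 : Asel x₀ f (2 * (j + 1) + 1) x₀ = 0 := Asel_base (2 * (j + 1))
      have e2 : Bsel x₀ f (2 * (j + 1)) x₀ = 0 := Bsel_base (2 * j + 1)
      have e3 : DPhi x₀ f f' (2 * (j + 1) + 1) x₀ = 0 := by
        simp [DPhi, e1, e2]
      rw [e3, mul_zero]
end
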